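/- arXiv:2107.11890 — 2 statements merged into one kernel-verified Lean document; each statement's English description precedes it below -/
import Mathlib

section
/- Let {X_𝔞}_{𝔞∈[𝔞₋,𝔞₊]} be a scale of Banach spaces, let F be an Ovsjannikov map of order q with 0 ≤ q < 1 and constant L > 0, fix T > 0 and x₀ ∈ X_{𝔞₋}, and let ℐ(f)(t) = x₀ + ∫₀ᵗ F(f(s)) ds. Then there exists a unique map φ lying in C([0,T], X_𝔞) for every 𝔞 ∈ (𝔞₋, 𝔞₊) such that ℐ(φ) = φ; moreover for every 𝔞 ∈ (𝔞₋, 𝔞₊) and every continuous f : [0,T] → X_{𝔞₋}, the iterates ℐⁿ(f) converge to φ in the supremum norm of C([0,T], X_𝔞) as n → ∞. -/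
open MeasureTheory Set Filter ENNReal

noncomputable section

/-- `f : [0,T] → X_a` is continuous, where `X_a` is the subspace of the ambient Banach
space `E` on which the extended norm `N a` is finite, with the metric induced by `N a`. -/
def ScaleContOn {E : Type*} [NormedAddCommGroup E]
    (N : ℝ → E → ℝ≥0∞) (a T : ℝ) (f : ℝ → E) : Prop :=
  (∀ t ∈ Icc (0 : ℝ) T, N a (f t) ≠ ⊤) ∧
  ∀ t₀ ∈ Icc (0 : ℝ) T,
    Tendsto (fun t => N a (f t - f t₀)) (nhdsWithin t₀ (Icc (0 : ℝ) T)) (nhds 0)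

/-- The map `ℐ(f)(t) = x₀ + ∫₀ᵗ F(f(s)) ds` (Bochner integral in the ambient space). -/
def Imap {E : Type*} [NormedAddCommGroup E] [NormedSpace ℝ E] [CompleteSpace E]
    (F : E → E) (x₀ : E) (f : ℝ → E) : ℝ → E :=
  fun t => x₀ + ∫ s in (0 : ℝ)..t, F (f s)

set_option linter.unusedSectionVars false

namespace OvsProof

variable {E : Type*} [NormedAddCommGroup E] [NormedSpace ℝ E] [CompleteSpace E]
variable {amin amax : ℝ} {N : ℝ → E → ℝ≥0∞} {q L T : ℝ} {F : E → E} {x₀ : E}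

variable (hamin : 0 < amin) (hminmax : amin < amax)
  (htop : ∀ x : E, N amax x = (‖x‖₊ : ℝ≥0∞))
  (hmono : ∀ a b : ℝ, amin ≤ a → a ≤ b → b ≤ amax → ∀ x : E, N b x ≤ N a x)
  (hzero : ∀ a : ℝ, amin ≤ a → a ≤ amax → N a 0 = 0)
  (hadd : ∀ a : ℝ, amin ≤ a → a ≤ amax → ∀ x y : E, N a (x + y) ≤ N a x + N a y)
  (hsmul : ∀ a : ℝ, amin ≤ a → a ≤ amax → ∀ (c : ℝ) (x : E),
    N a (c • x) = (‖c‖₊ : ℝ≥0∞) * N a x)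
  (hcomplete : ∀ a : ℝ, amin ≤ a → a ≤ amax → ∀ u : ℕ → E,
    (∀ n, N a (u n) ≠ ⊤) →
    (∀ ε : ℝ≥0∞, 0 < ε → ∃ K : ℕ, ∀ m ≥ K, ∀ n ≥ K, N a (u m - u n) < ε) →
    ∃ x : E, N a x ≠ ⊤ ∧ Tendsto (fun n => N a (u n - x)) atTop (nhds 0))
  (hq : 0 ≤ q) (hL : 0 < L)
  (hFmap : ∀ a b : ℝ, amin ≤ a → a < b → b ≤ amax → ∀ x : E,
    N a x ≠ ⊤ → N b (F x) ≠ ⊤)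
  (hFlip : ∀ a b : ℝ, amin ≤ a → a < b → b ≤ amax → ∀ x y : E,
    N a x ≠ ⊤ → N a y ≠ ⊤ →
    N b (F x - F y) ≤ ENNReal.ofReal (L / (b - a) ^ q) * N a (x - y))
  (hT : 0 < T) (hx₀ : N amin x₀ ≠ ⊤) (hq1 : q < 1)

include hsmul in
lemma Nneg (a : ℝ) (h1 : amin ≤ a) (h2 : a ≤ amax) (x : E) : N a (-x) = N a x := by
  rw [← neg_one_smul ℝ x, hsmul a h1 h2]
  simp

include hadd in
lemma Ntri (a : ℝ) (h1 : amin ≤ a) (h2 : a ≤ amax) (x y z : E) :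
    N a (x - y) ≤ N a (x - z) + N a (z - y) := by
  have hxy : x - y = (x - z) + (z - y) := by abel
  rw [hxy]; exact hadd a h1 h2 _ _

include hadd hsmul in
lemma Nsub_le (a : ℝ) (h1 : amin ≤ a) (h2 : a ≤ amax) (x y : E) :
    N a (x - y) ≤ N a x + N a y := by
  rw [sub_eq_add_neg]
  exact le_trans (hadd a h1 h2 x (-y)) (by rw [Nneg hsmul a h1 h2])

include hadd hsmul in
lemma Nfin_sub (a : ℝ) (h1 : amin ≤ a) (h2 : a ≤ amax) {x y : E}
    (hx : N a x ≠ ⊤) (hy : N a y ≠ ⊤) : N a (x - y) ≠ ⊤ :=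
  ne_top_of_le_ne_top (by simp [ENNReal.add_ne_top, hx, hy]) (Nsub_le hadd hsmul a h1 h2 x y)

include hadd in
lemma Nfin_add (a : ℝ) (h1 : amin ≤ a) (h2 : a ≤ amax) {x y : E}
    (hx : N a x ≠ ⊤) (hy : N a y ≠ ⊤) : N a (x + y) ≠ ⊤ :=
  ne_top_of_le_ne_top (by simp [ENNReal.add_ne_top, hx, hy]) (hadd a h1 h2 x y)

include htop hmono in
lemma Namb (a : ℝ) (h1 : amin ≤ a) (h2 : a ≤ amax) (x : E) : (‖x‖₊ : ℝ≥0∞) ≤ N a x := by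
  rw [← htop x]; exact hmono a amax h1 h2 le_rfl x

include htop hmono in
lemma Ndef (a : ℝ) (h1 : amin ≤ a) (h2 : a ≤ amax) {x : E} (h : N a x = 0) : x = 0 := by
  have := Namb htop hmono a h1 h2 x
  rw [h, le_zero_iff] at this
  simpa using this

include hmono in
lemma ScaleContOn.mono {a b : ℝ} (h1 : amin ≤ a) (hab : a ≤ b) (h2 : b ≤ amax)
    {f : ℝ → E} (hf : ScaleContOn N a T f) : ScaleContOn N b T f := by
  refine ⟨fun t ht => ne_top_of_le_ne_top (hf.1 t ht) (hmono a b h1 hab h2 _), fun t₀ ht₀ => ?_⟩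
  have := hf.2 t₀ ht₀
  refine tendsto_of_tendsto_of_tendsto_of_le_of_le tendsto_const_nhds this
    (fun t => zero_le) (fun t => hmono a b h1 hab h2 _)

include htop hmono in
lemma ScaleContOn.ambient {a : ℝ} (h1 : amin ≤ a) (h2 : a ≤ amax)
    {f : ℝ → E} (hf : ScaleContOn N a T f) : ContinuousOn f (Icc (0 : ℝ) T) := by
  intro t₀ ht₀
  rw [ContinuousWithinAt, Metric.tendsto_nhds]
  intro ε hε
  have h := (ENNReal.tendsto_nhds_zero.1 (hf.2 t₀ ht₀)) (ENNReal.ofReal (ε / 2))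
    (by simp [ENNReal.ofReal_pos]; linarith)
  filter_upwards [h] with t ht
  have : (‖f t - f t₀‖₊ : ℝ≥0∞) ≤ ENNReal.ofReal (ε / 2) :=
    le_trans (Namb htop hmono a h1 h2 _) ht
  rw [← enorm_eq_nnnorm, ← ofReal_norm, ENNReal.ofReal_le_ofReal_iff (by linarith)] at this
  rw [dist_eq_norm]
  linarith

include htop hmono in
lemma amb_lim {a : ℝ} (h1 : amin ≤ a) (h2 : a ≤ amax) {u : ℕ → E} {x : E}
    (h : Tendsto (fun n => N a (u n - x)) atTop (nhds 0)) : Tendsto u atTop (nhds x) := by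
  rw [Metric.tendsto_atTop]
  intro ε hε
  obtain ⟨K, hK⟩ := (ENNReal.tendsto_atTop_zero.1 h) (ENNReal.ofReal (ε / 2))
    (by simp [ENNReal.ofReal_pos]; linarith)
  refine ⟨K, fun n hn => ?_⟩
  have := le_trans (Namb htop hmono a h1 h2 (u n - x)) (hK n hn)
  rw [← enorm_eq_nnnorm, ← ofReal_norm, ENNReal.ofReal_le_ofReal_iff (by linarith)] at this
  rw [dist_eq_norm]
  linarith


include hadd hsmul hT in
lemma UC {a : ℝ} (h1 : amin ≤ a) (h2 : a ≤ amax) {u : ℝ → E}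
    (hu : ScaleContOn N a T u) (e : ℝ) (he : 0 < e) :
    ∃ δ : ℝ, 0 < δ ∧ ∀ s₁ ∈ Icc (0:ℝ) T, ∀ s₂ ∈ Icc (0:ℝ) T,
      |s₁ - s₂| ≤ δ → N a (u s₁ - u s₂) ≤ ENNReal.ofReal e := by
  have key : ∀ t₀ ∈ Icc (0:ℝ) T, ∃ r > 0, ∀ s ∈ Metric.ball t₀ r ∩ Icc (0:ℝ) T,
      N a (u s - u t₀) ≤ ENNReal.ofReal (e/2) := by
    intro t₀ ht₀
    have h := (ENNReal.tendsto_nhds_zero.1 (hu.2 t₀ ht₀)) (ENNReal.ofReal (e/2))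
      (by simp [ENNReal.ofReal_pos]; linarith)
    rw [eventually_iff, Metric.mem_nhdsWithin_iff] at h
    obtain ⟨r, hr, hsub⟩ := h
    exact ⟨r, hr, fun s hs => hsub hs⟩
  choose! r hr hball using key
  obtain ⟨t, htmem, hcov⟩ := isCompact_Icc.elim_nhds_subcover
    (fun x => Metric.ball x (r x / 2))
    (fun x hx => Metric.ball_mem_nhds x (by linarith [hr x hx]))
  have hne : t.Nonempty := by
    have h0 : (0:ℝ) ∈ Icc (0:ℝ) T := ⟨le_refl _, le_of_lt hT⟩
    obtain ⟨x, hx⟩ := mem_iUnion₂.1 (hcov h0)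
    exact ⟨x, hx.1⟩
  refine ⟨t.inf' hne (fun x => r x / 2), ?_, ?_⟩
  · rw [Finset.lt_inf'_iff]
    exact fun b hb => by linarith [hr b (htmem b hb)]
  · intro s₁ hs₁ s₂ hs₂ hd
    obtain ⟨x₀, hx₀t, hx₀b⟩ := mem_iUnion₂.1 (hcov hs₁)
    have hx₀Icc := htmem x₀ hx₀t
    have hrx := hr x₀ hx₀Icc
    have hd1 : dist s₁ x₀ < r x₀ / 2 := Metric.mem_ball.1 hx₀b
    have hinf : t.inf' hne (fun x => r x / 2) ≤ r x₀ / 2 := Finset.inf'_le _ hx₀t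
    have hd2 : dist s₂ x₀ < r x₀ := by
      have : dist s₂ x₀ ≤ dist s₂ s₁ + dist s₁ x₀ := dist_triangle _ _ _
      have hds : dist s₂ s₁ ≤ r x₀ / 2 := by
        rw [Real.dist_eq, abs_sub_comm]; linarith
      linarith
    have hb1 : N a (u s₁ - u x₀) ≤ ENNReal.ofReal (e/2) :=
      hball x₀ hx₀Icc s₁ ⟨Metric.mem_ball.2 (by linarith), hs₁⟩
    have hb2 : N a (u x₀ - u s₂) ≤ ENNReal.ofReal (e/2) := by
      rw [show u x₀ - u s₂ = -(u s₂ - u x₀) by abel, Nneg hsmul a h1 h2]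
      exact hball x₀ hx₀Icc s₂ ⟨Metric.mem_ball.2 hd2, hs₂⟩
    calc N a (u s₁ - u s₂) ≤ N a (u s₁ - u x₀) + N a (u x₀ - u s₂) :=
          Ntri hadd a h1 h2 _ _ _
      _ ≤ ENNReal.ofReal (e/2) + ENNReal.ofReal (e/2) := add_le_add hb1 hb2
      _ = ENNReal.ofReal e := by rw [← ENNReal.ofReal_add (by linarith) (by linarith)]; norm_num

include hadd hsmul in
lemma BDD {a : ℝ} (h1 : amin ≤ a) (h2 : a ≤ amax) {u v : ℝ → E}
    (hu : ScaleContOn N a T u) (hv : ScaleContOn N a T v) :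
    ∃ D : ℝ≥0∞, D ≠ ⊤ ∧ ∀ s ∈ Icc (0:ℝ) T, N a (u s - v s) ≤ D := by
  have key : ∀ t₀ ∈ Icc (0:ℝ) T, ∃ r > 0, ∀ s ∈ Metric.ball t₀ r ∩ Icc (0:ℝ) T,
      N a (u s - v s) ≤ N a (u t₀ - v t₀) + 2 := by
    intro t₀ ht₀
    have h1' := (ENNReal.tendsto_nhds_zero.1 (hu.2 t₀ ht₀)) 1 one_pos
    have h2' := (ENNReal.tendsto_nhds_zero.1 (hv.2 t₀ ht₀)) 1 one_pos
    have h := h1'.and h2'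
    rw [eventually_iff, Metric.mem_nhdsWithin_iff] at h
    obtain ⟨r, hr, hsub⟩ := h
    refine ⟨r, hr, fun s hs => ?_⟩
    obtain ⟨hsu, hsv⟩ := hsub hs
    calc N a (u s - v s) ≤ N a (u s - (u t₀ - v t₀ + v s)) + N a (u t₀ - v t₀ + v s - v s) :=
          Ntri hadd a h1 h2 _ _ _
      _ ≤ (N a (u s - u t₀) + N a (v t₀ - v s)) + N a (u t₀ - v t₀) := by
          gcongr ?_ + ?_
          · rw [show u s - (u t₀ - v t₀ + v s) = (u s - u t₀) + (v t₀ - v s) by abel]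
            exact hadd a h1 h2 _ _
          · rw [show u t₀ - v t₀ + v s - v s = u t₀ - v t₀ by abel]
      _ ≤ (1 + 1) + N a (u t₀ - v t₀) := by
          gcongr
          rw [show v t₀ - v s = -(v s - v t₀) by abel, Nneg hsmul a h1 h2]
          exact hsv
      _ = N a (u t₀ - v t₀) + 2 := by rw [add_comm]; norm_num
  choose! r hr hball using key
  obtain ⟨t, htmem, hcov⟩ := isCompact_Icc.elim_nhds_subcover
    (fun x => Metric.ball x (r x))
    (fun x hx => Metric.ball_mem_nhds x (hr x hx))
  refine ⟨t.sup (fun x => N a (u x - v x) + 2), ?_, ?_⟩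
  · rw [← lt_top_iff_ne_top, Finset.sup_lt_iff (by simp : (⊥:ℝ≥0∞) < ⊤)]
    intro b hb
    have hbIcc := htmem b hb
    have := Nfin_sub hadd hsmul a h1 h2 (hu.1 b hbIcc) (hv.1 b hbIcc)
    simp [lt_top_iff_ne_top, ENNReal.add_ne_top, this]
  · intro s hs
    obtain ⟨x₀, hx₀t, hx₀b⟩ := mem_iUnion₂.1 (hcov hs)
    exact le_trans (hball x₀ (htmem x₀ hx₀t) s ⟨hx₀b, hs⟩)
      (Finset.le_sup (f := fun x => N a (u x - v x) + 2) hx₀t)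


lemma exists_real_factor (ε : ℝ≥0∞) (hε : 0 < ε) (C : ℝ) (hC : 0 ≤ C) :
    ∃ e : ℝ, 0 < e ∧ ENNReal.ofReal (C * e) < ε := by
  rcases eq_or_ne ε ⊤ with h | h
  · exact ⟨1, one_pos, h ▸ ENNReal.ofReal_lt_top⟩
  · have h0 : 0 < ε.toReal := ENNReal.toReal_pos hε.ne' h
    refine ⟨ε.toReal / (2 * (C + 1)), by positivity, ?_⟩
    have hlt : C * (ε.toReal / (2 * (C + 1))) < ε.toReal := by
      rw [div_eq_mul_inv]
      have h1 : (0:ℝ) < 2 * (C + 1) := by linarith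
      have h2 : C * (ε.toReal * (2 * (C + 1))⁻¹) * (2 * (C+1)) = C * ε.toReal := by
        field_simp
      nlinarith [mul_pos h0 h1]
    calc ENNReal.ofReal _ < ENNReal.ofReal ε.toReal := (ENNReal.ofReal_lt_ofReal_iff h0).2 hlt
      _ = ε := ENNReal.ofReal_toReal h

lemma sum_range_mul_eq {M : Type*} [AddCommMonoid M] (g : ℕ → M) (m l : ℕ) :
    ∑ p ∈ Finset.range (m * l), g p
      = ∑ i ∈ Finset.range m, ∑ j ∈ Finset.range l, g (i * l + j) := by
  induction m with
  | zero => simp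
  | succ m ih =>
      rw [Finset.sum_range_succ, ← ih, Nat.succ_mul, Finset.sum_range_add]

lemma pow_succ_bound (m k : ℕ) : m^(k+1) + (k+1) * m^k ≤ (m+1)^(k+1) := by
  induction k with
  | zero => simpa using le_refl (m + 1)
  | succ k ih =>
      have expand : (m^(k+1) + (k+1)*m^k) * (m+1)
          = m^(k+2) + (k+2)*m^(k+1) + (k+1)*m^k := by ring
      calc m^(k+2) + (k+2)*m^(k+1)
          ≤ m^(k+2) + (k+2)*m^(k+1) + (k+1)*m^k := Nat.le_add_right _ _
        _ = (m^(k+1) + (k+1)*m^k) * (m+1) := expand.symm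
        _ ≤ (m+1)^(k+1) * (m+1) := Nat.mul_le_mul_right _ ih
        _ = (m+1)^(k+2) := by ring

lemma sum_pow_le_nat (m k : ℕ) : (k+1) * ∑ i ∈ Finset.range m, i^k ≤ m^(k+1) := by
  induction m with
  | zero => simp
  | succ m ih =>
      rw [Finset.sum_range_succ, Nat.mul_add]
      calc (k+1) * ∑ i ∈ Finset.range m, i^k + (k+1) * m^k
          ≤ m^(k+1) + (k+1) * m^k := Nat.add_le_add_right ih _
        _ ≤ (m+1)^(k+1) := pow_succ_bound m k

lemma sum_pow_le_real (m k : ℕ) :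
    ∑ i ∈ Finset.range m, (i:ℝ)^k ≤ (m:ℝ)^(k+1) / (k+1) := by
  rw [le_div_iff₀ (by positivity : (0:ℝ) < (k:ℝ)+1)]
  have := sum_pow_le_nat m k
  have hc : (((k+1) * ∑ i ∈ Finset.range m, i^k : ℕ) : ℝ) ≤ ((m^(k+1) : ℕ) : ℝ) :=
    Nat.cast_le.2 this
  push_cast at hc
  linarith


include hzero hadd in
lemma Nsum {a : ℝ} (h1 : amin ≤ a) (h2 : a ≤ amax) {ι : Type*} (s : Finset ι) (f : ι → E) :
    N a (∑ i ∈ s, f i) ≤ ∑ i ∈ s, N a (f i) := by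
  classical
  induction s using Finset.cons_induction with
  | empty => simp [hzero a h1 h2]
  | cons i s hi ih =>
      rw [Finset.sum_cons, Finset.sum_cons]
      exact le_trans (hadd a h1 h2 _ _) (add_le_add le_rfl ih)


set_option maxHeartbeats 2000000 in
include htop hmono hzero hadd hsmul hcomplete hT in
lemma RBOUND {b : ℝ} (hb1 : amin ≤ b) (hb2 : b ≤ amax) {u₁ u₂ : ℝ → E}
    (h₁ : ScaleContOn N b T u₁) (h₂ : ScaleContOn N b T u₂)
    {c d : ℝ} (hc : 0 ≤ c) (hcd : c ≤ d) (hdT : d ≤ T)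
    (K : ℝ≥0∞) (k : ℕ)
    (hbd : ∀ s ∈ Icc c d, N b (u₁ s - u₂ s) ≤ K * ENNReal.ofReal ((s - c)^k)) :
    N b (∫ s in c..d, (u₁ s - u₂ s)) ≤ K * ENNReal.ofReal ((d - c)^(k+1) / (k+1)) := by
  rcases eq_or_lt_of_le hcd with rfl | hlt
  · simp [intervalIntegral.integral_same, hzero b hb1 hb2]
  set w : ℝ → E := fun s => u₁ s - u₂ s with hw
  have hIccsub : Icc c d ⊆ Icc (0:ℝ) T := Icc_subset_Icc hc hdT
  have hwfin : ∀ s ∈ Icc c d, N b (w s) ≠ ⊤ := fun s hs =>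
    Nfin_sub hadd hsmul b hb1 hb2 (h₁.1 s (hIccsub hs)) (h₂.1 s (hIccsub hs))
  have hwUC : ∀ e : ℝ, 0 < e → ∃ δ : ℝ, 0 < δ ∧ ∀ s₁ ∈ Icc c d, ∀ s₂ ∈ Icc c d,
      |s₁ - s₂| ≤ δ → N b (w s₁ - w s₂) ≤ ENNReal.ofReal e := by
    intro e he
    obtain ⟨δ₁, hδ₁, H₁⟩ := UC hadd hsmul hT hb1 hb2 h₁ (e/2) (by linarith)
    obtain ⟨δ₂, hδ₂, H₂⟩ := UC hadd hsmul hT hb1 hb2 h₂ (e/2) (by linarith)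
    refine ⟨min δ₁ δ₂, lt_min hδ₁ hδ₂, fun s₁ hs₁ s₂ hs₂ hdist => ?_⟩
    have e1 := H₁ s₁ (hIccsub hs₁) s₂ (hIccsub hs₂) (le_trans hdist (min_le_left _ _))
    have e2 := H₂ s₂ (hIccsub hs₂) s₁ (hIccsub hs₁)
      (by rw [abs_sub_comm]; exact le_trans hdist (min_le_right _ _))
    calc N b (w s₁ - w s₂)
        ≤ N b (u₁ s₁ - u₁ s₂) + N b (u₂ s₂ - u₂ s₁) := by
          rw [show w s₁ - w s₂ = (u₁ s₁ - u₁ s₂) + (u₂ s₂ - u₂ s₁) by rw [hw]; beta_reduce; abel]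
          exact hadd b hb1 hb2 _ _
      _ ≤ ENNReal.ofReal (e/2) + ENNReal.ofReal (e/2) := add_le_add e1 e2
      _ = ENNReal.ofReal e := by
          rw [← ENNReal.ofReal_add (by linarith) (by linarith)]; norm_num
  have hwUCa : ∀ e : ℝ, 0 < e → ∃ δ : ℝ, 0 < δ ∧ ∀ s₁ ∈ Icc c d, ∀ s₂ ∈ Icc c d,
      |s₁ - s₂| ≤ δ → ‖w s₁ - w s₂‖ ≤ e := by
    intro e he
    obtain ⟨δ, hδ, H⟩ := hwUC e he
    refine ⟨δ, hδ, fun s₁ hs₁ s₂ hs₂ hdist => ?_⟩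
    have h5 := le_trans (Namb htop hmono b hb1 hb2 _) (H s₁ hs₁ s₂ hs₂ hdist)
    rwa [← enorm_eq_nnnorm, ← ofReal_norm, ENNReal.ofReal_le_ofReal_iff (le_of_lt he)] at h5
  have hwc : ContinuousOn w (Icc c d) :=
    (((ScaleContOn.ambient htop hmono hb1 hb2 h₁).mono hIccsub).sub
      (((ScaleContOn.ambient htop hmono hb1 hb2 h₂)).mono hIccsub))
  have hint : ∀ p q : ℝ, p ∈ Icc c d → q ∈ Icc c d → IntervalIntegrable w volume p q :=
    fun p q hp hq => (hwc.mono (uIcc_subset_Icc hp hq)).intervalIntegrable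
  have hnode : ∀ r : ℝ, 0 ≤ r → r ≤ d - c → c + r ∈ Icc c d := by
    intro r h5 h6; constructor <;> [linarith; linarith]
  set S : ℕ → E := fun n =>
    ∑ i ∈ Finset.range n, ((d-c)/(n:ℝ)) • w (c + (i:ℝ)*((d-c)/(n:ℝ))) with hS
  have hSdef : ∀ n : ℕ, S n
      = ∑ i ∈ Finset.range n, ((d-c)/(n:ℝ)) • w (c + (i:ℝ)*((d-c)/(n:ℝ))) :=
    fun n => rfl
  -- comparison of a sum with a refinement
  have Scomp : ∀ m l : ℕ, 0 < m → 0 < l → ∀ e : ℝ, 0 < e →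
      (∀ s₁ ∈ Icc c d, ∀ s₂ ∈ Icc c d, |s₁ - s₂| ≤ (d-c)/(m:ℝ) →
        N b (w s₁ - w s₂) ≤ ENNReal.ofReal e) →
      N b (S (m*l) - S m) ≤ ENNReal.ofReal ((d-c)*e) := by
    intro m l hm hl e he hP
    have hmR : (0:ℝ) < m := Nat.cast_pos.2 hm
    have hlR : (0:ℝ) < l := Nat.cast_pos.2 hl
    have hhpos : 0 < (d-c)/(m:ℝ) := div_pos (by linarith) hmR
    have hslpos : 0 < (d-c)/(m:ℝ)/(l:ℝ) := div_pos hhpos hlR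
    have hstep : (d-c)/((m*l : ℕ):ℝ) = (d-c)/(m:ℝ)/(l:ℝ) := by
      push_cast; rw [div_div]
    have hSml : S (m*l) = ∑ i ∈ Finset.range m, ∑ j ∈ Finset.range l,
        ((d-c)/(m:ℝ)/(l:ℝ)) • w (c + ((i*l+j : ℕ):ℝ) * ((d-c)/(m:ℝ)/(l:ℝ))) := by
      rw [hSdef (m*l),
        sum_range_mul_eq (fun p => ((d-c)/((m*l:ℕ):ℝ)) • w (c + (p:ℝ) * ((d-c)/((m*l:ℕ):ℝ)))) m l]
      simp_rw [hstep]
    have hSm : S m = ∑ i ∈ Finset.range m, ∑ j ∈ Finset.range l,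
        ((d-c)/(m:ℝ)/(l:ℝ)) • w (c + (i:ℝ) * ((d-c)/(m:ℝ))) := by
      rw [hSdef m]
      refine Finset.sum_congr rfl (fun i _ => ?_)
      rw [Finset.sum_const, Finset.card_range, ← Nat.cast_smul_eq_nsmul ℝ, smul_smul]
      congr 1
      field_simp
    rw [hSml, hSm, ← Finset.sum_sub_distrib]
    simp_rw [← Finset.sum_sub_distrib, ← smul_sub]
    refine le_trans (Nsum hzero hadd hb1 hb2 _ _) ?_
    have hinner : ∀ i ∈ Finset.range m,
        N b (∑ j ∈ Finset.range l, ((d-c)/(m:ℝ)/(l:ℝ)) •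
          (w (c + ((i*l+j : ℕ):ℝ) * ((d-c)/(m:ℝ)/(l:ℝ))) - w (c + (i:ℝ) * ((d-c)/(m:ℝ)))))
        ≤ ∑ j ∈ Finset.range l, ENNReal.ofReal ((d-c)/(m:ℝ)/(l:ℝ)) * ENNReal.ofReal e := by
      intro i hi
      refine le_trans (Nsum hzero hadd hb1 hb2 _ _) (Finset.sum_le_sum (fun j hj => ?_))
      rw [hsmul b hb1 hb2, ← enorm_eq_nnnorm, Real.enorm_eq_ofReal hslpos.le]
      refine mul_le_mul_right ?_ _
      have hiR : (i:ℝ) ≤ (m:ℝ) - 1 := by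
        have h8 : i + 1 ≤ m := Finset.mem_range.1 hi
        have : (i:ℝ) + 1 ≤ m := by exact_mod_cast h8
        linarith
      have hjR : (j:ℝ) ≤ (l:ℝ) - 1 := by
        have h8 : j + 1 ≤ l := Finset.mem_range.1 hj
        have : (j:ℝ) + 1 ≤ l := by exact_mod_cast h8
        linarith
      have harg2 : ((i*l+j : ℕ):ℝ) * ((d-c)/(m:ℝ)/(l:ℝ)) = (i:ℝ)*((d-c)/(m:ℝ)) + (j:ℝ)*((d-c)/(m:ℝ)/(l:ℝ)) := by
        push_cast; field_simp
      have hmem2 : c + ((i*l+j : ℕ):ℝ) * ((d-c)/(m:ℝ)/(l:ℝ)) ∈ Icc c d := by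
        refine hnode _ (by positivity) ?_
        rw [harg2]
        have b1 : (i:ℝ)*((d-c)/(m:ℝ)) ≤ ((m:ℝ)-1)*((d-c)/(m:ℝ)) :=
          mul_le_mul_of_nonneg_right hiR hhpos.le
        have b2 : (j:ℝ)*((d-c)/(m:ℝ)/(l:ℝ)) ≤ ((l:ℝ)-1)*((d-c)/(m:ℝ)/(l:ℝ)) :=
          mul_le_mul_of_nonneg_right hjR hslpos.le
        have e1 : ((m:ℝ)-1)*((d-c)/(m:ℝ)) + ((l:ℝ)-1)*((d-c)/(m:ℝ)/(l:ℝ)) ≤ d - c := by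
          field_simp
          ring_nf
          nlinarith [hhpos, hlR, hmR]
        linarith
      have hmem1 : c + (i:ℝ)*((d-c)/(m:ℝ)) ∈ Icc c d := by
        refine hnode _ (by positivity) ?_
        have b1 : (i:ℝ)*((d-c)/(m:ℝ)) ≤ ((m:ℝ)-1)*((d-c)/(m:ℝ)) :=
          mul_le_mul_of_nonneg_right hiR hhpos.le
        have b2 : ((m:ℝ)-1)*((d-c)/(m:ℝ)) ≤ (m:ℝ)*((d-c)/(m:ℝ)) :=
          mul_le_mul_of_nonneg_right (by linarith) hhpos.le
        have h7 : (m:ℝ)*((d-c)/(m:ℝ)) = d - c := by field_simp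
        linarith
      have hdist : |(c + ((i*l+j : ℕ):ℝ) * ((d-c)/(m:ℝ)/(l:ℝ))) - (c + (i:ℝ)*((d-c)/(m:ℝ)))|
          ≤ (d-c)/(m:ℝ) := by
        rw [show (c + ((i*l+j : ℕ):ℝ) * ((d-c)/(m:ℝ)/(l:ℝ))) - (c + (i:ℝ)*((d-c)/(m:ℝ)))
            = (j:ℝ)*((d-c)/(m:ℝ)/(l:ℝ)) by rw [harg2]; ring]
        rw [abs_of_nonneg (by positivity)]
        have b2 : (j:ℝ)*((d-c)/(m:ℝ)/(l:ℝ)) ≤ ((l:ℝ))*((d-c)/(m:ℝ)/(l:ℝ)) :=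
          mul_le_mul_of_nonneg_right (by linarith) hslpos.le
        have : (l:ℝ)*((d-c)/(m:ℝ)/(l:ℝ)) = (d-c)/(m:ℝ) := by field_simp
        linarith
      exact hP _ hmem2 _ hmem1 hdist
    refine le_trans (Finset.sum_le_sum hinner) ?_
    rw [Finset.sum_const, Finset.sum_const, Finset.card_range, Finset.card_range]
    rw [nsmul_eq_mul, nsmul_eq_mul]
    rw [← ENNReal.ofReal_natCast m, ← ENNReal.ofReal_natCast l,
      ← ENNReal.ofReal_mul hslpos.le, ← ENNReal.ofReal_mul (by positivity),
      ← ENNReal.ofReal_mul (by positivity)]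
    refine le_of_eq ?_
    congr 1
    field_simp
  -- Cauchy property of the Riemann sums in the scale norm
  have hmesh : ∀ (δ : ℝ), 0 < δ → ∀ m : ℕ, max 1 ⌈(d-c)/δ⌉₊ ≤ m → (d-c)/(m:ℝ) ≤ δ := by
    intro δ hδ m hm
    have hm1 : 1 ≤ m := le_trans (le_max_left _ _) hm
    have hmR : (0:ℝ) < m := by exact_mod_cast hm1
    rw [div_le_iff₀ hmR]
    have h5 : (d-c)/δ ≤ (⌈(d-c)/δ⌉₊ : ℝ) := Nat.le_ceil _
    have h6 : ((⌈(d-c)/δ⌉₊ : ℕ) : ℝ) ≤ (m:ℝ) := by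
      exact_mod_cast le_trans (le_max_right 1 _) hm
    have h7 : (d-c)/δ ≤ (m:ℝ) := le_trans h5 h6
    rw [div_le_iff₀ hδ] at h7
    linarith
  have SC : ∀ ε : ℝ≥0∞, 0 < ε → ∃ K₀ : ℕ, ∀ m ≥ K₀, ∀ n ≥ K₀, N b (S m - S n) < ε := by
    intro ε hε
    obtain ⟨e, he, helt⟩ := exists_real_factor ε hε (2*(d-c)) (by linarith)
    obtain ⟨δ, hδ, H⟩ := hwUC e he
    refine ⟨max 1 ⌈(d-c)/δ⌉₊, fun m hm n hn => ?_⟩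
    have hm1 : 0 < m := lt_of_lt_of_le one_pos (le_trans (le_max_left _ _) hm)
    have hn1 : 0 < n := lt_of_lt_of_le one_pos (le_trans (le_max_left _ _) hn)
    have Hm : ∀ s₁ ∈ Icc c d, ∀ s₂ ∈ Icc c d, |s₁ - s₂| ≤ (d-c)/(m:ℝ) →
        N b (w s₁ - w s₂) ≤ ENNReal.ofReal e :=
      fun s₁ h5 s₂ h6 h7 => H s₁ h5 s₂ h6 (le_trans h7 (hmesh δ hδ m hm))
    have Hn : ∀ s₁ ∈ Icc c d, ∀ s₂ ∈ Icc c d, |s₁ - s₂| ≤ (d-c)/(n:ℝ) →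
        N b (w s₁ - w s₂) ≤ ENNReal.ofReal e :=
      fun s₁ h5 s₂ h6 h7 => H s₁ h5 s₂ h6 (le_trans h7 (hmesh δ hδ n hn))
    have c1 : N b (S m - S (m*n)) ≤ ENNReal.ofReal ((d-c)*e) := by
      rw [show S m - S (m*n) = -(S (m*n) - S m) by abel, Nneg hsmul b hb1 hb2]
      exact Scomp m n hm1 hn1 e he Hm
    have c2 : N b (S (m*n) - S n) ≤ ENNReal.ofReal ((d-c)*e) := by
      rw [Nat.mul_comm]
      exact Scomp n m hn1 hm1 e he Hn
    calc N b (S m - S n) ≤ N b (S m - S (m*n)) + N b (S (m*n) - S n) :=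
          Ntri hadd b hb1 hb2 _ _ _
      _ ≤ ENNReal.ofReal ((d-c)*e) + ENNReal.ofReal ((d-c)*e) := add_le_add c1 c2
      _ = ENNReal.ofReal (2*(d-c)*e) := by
          rw [← ENNReal.ofReal_add (mul_nonneg (by linarith) he.le) (mul_nonneg (by linarith) he.le)]; congr 1; ring
      _ < ε := helt
  have hSfin : ∀ n : ℕ, N b (S n) ≠ ⊤ := by
    intro n
    rcases Nat.eq_zero_or_pos n with rfl | hn
    · simp [hSdef, hzero b hb1 hb2]
    have hnR : (0:ℝ) < n := Nat.cast_pos.2 hn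
    have hhn : 0 ≤ (d-c)/(n:ℝ) := div_nonneg (by linarith) hnR.le
    refine ne_top_of_le_ne_top ?_ (Nsum hzero hadd hb1 hb2 _ _)
    rw [← lt_top_iff_ne_top]
    refine ENNReal.sum_lt_top.2 (fun i hi => ?_)
    rw [hsmul b hb1 hb2, ← enorm_eq_nnnorm, Real.enorm_eq_ofReal hhn]
    refine ENNReal.mul_lt_top ENNReal.ofReal_lt_top (lt_top_iff_ne_top.2 (hwfin _ ?_))
    have h8 : i + 1 ≤ n := Finset.mem_range.1 hi
    have hiR : (i:ℝ) ≤ (n:ℝ) := by exact_mod_cast le_trans (Nat.le_succ i) h8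
    refine hnode _ (by positivity) ?_
    calc (i:ℝ) * ((d-c)/(n:ℝ)) ≤ (n:ℝ) * ((d-c)/(n:ℝ)) :=
          mul_le_mul_of_nonneg_right hiR hhn
      _ = d - c := by field_simp
  obtain ⟨y, hyfin, hytend⟩ := hcomplete b hb1 hb2 S hSfin SC
  -- ambient convergence of Riemann sums to the Bochner integral
  have tendsto_S : Tendsto S atTop (nhds (∫ s in c..d, w s)) := by
    rw [Metric.tendsto_atTop]
    intro ε hε
    set e := ε / ((d-c)+1) with hedef
    have he : 0 < e := by
      rw [hedef]; exact div_pos hε (by linarith)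
    obtain ⟨δ, hδ, H⟩ := hwUCa e he
    refine ⟨max 1 ⌈(d-c)/δ⌉₊, fun m hm => ?_⟩
    have hm1 : 1 ≤ m := le_trans (le_max_left _ _) hm
    have hmR : (0:ℝ) < m := by exact_mod_cast hm1
    set h := (d-c)/(m:ℝ) with hhdef
    have hhpos : 0 < h := div_pos (by linarith) hmR
    have hhδ : h ≤ δ := hmesh δ hδ m hm
    set x : ℕ → ℝ := fun i => c + (i:ℝ)*h with hx
    have hxmem : ∀ i : ℕ, i ≤ m → x i ∈ Icc c d := by
      intro i hi
      have hiR : (i:ℝ) ≤ (m:ℝ) := by exact_mod_cast hi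
      refine hnode _ (by positivity) ?_
      calc (i:ℝ) * h ≤ (m:ℝ) * h := mul_le_mul_of_nonneg_right hiR hhpos.le
        _ = d - c := by rw [hhdef]; field_simp
    have hx0 : x 0 = c := by simp [hx]
    have hxm : x m = d := by
      rw [hx]
      simp only []
      rw [hhdef]
      field_simp
      ring
    have hint_i : ∀ i, i < m → IntervalIntegrable w volume (x i) (x (i+1)) :=
      fun i hi => hint _ _ (hxmem i (le_of_lt hi)) (hxmem (i+1) hi)
    have hsplit : ∑ i ∈ Finset.range m, ∫ s in (x i)..(x (i+1)), w s = ∫ s in c..d, w s := by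
      have h9 := intervalIntegral.sum_integral_adjacent_intervals hint_i
      rwa [hx0, hxm] at h9
    have hterm : ∀ i ∈ Finset.range m,
        (∫ s in (x i)..(x (i+1)), w s) - h • w (x i)
          = ∫ s in (x i)..(x (i+1)), (w s - w (x i)) := by
      intro i hi
      rw [intervalIntegral.integral_sub (hint_i i (Finset.mem_range.1 hi))
        (intervalIntegrable_const)]
      congr 1
      rw [intervalIntegral.integral_const]
      congr 1
      rw [hx]
      push_cast
      ring
    have hdiff : (∫ s in c..d, w s) - S m
        = ∑ i ∈ Finset.range m, ∫ s in (x i)..(x (i+1)), (w s - w (x i)) := by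
      rw [← hsplit, hSdef m, ← Finset.sum_sub_distrib]
      exact Finset.sum_congr rfl hterm
    have hbnd : ∀ i ∈ Finset.range m,
        ‖∫ s in (x i)..(x (i+1)), (w s - w (x i))‖ ≤ e * h := by
      intro i hi
      have him := Finset.mem_range.1 hi
      have hxi1 : x (i+1) - x i = h := by rw [hx]; push_cast; ring
      have hlt' : x i < x (i+1) := by
        have : x i + h = x (i+1) := by linarith
        linarith
      have hC : ∀ s ∈ Set.uIoc (x i) (x (i+1)), ‖w s - w (x i)‖ ≤ e := by
        intro s hs
        rw [Set.uIoc_of_le hlt'.le] at hs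
        have hmem_i := hxmem i (le_of_lt him)
        have hmem_i1 := hxmem (i+1) him
        have hsmem : s ∈ Icc c d := ⟨le_trans hmem_i.1 hs.1.le, le_trans hs.2 hmem_i1.2⟩
        refine H s hsmem (x i) hmem_i ?_
        rw [abs_of_nonneg (by linarith [hs.1])]
        linarith [hs.2]
      calc ‖∫ s in (x i)..(x (i+1)), (w s - w (x i))‖
          ≤ e * |x (i+1) - x i| := intervalIntegral.norm_integral_le_of_norm_le_const hC
        _ = e * h := by rw [hxi1, abs_of_nonneg hhpos.le]
    have : ‖(∫ s in c..d, w s) - S m‖ ≤ e * (d - c) := by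
      rw [hdiff]
      refine le_trans (norm_sum_le _ _) ?_
      calc ∑ i ∈ Finset.range m, ‖∫ s in (x i)..(x (i+1)), (w s - w (x i))‖
          ≤ ∑ _i ∈ Finset.range m, e * h := Finset.sum_le_sum hbnd
        _ = m * (e * h) := by rw [Finset.sum_const, Finset.card_range, nsmul_eq_mul]
        _ = e * (d - c) := by rw [hhdef]; field_simp
    rw [dist_eq_norm, norm_sub_rev]
    have hfin : e * (d - c) < ε := by
      rw [hedef]
      rw [div_mul_eq_mul_div, div_lt_iff₀ (by linarith)]
      nlinarith
    linarith
  have hyid : y = ∫ s in c..d, w s :=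
    tendsto_nhds_unique (amb_lim htop hmono hb1 hb2 hytend) tendsto_S
  -- bound on the Riemann sums
  have hbound : ∀ n : ℕ, 0 < n →
      N b (S n) ≤ K * ENNReal.ofReal ((d - c)^(k+1) / (k+1)) := by
    intro n hn
    have hnR : (0:ℝ) < n := Nat.cast_pos.2 hn
    set h := (d-c)/(n:ℝ) with hhdef
    have hhpos : 0 < h := div_pos (by linarith) hnR
    have hnodei : ∀ i : ℕ, i < n → c + (i:ℝ)*h ∈ Icc c d := by
      intro i hi
      have hiR : (i:ℝ) ≤ (n:ℝ) := by
        exact_mod_cast le_of_lt hi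
      refine hnode _ (by positivity) ?_
      calc (i:ℝ) * h ≤ (n:ℝ) * h := mul_le_mul_of_nonneg_right hiR hhpos.le
        _ = d - c := by rw [hhdef]; field_simp
    refine le_trans (Nsum hzero hadd hb1 hb2 _ _) ?_
    have hterm : ∀ i ∈ Finset.range n,
        N b (h • w (c + (i:ℝ)*h)) ≤ K * ENNReal.ofReal (h * ((i:ℝ)*h)^k) := by
      intro i hi
      rw [hsmul b hb1 hb2, ← enorm_eq_nnnorm, Real.enorm_eq_ofReal hhpos.le]
      have h5 := hbd _ (hnodei i (Finset.mem_range.1 hi))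
      rw [show c + (i:ℝ)*h - c = (i:ℝ)*h by ring] at h5
      calc ENNReal.ofReal h * N b (w (c + (i:ℝ)*h))
          ≤ ENNReal.ofReal h * (K * ENNReal.ofReal (((i:ℝ)*h)^k)) :=
            mul_le_mul_right h5 _
        _ = K * ENNReal.ofReal (h * ((i:ℝ)*h)^k) := by
            rw [ENNReal.ofReal_mul hhpos.le]
            ring
    refine le_trans (Finset.sum_le_sum hterm) ?_
    rw [← Finset.mul_sum]
    refine mul_le_mul_right ?_ K
    rw [← ENNReal.ofReal_sum_of_nonneg (fun i _ => by positivity)]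
    refine ENNReal.ofReal_le_ofReal ?_
    have hsum : ∑ i ∈ Finset.range n, h * ((i:ℝ)*h)^k
        = h^(k+1) * ∑ i ∈ Finset.range n, (i:ℝ)^k := by
      rw [Finset.mul_sum]
      refine Finset.sum_congr rfl (fun i _ => ?_)
      rw [mul_pow]
      ring
    rw [hsum]
    calc h^(k+1) * ∑ i ∈ Finset.range n, (i:ℝ)^k
        ≤ h^(k+1) * ((n:ℝ)^(k+1)/(k+1)) := by
          refine mul_le_mul_of_nonneg_left (sum_pow_le_real n k) (by positivity)
      _ = (d - c)^(k+1) / (k+1) := by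
          rw [hhdef, div_pow]
          field_simp
  -- conclusion
  have hfinal : ∀ n : ℕ, 0 < n →
      N b y ≤ N b (y - S n) + K * ENNReal.ofReal ((d - c)^(k+1) / (k+1)) := by
    intro n hn
    have h5 : N b (y - 0) ≤ N b (y - S n) + N b (S n - 0) := Ntri hadd b hb1 hb2 _ _ _
    rw [sub_zero, sub_zero] at h5
    exact le_trans h5 (add_le_add le_rfl (hbound n hn))
  have htendb : Tendsto (fun n => N b (y - S n) + K * ENNReal.ofReal ((d - c)^(k+1) / (k+1)))
      atTop (nhds (K * ENNReal.ofReal ((d - c)^(k+1) / (k+1)))) := by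
    have h5 : Tendsto (fun n => N b (y - S n)) atTop (nhds 0) := by
      refine hytend.congr (fun n => ?_)
      rw [show y - S n = -(S n - y) by abel, Nneg hsmul b hb1 hb2]
    have h6 := h5.add (tendsto_const_nhds
      (x := K * ENNReal.ofReal ((d - c)^(k+1) / (k+1))) (f := atTop))
    rwa [zero_add] at h6
  have : N b y ≤ K * ENNReal.ofReal ((d - c)^(k+1) / (k+1)) :=
    ge_of_tendsto htendb (eventually_atTop.2 ⟨1, fun n hn => hfinal n hn⟩)
  rw [← hyid]
  exact this


include hq hL hFmap hFlip in
lemma Fcont {a b' : ℝ} (h1 : amin ≤ a) (hab : a < b') (hb2 : b' ≤ amax)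
    {f : ℝ → E} (hf : ScaleContOn N a T f) :
    ScaleContOn N b' T (fun s => F (f s)) := by
  constructor
  · exact fun t ht => hFmap a b' h1 hab hb2 _ (hf.1 t ht)
  · intro t₀ ht₀
    have hle : ∀ᶠ t in nhdsWithin t₀ (Icc (0:ℝ) T),
        N b' (F (f t) - F (f t₀)) ≤ ENNReal.ofReal (L / (b' - a)^q) * N a (f t - f t₀) := by
      filter_upwards [eventually_mem_nhdsWithin] with t ht
      exact hFlip a b' h1 hab hb2 _ _ (hf.1 t ht) (hf.1 t₀ ht₀)
    have hmul : Tendsto (fun t => ENNReal.ofReal (L / (b' - a)^q) * N a (f t - f t₀))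
        (nhdsWithin t₀ (Icc (0:ℝ) T)) (nhds 0) := by
      have h9 : Tendsto (fun t => ENNReal.ofReal (L / (b' - a)^q) * N a (f t - f t₀))
          (nhdsWithin t₀ (Icc (0:ℝ) T)) (nhds (ENNReal.ofReal (L / (b' - a)^q) * 0)) :=
        ENNReal.Tendsto.const_mul (hf.2 t₀ ht₀) (Or.inr ENNReal.ofReal_ne_top)
      rwa [mul_zero] at h9
    exact tendsto_of_tendsto_of_tendsto_of_le_of_le' tendsto_const_nhds hmul
      (Eventually.of_forall (fun t => zero_le)) hle

include htop hmono hT in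
lemma Imap_sub {f g : ℝ → E}
    (hFf : ContinuousOn (fun s => F (f s)) (Icc (0:ℝ) T))
    (hFg : ContinuousOn (fun s => F (g s)) (Icc (0:ℝ) T))
    {t : ℝ} (ht : t ∈ Icc (0:ℝ) T) :
    Imap F x₀ f t - Imap F x₀ g t = ∫ s in (0:ℝ)..t, (F (f s) - F (g s)) := by
  have h0 : (0:ℝ) ∈ Icc (0:ℝ) T := ⟨le_refl _, hT.le⟩
  have hsub : uIcc (0:ℝ) t ⊆ Icc (0:ℝ) T := uIcc_subset_Icc h0 ht
  rw [Imap, Imap]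
  rw [add_sub_add_left_eq_sub]
  rw [← intervalIntegral.integral_sub ((hFf.mono hsub).intervalIntegrable)
    ((hFg.mono hsub).intervalIntegrable)]

include hT in
lemma Imap_congr' {f g : ℝ → E} (h : ∀ s ∈ Icc (0:ℝ) T, f s = g s) :
    ∀ t ∈ Icc (0:ℝ) T, Imap F x₀ f t = Imap F x₀ g t := by
  intro t ht
  have h0 : (0:ℝ) ∈ Icc (0:ℝ) T := ⟨le_refl _, hT.le⟩
  have hsub : uIcc (0:ℝ) t ⊆ Icc (0:ℝ) T := uIcc_subset_Icc h0 ht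
  rw [Imap, Imap]
  congr 1
  apply intervalIntegral.integral_congr
  intro s hs
  show F (f s) = F (g s)
  rw [h s (hsub hs)]

include hT in
lemma iter_congr (n : ℕ) {f g : ℝ → E} (h : ∀ s ∈ Icc (0:ℝ) T, f s = g s) :
    ∀ t ∈ Icc (0:ℝ) T, (Imap F x₀)^[n] f t = (Imap F x₀)^[n] g t := by
  induction n generalizing f g with
  | zero => exact h
  | succ n ih =>
      intro t ht
      rw [Function.iterate_succ_apply, Function.iterate_succ_apply]
      exact ih (Imap_congr' hT h) t ht

include htop hmono hzero hadd hsmul hcomplete hq hL hFmap hFlip hT in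
lemma Imap_cont {a b' : ℝ} (h1 : amin ≤ a) (hab : a < b') (hb2 : b' ≤ amax)
    (hx₀' : N a x₀ ≠ ⊤)
    {f : ℝ → E} (hf : ScaleContOn N a T f) : ScaleContOn N b' T (Imap F x₀ f) := by
  have hb1 : amin ≤ b' := le_trans h1 hab.le
  have hg : ScaleContOn N b' T (fun s => F (f s)) := Fcont hq hL hFmap hFlip h1 hab hb2 hf
  have hzf : ScaleContOn N b' T (fun _ => (0:E)) :=
    ⟨fun t _ => by simp [hzero b' hb1 hb2], fun t₀ _ => by
      simp only [sub_self, hzero b' hb1 hb2]; exact tendsto_const_nhds⟩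
  obtain ⟨D, hD, hDb⟩ := BDD hadd hsmul hb1 hb2 hg hzf
  -- a bound for integrals over subintervals
  have hI : ∀ p t : ℝ, p ∈ Icc (0:ℝ) T → t ∈ Icc (0:ℝ) T → p ≤ t →
      N b' (∫ s in p..t, F (f s)) ≤ D * ENNReal.ofReal (t - p) := by
    intro p t hp ht hpt
    have := RBOUND htop hmono hzero hadd hsmul hcomplete hT hb1 hb2 hg hzf
      hp.1 hpt ht.2 D 0 (fun s hs => by
        simpa using hDb s ⟨le_trans hp.1 hs.1, le_trans hs.2 ht.2⟩)
    simpa using this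
  constructor
  · intro t ht
    have hfin : N b' (∫ s in (0:ℝ)..t, F (f s)) ≠ ⊤ :=
      ne_top_of_le_ne_top (by
          exact ENNReal.mul_ne_top hD ENNReal.ofReal_ne_top)
        (hI 0 t ⟨le_refl _, hT.le⟩ ht ht.1)
    exact Nfin_add hadd b' hb1 hb2
      (ne_top_of_le_ne_top hx₀' (hmono a b' h1 hab.le hb2 x₀)) hfin
  · intro t₀ ht₀
    have key : ∀ t ∈ Icc (0:ℝ) T,
        N b' (Imap F x₀ f t - Imap F x₀ f t₀) ≤ D * ENNReal.ofReal |t - t₀| := by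
      intro t ht
      have h0 : (0:ℝ) ∈ Icc (0:ℝ) T := ⟨le_refl _, hT.le⟩
      have hsubt : uIcc (0:ℝ) t ⊆ Icc (0:ℝ) T := uIcc_subset_Icc h0 ht
      have hsubt₀ : uIcc (0:ℝ) t₀ ⊆ Icc (0:ℝ) T := uIcc_subset_Icc h0 ht₀
      have hFa : ContinuousOn (fun s => F (f s)) (Icc (0:ℝ) T) :=
        ScaleContOn.ambient htop hmono hb1 hb2 hg
      have hdiff : Imap F x₀ f t - Imap F x₀ f t₀ = ∫ s in t₀..t, F (f s) := by
        rw [Imap, Imap, add_sub_add_left_eq_sub]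
        exact intervalIntegral.integral_interval_sub_left
          ((hFa.mono hsubt).intervalIntegrable) ((hFa.mono hsubt₀).intervalIntegrable)
      rw [hdiff]
      rcases le_total t₀ t with hle | hle
      · rw [abs_of_nonneg (by linarith)]
        exact hI t₀ t ht₀ ht hle
      · rw [abs_of_nonpos (by linarith)]
        rw [intervalIntegral.integral_symm t t₀, Nneg hsmul b' hb1 hb2]
        rw [show -(t - t₀) = t₀ - t by ring]
        exact hI t t₀ ht ht₀ hle
    have hmul : Tendsto (fun t => D * ENNReal.ofReal |t - t₀|)
        (nhdsWithin t₀ (Icc (0:ℝ) T)) (nhds 0) := by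
      have habs : Tendsto (fun t : ℝ => |t - t₀|) (nhdsWithin t₀ (Icc (0:ℝ) T)) (nhds 0) := by
        have : Tendsto (fun t : ℝ => |t - t₀|) (nhds t₀) (nhds |t₀ - t₀|) :=
          (continuous_abs.comp (continuous_sub_right t₀)).tendsto t₀
        simpa using this.mono_left nhdsWithin_le_nhds
      have hof : Tendsto (fun t : ℝ => ENNReal.ofReal |t - t₀|)
          (nhdsWithin t₀ (Icc (0:ℝ) T)) (nhds 0) := by
        have := (ENNReal.continuous_ofReal.tendsto 0).comp habs
        simpa [Function.comp_def] using this
      have := ENNReal.Tendsto.const_mul hof (Or.inr hD)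
      rwa [mul_zero] at this
    refine tendsto_of_tendsto_of_tendsto_of_le_of_le' tendsto_const_nhds hmul
      (Eventually.of_forall (fun t => zero_le)) ?_
    filter_upwards [eventually_mem_nhdsWithin] with t ht
    exact key t ht


lemma pow_self_le_three_pow_factorial : ∀ n : ℕ, (n:ℝ)^n ≤ 3^n * (n.factorial : ℝ) := by
  intro n
  induction n with
  | zero => simp
  | succ n ih =>
      rcases Nat.eq_zero_or_pos n with rfl | hn
      · norm_num
      have hnR : (0:ℝ) < n := Nat.cast_pos.2 hn
      have hkey : ((n:ℝ)+1)^n ≤ 3 * (n:ℝ)^n := by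
        have h1 : ((n:ℝ)+1) = (n:ℝ) * (1 + 1/(n:ℝ)) := by field_simp
        have h2 : (1 + 1/(n:ℝ))^n ≤ Real.exp 1 := by
          have h3 : (1 + 1/(n:ℝ)) ≤ Real.exp (1/(n:ℝ)) := by
            have := Real.add_one_le_exp (1/(n:ℝ)); linarith
          have h4 : (1 + 1/(n:ℝ))^n ≤ (Real.exp (1/(n:ℝ)))^n :=
            pow_le_pow_left₀ (by positivity) h3 n
          rwa [← Real.exp_nat_mul, mul_one_div, div_self hnR.ne'] at h4
        have h5 : Real.exp 1 ≤ 3 := le_of_lt (lt_trans Real.exp_one_lt_d9 (by norm_num))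
        calc ((n:ℝ)+1)^n = (n:ℝ)^n * (1+1/(n:ℝ))^n := by rw [h1, mul_pow]
          _ ≤ (n:ℝ)^n * 3 := by
              refine mul_le_mul_of_nonneg_left (le_trans h2 h5) (by positivity)
          _ = 3 * (n:ℝ)^n := by ring
      have hfact : (0:ℝ) ≤ (n.factorial : ℝ) := Nat.cast_nonneg _
      have hpow3 : (0:ℝ) ≤ 3^n := by positivity
      calc ((n+1 : ℕ):ℝ)^(n+1) = ((n:ℝ)+1) * ((n:ℝ)+1)^n := by push_cast; ring
        _ ≤ ((n:ℝ)+1) * (3 * (n:ℝ)^n) := by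
            refine mul_le_mul_of_nonneg_left hkey (by positivity)
        _ ≤ ((n:ℝ)+1) * (3 * (3^n * (n.factorial : ℝ))) := by
            refine mul_le_mul_of_nonneg_left (by nlinarith) (by positivity)
        _ = 3^(n+1) * (((n+1) * n.factorial : ℕ) : ℝ) := by push_cast; ring
        _ = 3^(n+1) * (((n+1).factorial : ℕ) : ℝ) := by rw [← Nat.factorial_succ]

/-- the explicit majorising sequence -/
def Eseq (q L T d' : ℝ) (n : ℕ) : ℝ := (L / (d'/(n:ℝ))^q)^n * (T^n / (n.factorial : ℝ))

include hq hL hT hq1 in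
lemma Eseq_summable {d' : ℝ} (hd' : 0 < d') : Summable (Eseq q L T d') := by
  set R := 3 * L * T / d'^q with hR
  have hdq : (0:ℝ) < d'^q := Real.rpow_pos_of_pos hd' q
  have hRpos : 0 < R := by rw [hR]; positivity
  have hnonneg : ∀ n, 0 ≤ Eseq q L T d' n := by
    intro n
    unfold Eseq
    have h1 : (0:ℝ) ≤ (d'/(n:ℝ))^q := Real.rpow_nonneg (by positivity) q
    have h2 : (0:ℝ) ≤ L / (d'/(n:ℝ))^q := div_nonneg hL.le h1
    have h3 : (0:ℝ) ≤ T^n / (n.factorial:ℝ) := by positivity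
    exact mul_nonneg (pow_nonneg h2 n) h3
  have htend : Tendsto (fun n : ℕ => R * (n:ℝ)^(q-1)) atTop (nhds 0) := by
    have h1 : Tendsto (fun x : ℝ => x^(q-1)) atTop (nhds 0) := by
      have := tendsto_rpow_neg_atTop (by linarith : (0:ℝ) < 1 - q)
      simpa [neg_sub] using this
    have h2 := (h1.comp tendsto_natCast_atTop_atTop).const_mul R
    simpa using h2
  have hev : ∀ᶠ n : ℕ in atTop, R * (n:ℝ)^(q-1) < 1/2 :=
    htend.eventually (gt_mem_nhds (by norm_num : (0:ℝ) < 1/2))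
  obtain ⟨N₀, hN₀⟩ := eventually_atTop.1 hev
  set N₁ := max N₀ 1 with hN₁
  have hle : ∀ n : ℕ, N₁ ≤ n → Eseq q L T d' n ≤ (1/2:ℝ)^n := by
    intro n hn
    have hn1 : 1 ≤ n := le_trans (le_max_right _ _) hn
    have hnR : (0:ℝ) < n := by exact_mod_cast hn1
    have hnq : (0:ℝ) < (n:ℝ)^q := Real.rpow_pos_of_pos hnR q
    have hfact : (0:ℝ) < (n.factorial : ℝ) := by
      exact_mod_cast Nat.factorial_pos n
    have hnn : (0:ℝ) < (n:ℝ)^(n:ℕ) := pow_pos hnR n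
    have hbase_nonneg : (0:ℝ) ≤ L * (n:ℝ)^q * T / d'^q := by positivity
    have hdiv : (d'/(n:ℝ))^q = d'^q/(n:ℝ)^q := Real.div_rpow hd'.le (Nat.cast_nonneg n) q
    have hbase : L / (d'/(n:ℝ))^q = L * (n:ℝ)^q / d'^q := by
      rw [hdiv]; field_simp
    have hstep1 : Eseq q L T d' n = (L * (n:ℝ)^q * T / d'^q)^n / (n.factorial : ℝ) := by
      unfold Eseq
      rw [hbase]
      rw [show L * (n:ℝ)^q * T / d'^q = (L * (n:ℝ)^q / d'^q) * T by ring, mul_pow]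
      ring
    have hfrac : (1:ℝ)/(n.factorial:ℝ) ≤ 3^n/(n:ℝ)^(n:ℕ) := by
      rw [div_le_div_iff₀ hfact hnn]
      have := pow_self_le_three_pow_factorial n
      linarith
    have hstep2 : Eseq q L T d' n ≤ (L * (n:ℝ)^q * T / d'^q)^n * (3^n/(n:ℝ)^(n:ℕ)) := by
      rw [hstep1, div_eq_mul_one_div]
      exact mul_le_mul_of_nonneg_left hfrac (pow_nonneg hbase_nonneg n)
    have hstep3 : (L * (n:ℝ)^q * T / d'^q)^n * (3^n/(n:ℝ)^(n:ℕ)) = (R * (n:ℝ)^(q-1))^n := by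
      have hb : R * (n:ℝ)^(q-1) = (L * (n:ℝ)^q * T / d'^q) * (3/(n:ℝ)) := by
        rw [Real.rpow_sub hnR q 1, Real.rpow_one, hR]
        field_simp
      rw [hb, mul_pow]
      congr 1
      rw [div_pow]
    have hfin : (R * (n:ℝ)^(q-1))^n ≤ (1/2:ℝ)^n := by
      refine pow_le_pow_left₀ (by positivity) ?_ n
      exact le_of_lt (hN₀ n (le_trans (le_max_left _ _) hn))
    calc Eseq q L T d' n ≤ _ := hstep2
      _ = (R * (n:ℝ)^(q-1))^n := hstep3
      _ ≤ (1/2:ℝ)^n := hfin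
  rw [← summable_nat_add_iff N₁]
  refine Summable.of_nonneg_of_le (fun n => hnonneg _) (fun n => ?_)
    ((summable_geometric_of_lt_one (r := (1/2:ℝ)) (by norm_num) (by norm_num)).mul_right ((1/2:ℝ)^N₁))
  calc Eseq q L T d' (n + N₁) ≤ (1/2:ℝ)^(n+N₁) := hle _ (by omega)
    _ = (1/2:ℝ)^n * (1/2:ℝ)^N₁ := by rw [pow_add]


include htop hmono hzero hadd hsmul hcomplete hq hL hFmap hFlip hT hx₀ in
lemma iter_cont {f : ℝ → E} (hf : ScaleContOn N amin T f) :
    ∀ (n : ℕ) (b' : ℝ), amin < b' → b' ≤ amax → ScaleContOn N b' T ((Imap F x₀)^[n] f) := by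
  intro n
  induction n with
  | zero =>
      intro b' h1 h2
      exact ScaleContOn.mono hmono (le_refl amin) h1.le h2 hf
  | succ n ih =>
      intro b' h1 h2
      rw [Function.iterate_succ_apply']
      have hm1 : amin < (amin + b')/2 := by linarith
      have hm2 : (amin + b')/2 < b' := by linarith
      have hmmax : (amin + b')/2 ≤ amax := le_trans hm2.le h2
      exact Imap_cont htop hmono hzero hadd hsmul hcomplete hq hL hFmap hFlip hT
        hm1.le hm2 h2
        (ne_top_of_le_ne_top hx₀ (hmono amin _ le_rfl hm1.le hmmax x₀))
        (ih _ hm1 hmmax)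

include htop hmono hzero hadd hsmul hcomplete hq hL hFmap hFlip hT in
lemma iter_est {a' a : ℝ} (h1 : amin ≤ a') (h2 : a' < a) (h3 : a ≤ amax)
    (n : ℕ) (hn : 0 < n) {u v : ℝ → E}
    (hu : ScaleContOn N a' T u) (hv : ScaleContOn N a' T v)
    (hx₀' : N a' x₀ ≠ ⊤)
    (D : ℝ≥0∞) (hD : ∀ s ∈ Icc (0:ℝ) T, N a' (u s - v s) ≤ D) :
    ∀ t ∈ Icc (0:ℝ) T, N a ((Imap F x₀)^[n] u t - (Imap F x₀)^[n] v t)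
      ≤ (ENNReal.ofReal (L / ((a - a')/(n:ℝ))^q))^n
        * ENNReal.ofReal (T^n / (n.factorial : ℝ)) * D := by
  set δ := (a - a')/(n:ℝ) with hδdef
  set M := ENNReal.ofReal (L / δ^q) with hM
  have hnR : (0:ℝ) < n := Nat.cast_pos.2 hn
  have hδpos : 0 < δ := div_pos (by linarith) hnR
  set lev : ℕ → ℝ := fun i => a' + i * δ with hlev
  have hlev0 : lev 0 = a' := by simp [hlev]
  have hlevn : lev n = a := by
    simp only [hlev, hδdef]
    field_simp
    ring
  have hlevmono : ∀ i j : ℕ, i ≤ j → lev i ≤ lev j := by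
    intro i j hij
    have hij' : (i:ℝ) ≤ j := Nat.cast_le.2 hij
    simp only [hlev]
    nlinarith [hδpos]
  have hlevlt : ∀ i : ℕ, lev i < lev (i+1) := by
    intro i
    simp only [hlev]
    push_cast
    nlinarith [hδpos]
  have hlev_ge : ∀ i : ℕ, amin ≤ lev i := by
    intro i
    have h5 := hlevmono 0 i (Nat.zero_le i)
    rw [hlev0] at h5
    linarith
  have hlev_le_amax : ∀ i : ℕ, i ≤ n → lev i ≤ amax := by
    intro i hi
    have h5 := hlevmono i n hi
    rw [hlevn] at h5
    linarith
  have hgap : ∀ i : ℕ, lev (i+1) - lev i = δ := by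
    intro i
    simp only [hlev]
    push_cast
    ring
  have main : ∀ i : ℕ, i ≤ n →
      (ScaleContOn N (lev i) T ((Imap F x₀)^[i] u)
        ∧ ScaleContOn N (lev i) T ((Imap F x₀)^[i] v))
      ∧ ∀ t ∈ Icc (0:ℝ) T, N (lev i) ((Imap F x₀)^[i] u t - (Imap F x₀)^[i] v t)
        ≤ M^i * ENNReal.ofReal (t^i / (i.factorial : ℝ)) * D := by
    intro i
    induction i with
    | zero =>
        intro _
        refine ⟨⟨hlev0 ▸ hu, hlev0 ▸ hv⟩, fun t ht => ?_⟩
        simp only [Function.iterate_zero_apply, pow_zero, Nat.factorial_zero]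
        rw [hlev0]
        simpa using hD t ht
    | succ i ih =>
        intro hi1
        obtain ⟨⟨hcu, hcv⟩, hest⟩ := ih (Nat.le_of_succ_le hi1)
        have hllt := hlevlt i
        have hge := hlev_ge i
        have hge1 := hlev_ge (i+1)
        have hle2 := hlev_le_amax (i+1) hi1
        have hx₀i : N (lev i) x₀ ≠ ⊤ :=
          ne_top_of_le_ne_top hx₀'
            (hmono a' (lev i) h1 (hlev0 ▸ hlevmono 0 i (Nat.zero_le i))
              (le_trans hllt.le hle2) x₀)
        have hcu' : ScaleContOn N (lev (i+1)) T ((Imap F x₀)^[i+1] u) := by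
          rw [Function.iterate_succ_apply']
          exact Imap_cont htop hmono hzero hadd hsmul hcomplete hq hL hFmap hFlip hT
            hge hllt hle2 hx₀i hcu
        have hcv' : ScaleContOn N (lev (i+1)) T ((Imap F x₀)^[i+1] v) := by
          rw [Function.iterate_succ_apply']
          exact Imap_cont htop hmono hzero hadd hsmul hcomplete hq hL hFmap hFlip hT
            hge hllt hle2 hx₀i hcv
        refine ⟨⟨hcu', hcv'⟩, fun t ht => ?_⟩
        have hFu : ScaleContOn N (lev (i+1)) T (fun s => F ((Imap F x₀)^[i] u s)) :=
          Fcont hq hL hFmap hFlip hge hllt hle2 hcu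
        have hFv : ScaleContOn N (lev (i+1)) T (fun s => F ((Imap F x₀)^[i] v s)) :=
          Fcont hq hL hFmap hFlip hge hllt hle2 hcv
        have hIdentity : (Imap F x₀)^[i+1] u t - (Imap F x₀)^[i+1] v t
            = ∫ s in (0:ℝ)..t, (F ((Imap F x₀)^[i] u s) - F ((Imap F x₀)^[i] v s)) := by
          rw [Function.iterate_succ_apply', Function.iterate_succ_apply']
          exact Imap_sub htop hmono hT
            (ScaleContOn.ambient htop hmono hge1 hle2 hFu)
            (ScaleContOn.ambient htop hmono hge1 hle2 hFv) ht
        rw [hIdentity]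
        set K : ℝ≥0∞ := M * (M^i * ENNReal.ofReal (1/(i.factorial : ℝ)) * D) with hK
        have hbd' : ∀ s ∈ Icc (0:ℝ) t,
            N (lev (i+1)) (F ((Imap F x₀)^[i] u s) - F ((Imap F x₀)^[i] v s))
              ≤ K * ENNReal.ofReal ((s - 0)^i) := by
          intro s hs
          have hsT : s ∈ Icc (0:ℝ) T := ⟨hs.1, le_trans hs.2 ht.2⟩
          have hflip := hFlip (lev i) (lev (i+1)) hge hllt hle2 _ _
            (hcu.1 s hsT) (hcv.1 s hsT)
          rw [hgap i] at hflip
          refine le_trans hflip ?_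
          have hmul := mul_le_mul_right (hest s hsT) (ENNReal.ofReal (L / δ^q))
          refine le_trans hmul (le_of_eq ?_)
          rw [hK, hM]
          rw [sub_zero]
          rw [show s^i / (i.factorial:ℝ) = (1/(i.factorial:ℝ)) * s^i by ring]
          rw [ENNReal.ofReal_mul (by positivity)]
          ring
        have hR := RBOUND htop hmono hzero hadd hsmul hcomplete hT hge1 hle2 hFu hFv
          (le_refl (0:ℝ)) ht.1 ht.2 K i hbd'
        refine le_trans hR (le_of_eq ?_)
        have hco : ENNReal.ofReal (1/(i.factorial:ℝ)) * ENNReal.ofReal ((t-0)^(i+1)/((i:ℝ)+1))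
            = ENNReal.ofReal (t^(i+1)/(((i+1).factorial : ℕ):ℝ)) := by
          rw [← ENNReal.ofReal_mul (by positivity)]
          congr 1
          rw [sub_zero, Nat.factorial_succ]
          push_cast
          rw [← div_div, div_eq_mul_one_div]
          ring
        calc K * ENNReal.ofReal ((t-0)^(i+1)/((i:ℝ)+1))
            = M^(i+1) * (ENNReal.ofReal (1/(i.factorial:ℝ))
                * ENNReal.ofReal ((t-0)^(i+1)/((i:ℝ)+1))) * D := by
              rw [hK]; ring
          _ = M^(i+1) * ENNReal.ofReal (t^(i+1)/(((i+1).factorial : ℕ):ℝ)) * D := by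
              rw [hco]
  intro t ht
  have hfin := (main n le_rfl).2 t ht
  rw [hlevn] at hfin
  refine le_trans hfin ?_
  have h9 : t^n ≤ T^n := pow_le_pow_left₀ ht.1 ht.2 n
  have h10 : t^n/(n.factorial:ℝ) ≤ T^n/(n.factorial:ℝ) := by
    rw [div_eq_mul_inv, div_eq_mul_inv]
    exact mul_le_mul_of_nonneg_right h9 (by positivity)
  exact mul_le_mul_left (mul_le_mul_right (ENNReal.ofReal_le_ofReal h10) _) _


include htop hmono hzero hadd hsmul hcomplete hq hL hFmap hFlip hT in
lemma iter_est' {a' a : ℝ} (h1 : amin ≤ a') (h2 : a' < a) (h3 : a ≤ amax)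
    (n : ℕ) (hn : 0 < n) {u v : ℝ → E}
    (hu : ScaleContOn N a' T u) (hv : ScaleContOn N a' T v)
    (hx₀' : N a' x₀ ≠ ⊤)
    (D : ℝ≥0∞) (hD : ∀ s ∈ Icc (0:ℝ) T, N a' (u s - v s) ≤ D) :
    ∀ t ∈ Icc (0:ℝ) T, N a ((Imap F x₀)^[n] u t - (Imap F x₀)^[n] v t)
      ≤ ENNReal.ofReal (Eseq q L T (a - a') n) * D := by
  intro t ht
  refine le_trans (iter_est htop hmono hzero hadd hsmul hcomplete hq hL hFmap hFlip hT
    h1 h2 h3 n hn hu hv hx₀' D hD t ht) ?_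
  refine mul_le_mul_left (le_of_eq ?_) D
  have hx : 0 ≤ L / ((a-a')/(n:ℝ))^q :=
    div_nonneg hL.le (Real.rpow_nonneg (div_nonneg (by linarith) (Nat.cast_nonneg n)) q)
  rw [← ENNReal.ofReal_pow hx, ← ENNReal.ofReal_mul (pow_nonneg hx n)]
  rfl

include hL hT in
lemma Eseq_nonneg {d' : ℝ} (hd' : 0 ≤ d') (n : ℕ) : 0 ≤ Eseq q L T d' n := by
  unfold Eseq
  have h1 : (0:ℝ) ≤ (d'/(n:ℝ))^q := Real.rpow_nonneg (div_nonneg hd' (Nat.cast_nonneg n)) q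
  have h2 : (0:ℝ) ≤ L / (d'/(n:ℝ))^q := div_nonneg hL.le h1
  have h3 : (0:ℝ) ≤ T^n / (n.factorial:ℝ) := by positivity
  exact mul_nonneg (pow_nonneg h2 n) h3

end OvsProof

open OvsProof in
theorem statement13
    -- the scale of Banach spaces, realised inside the ambient space `E = X_{amax}`
    (E : Type*) [NormedAddCommGroup E] [NormedSpace ℝ E] [CompleteSpace E]
    (amin amax : ℝ) (hamin : 0 < amin) (hminmax : amin < amax)
    (N : ℝ → E → ℝ≥0∞)
    (htop : ∀ x : E, N amax x = (‖x‖₊ : ℝ≥0∞))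
    (hmono : ∀ a b : ℝ, amin ≤ a → a ≤ b → b ≤ amax → ∀ x : E, N b x ≤ N a x)
    (hzero : ∀ a : ℝ, amin ≤ a → a ≤ amax → N a 0 = 0)
    (hadd : ∀ a : ℝ, amin ≤ a → a ≤ amax → ∀ x y : E, N a (x + y) ≤ N a x + N a y)
    (hsmul : ∀ a : ℝ, amin ≤ a → a ≤ amax → ∀ (c : ℝ) (x : E),
      N a (c • x) = (‖c‖₊ : ℝ≥0∞) * N a x)
    (hcomplete : ∀ a : ℝ, amin ≤ a → a ≤ amax → ∀ u : ℕ → E,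
      (∀ n, N a (u n) ≠ ⊤) →
      (∀ ε : ℝ≥0∞, 0 < ε → ∃ K : ℕ, ∀ m ≥ K, ∀ n ≥ K, N a (u m - u n) < ε) →
      ∃ x : E, N a x ≠ ⊤ ∧ Tendsto (fun n => N a (u n - x)) atTop (nhds 0))
    -- the Ovsjannikov map `F` of order `q` and constant `L`
    (q L : ℝ) (hq : 0 ≤ q) (hL : 0 < L) (F : E → E)
    (hFmap : ∀ a b : ℝ, amin ≤ a → a < b → b ≤ amax → ∀ x : E,
      N a x ≠ ⊤ → N b (F x) ≠ ⊤)
    (hFlip : ∀ a b : ℝ, amin ≤ a → a < b → b ≤ amax → ∀ x y : E,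
      N a x ≠ ⊤ → N a y ≠ ⊤ →
      N b (F x - F y) ≤ ENNReal.ofReal (L / (b - a) ^ q) * N a (x - y))
    (T : ℝ) (hT : 0 < T) (x₀ : E) (hx₀ : N amin x₀ ≠ ⊤)
    (hq1 : q < 1) :
    ∃ φ : ℝ → E,
      (∀ a : ℝ, amin < a → a < amax → ScaleContOn N a T φ) ∧
      (∀ t ∈ Icc (0 : ℝ) T, Imap F x₀ φ t = φ t) ∧
      (∀ ψ : ℝ → E, (∀ a : ℝ, amin < a → a < amax → ScaleContOn N a T ψ) →
        (∀ t ∈ Icc (0 : ℝ) T, Imap F x₀ ψ t = ψ t) →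
        ∀ t ∈ Icc (0 : ℝ) T, ψ t = φ t) ∧
      (∀ a : ℝ, amin < a → a < amax → ∀ f : ℝ → E, ScaleContOn N amin T f →
        Tendsto (fun n : ℕ => ⨆ t ∈ Icc (0 : ℝ) T, N a ((Imap F x₀)^[n] f t - φ t))
          atTop (nhds 0)) := by
  classical
  have hf₀ : ScaleContOn N amin T (fun _ => x₀) := by
    refine ⟨fun t _ => hx₀, fun t₀ _ => ?_⟩
    simp only [sub_self, hzero amin le_rfl hminmax.le]
    exact tendsto_const_nhds
  set fseq : ℕ → ℝ → E := fun n => (Imap F x₀)^[n] (fun _ => x₀) with hfseqdef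
  have hfc : ∀ (n : ℕ) (b' : ℝ), amin < b' → b' ≤ amax → ScaleContOn N b' T (fseq n) :=
    fun n b' hb1 hb2 =>
      iter_cont htop hmono hzero hadd hsmul hcomplete hq hL hFmap hFlip hT hx₀ hf₀ n b' hb1 hb2
  -- the key uniform Cauchy estimate
  have key : ∀ a : ℝ, amin < a → a < amax → ∃ C : ℕ → ℝ≥0∞,
      (∀ n, C n ≠ ⊤) ∧ Tendsto C atTop (nhds 0) ∧
      ∀ n m : ℕ, 1 ≤ n → n ≤ m → ∀ t ∈ Icc (0:ℝ) T, N a (fseq m t - fseq n t) ≤ C n := by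
    intro a ha1 ha2
    set a' := (amin + a)/2 with ha'def
    have h1 : amin < a' := by rw [ha'def]; linarith
    have h2 : a' < a := by rw [ha'def]; linarith
    have h3 : a ≤ amax := ha2.le
    have ha'max : a' ≤ amax := by linarith
    have hd' : 0 < a - a' := by linarith
    have hf₀' : ScaleContOn N a' T (fun _ => x₀) :=
      ScaleContOn.mono hmono le_rfl h1.le ha'max hf₀
    have hf₁ : ScaleContOn N a' T (fseq 1) := hfc 1 a' h1 ha'max
    obtain ⟨D', hD'fin, hD'⟩ := BDD hadd hsmul h1.le ha'max hf₁ hf₀'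
    have hsumm : Summable (Eseq q L T (a - a')) := Eseq_summable hq hL hT hq1 hd'
    have htail0 : Tendsto (fun n => ∑' k, Eseq q L T (a - a') (k + n)) atTop (nhds 0) :=
      tendsto_sum_nat_add _
    have hx₀' : N a' x₀ ≠ ⊤ := ne_top_of_le_ne_top hx₀ (hmono amin a' le_rfl h1.le ha'max x₀)
    have hstep : ∀ j : ℕ, 1 ≤ j → ∀ t ∈ Icc (0:ℝ) T,
        N a (fseq (j+1) t - fseq j t) ≤ ENNReal.ofReal (Eseq q L T (a - a') j) * D' := by
      intro j hj t ht
      have hrw1 : fseq (j+1) t = (Imap F x₀)^[j] (fseq 1) t := by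
        simp only [hfseqdef]
        rw [Function.iterate_succ_apply, Function.iterate_one]
      have hrw2 : fseq j t = (Imap F x₀)^[j] (fun _ => x₀) t := rfl
      rw [hrw1, hrw2]
      exact iter_est' htop hmono hzero hadd hsmul hcomplete hq hL hFmap hFlip hT
        h1.le h2 h3 j hj hf₁ hf₀' hx₀' D' hD' t ht
    have htel : ∀ n m : ℕ, 1 ≤ n → n ≤ m → ∀ t ∈ Icc (0:ℝ) T,
        N a (fseq m t - fseq n t)
          ≤ ENNReal.ofReal (∑ j ∈ Finset.Ico n m, Eseq q L T (a - a') j) * D' := by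
      intro n m hn hnm
      induction m, hnm using Nat.le_induction with
      | base =>
          intro t ht
          simp only [sub_self, hzero a ha1.le h3]
          exact zero_le
      | succ m hm ih =>
          intro t ht
          calc N a (fseq (m+1) t - fseq n t)
              ≤ N a (fseq (m+1) t - fseq m t) + N a (fseq m t - fseq n t) :=
                Ntri hadd a ha1.le h3 _ _ _
            _ ≤ ENNReal.ofReal (Eseq q L T (a - a') m) * D'
                + ENNReal.ofReal (∑ j ∈ Finset.Ico n m, Eseq q L T (a - a') j) * D' :=
                add_le_add (hstep m (le_trans hn hm) t ht) (ih t ht)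
            _ = ENNReal.ofReal (∑ j ∈ Finset.Ico n (m+1), Eseq q L T (a - a') j) * D' := by
                rw [← add_mul, ← ENNReal.ofReal_add (Eseq_nonneg hL hT hd'.le m)
                  (Finset.sum_nonneg (fun j _ => Eseq_nonneg hL hT hd'.le j))]
                congr 2
                rw [Finset.sum_Ico_succ_top hm]
                ring
    refine ⟨fun n => ENNReal.ofReal (∑' k, Eseq q L T (a - a') (k + n)) * D',
      fun n => ENNReal.mul_ne_top ENNReal.ofReal_ne_top hD'fin, ?_, ?_⟩
    · have h5 : Tendsto (fun n => ENNReal.ofReal (∑' k, Eseq q L T (a - a') (k + n)))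
          atTop (nhds 0) := by
        have := (ENNReal.continuous_ofReal.tendsto 0).comp htail0
        simpa [Function.comp_def] using this
      have h6 := ENNReal.Tendsto.mul_const h5 (Or.inr hD'fin)
      rwa [zero_mul] at h6
    · intro n m hn hnm t ht
      refine le_trans (htel n m hn hnm t ht)
        (mul_le_mul_left (ENNReal.ofReal_le_ofReal ?_) D')
      have hpart : ∑ j ∈ Finset.Ico n m, Eseq q L T (a-a') j
          = ∑ j ∈ Finset.range (m - n), Eseq q L T (a-a') (j + n) := by
        rw [Finset.sum_Ico_eq_sum_range]
        exact Finset.sum_congr rfl (fun j _ => by rw [Nat.add_comm])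
      rw [hpart]
      exact Summable.sum_le_tsum _ (fun j _ => Eseq_nonneg hL hT hd'.le _)
        ((summable_nat_add_iff n).2 hsumm)
  -- pointwise limits
  have hlim : ∀ t ∈ Icc (0:ℝ) T, ∃ x : E, ∀ a, amin < a → a < amax →
      N a x ≠ ⊤ ∧ Tendsto (fun n => N a (fseq n t - x)) atTop (nhds 0) := by
    intro t ht
    have cauchy : ∀ a, amin < a → a < amax → ∀ ε : ℝ≥0∞, 0 < ε →
        ∃ K : ℕ, ∀ m ≥ K, ∀ n ≥ K, N a (fseq m t - fseq n t) < ε := by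
      intro a h1 h2 ε hε
      obtain ⟨C, hCfin, hCtend, hC⟩ := key a h1 h2
      obtain ⟨K₁, hK₁⟩ := eventually_atTop.1 (hCtend.eventually (gt_mem_nhds hε))
      refine ⟨max K₁ 1, fun m hm n hn => ?_⟩
      have hm1 : 1 ≤ m := le_trans (le_max_right _ _) hm
      have hn1 : 1 ≤ n := le_trans (le_max_right _ _) hn
      rcases le_total n m with hnm | hmn
      · exact lt_of_le_of_lt (hC n m hn1 hnm t ht) (hK₁ n (le_trans (le_max_left _ _) hn))
      · rw [show fseq m t - fseq n t = -(fseq n t - fseq m t) by abel,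
          Nneg hsmul a h1.le h2.le]
        exact lt_of_le_of_lt (hC m n hm1 hmn t ht) (hK₁ m (le_trans (le_max_left _ _) hm))
    have ha₀1 : amin < (amin + amax)/2 := by linarith
    have ha₀2 : (amin + amax)/2 < amax := by linarith
    obtain ⟨x, hxfin, hxtend⟩ := hcomplete ((amin + amax)/2) ha₀1.le ha₀2.le
      (fun n => fseq n t) (fun n => (hfc n _ ha₀1 ha₀2.le).1 t ht) (cauchy _ ha₀1 ha₀2)
    refine ⟨x, fun a h1 h2 => ?_⟩
    obtain ⟨y, hyfin, hytend⟩ := hcomplete a h1.le h2.le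
      (fun n => fseq n t) (fun n => (hfc n a h1 h2.le).1 t ht) (cauchy a h1 h2)
    have hxy : y = x := tendsto_nhds_unique
      (amb_lim htop hmono h1.le h2.le hytend)
      (amb_lim htop hmono ha₀1.le ha₀2.le hxtend)
    exact hxy ▸ ⟨hyfin, hytend⟩
  choose! φ hφ using hlim
  -- uniform convergence to φ
  have hunif : ∀ a, amin < a → a < amax → ∃ C : ℕ → ℝ≥0∞, (∀ n, C n ≠ ⊤) ∧
      Tendsto C atTop (nhds 0) ∧
      ∀ n, 1 ≤ n → ∀ t ∈ Icc (0:ℝ) T, N a (fseq n t - φ t) ≤ C n := by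
    intro a h1 h2
    obtain ⟨C, hCfin, hCtend, hC⟩ := key a h1 h2
    refine ⟨C, hCfin, hCtend, fun n hn t ht => ?_⟩
    refine ENNReal.le_of_forall_pos_le_add (fun ε hε hCn => ?_)
    have htendφ := (hφ t ht a h1 h2).2
    obtain ⟨K₁, hK₁⟩ := (ENNReal.tendsto_atTop_zero.1 htendφ) (ε : ℝ≥0∞)
      (by exact_mod_cast hε)
    calc N a (fseq n t - φ t)
        ≤ N a (fseq n t - fseq (max n K₁) t) + N a (fseq (max n K₁) t - φ t) :=
          Ntri hadd a h1.le h2.le _ _ _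
      _ ≤ C n + ε := by
          refine add_le_add ?_ (hK₁ _ (le_max_right _ _))
          rw [show fseq n t - fseq (max n K₁) t
            = -(fseq (max n K₁) t - fseq n t) by abel, Nneg hsmul a h1.le h2.le]
          exact hC n _ hn (le_max_left _ _) t ht
  -- continuity of φ
  have hφcont : ∀ a, amin < a → a < amax → ScaleContOn N a T φ := by
    intro a h1 h2
    obtain ⟨C, hCfin, hCtend, hC⟩ := hunif a h1 h2
    constructor
    · intro t ht
      have h5 : N a (φ t) ≤ N a (φ t - fseq 1 t) + N a (fseq 1 t) := by
        have h6 := Ntri hadd a h1.le h2.le (φ t) 0 (fseq 1 t)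
        simpa [sub_zero] using h6
      refine ne_top_of_le_ne_top ?_ h5
      rw [show φ t - fseq 1 t = -(fseq 1 t - φ t) by abel, Nneg hsmul a h1.le h2.le]
      exact ENNReal.add_ne_top.2 ⟨ne_top_of_le_ne_top (hCfin 1) (hC 1 le_rfl t ht),
        (hfc 1 a h1 h2.le).1 t ht⟩
    · intro t₀ ht₀
      rw [ENNReal.tendsto_nhds_zero]
      intro ε hε
      obtain ⟨e, he, helt⟩ := exists_real_factor ε hε 3 (by norm_num)
      obtain ⟨K₁, hK₁⟩ := (ENNReal.tendsto_atTop_zero.1 hCtend) (ENNReal.ofReal e)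
        (by simp [ENNReal.ofReal_pos, he])
      set n := max K₁ 1 with hndef
      have hn1 : 1 ≤ n := le_max_right _ _
      have hCn : C n ≤ ENNReal.ofReal e := hK₁ n (le_max_left _ _)
      have hev := (ENNReal.tendsto_nhds_zero.1 ((hfc n a h1 h2.le).2 t₀ ht₀))
        (ENNReal.ofReal e) (by simp [ENNReal.ofReal_pos, he])
      filter_upwards [hev, eventually_mem_nhdsWithin] with s hs hsIcc
      calc N a (φ s - φ t₀)
          ≤ N a (φ s - fseq n s) + N a (fseq n s - φ t₀) :=
            Ntri hadd a h1.le h2.le _ _ _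
        _ ≤ N a (φ s - fseq n s)
            + (N a (fseq n s - fseq n t₀) + N a (fseq n t₀ - φ t₀)) :=
            add_le_add le_rfl (Ntri hadd a h1.le h2.le _ _ _)
        _ ≤ ENNReal.ofReal e + (ENNReal.ofReal e + ENNReal.ofReal e) := by
            refine add_le_add ?_ (add_le_add hs (le_trans (hC n hn1 t₀ ht₀) hCn))
            rw [show φ s - fseq n s = -(fseq n s - φ s) by abel,
              Nneg hsmul a h1.le h2.le]
            exact le_trans (hC n hn1 s hsIcc) hCn
        _ = ENNReal.ofReal (3 * e) := by
            rw [← ENNReal.ofReal_add he.le he.le, ← ENNReal.ofReal_add he.le (by linarith)]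
            congr 1; ring
        _ ≤ ε := helt.le
  -- fixed levels for the remaining arguments
  have ha₀1 : amin < (amin + amax)/2 := by linarith
  have ha₀2 : (amin + amax)/2 < amax := by linarith
  have ha₁1 : amin < (3*amin + amax)/4 := by linarith
  have ha₁2 : (3*amin + amax)/4 < amax := by linarith
  have ha₁₀ : (3*amin + amax)/4 < (amin + amax)/2 := by linarith
  set a₀ := (amin + amax)/2
  set a₁ := (3*amin + amax)/4
  have hx₀₁ : N a₁ x₀ ≠ ⊤ :=
    ne_top_of_le_ne_top hx₀ (hmono amin a₁ le_rfl ha₁1.le ha₁2.le x₀)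
  -- the fixed point property
  have hfix : ∀ t ∈ Icc (0:ℝ) T, Imap F x₀ φ t = φ t := by
    obtain ⟨C₀, hC₀fin, hC₀tend, hC₀⟩ := hunif a₀ ha₀1 ha₀2
    obtain ⟨C₁, hC₁fin, hC₁tend, hC₁⟩ := hunif a₁ ha₁1 ha₁2
    intro t ht
    have hz : N a₀ (Imap F x₀ φ t - φ t) = 0 := by
      have hb : ∀ n : ℕ, 1 ≤ n → N a₀ (Imap F x₀ φ t - φ t) ≤
          ENNReal.ofReal (Eseq q L T (a₀ - a₁) 1) * C₁ n + C₀ (n+1) := by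
        intro n hn
        have hflip : ∀ s ∈ Icc (0:ℝ) T, N a₁ (φ s - fseq n s) ≤ C₁ n := by
          intro s hs
          rw [show φ s - fseq n s = -(fseq n s - φ s) by abel,
            Nneg hsmul a₁ ha₁1.le ha₁2.le]
          exact hC₁ n hn s hs
        have hstep1 := iter_est' htop hmono hzero hadd hsmul hcomplete hq hL hFmap hFlip hT
          ha₁1.le ha₁₀ ha₀2.le 1 one_pos (hφcont a₁ ha₁1 ha₁2) (hfc n a₁ ha₁1 ha₁2.le)
          hx₀₁ (C₁ n) hflip t ht
        have hstep2 : N a₀ (fseq (n+1) t - φ t) ≤ C₀ (n+1) := hC₀ (n+1) (by omega) t ht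
        have hrw : Imap F x₀ (fseq n) t = fseq (n+1) t := by
          simp only [hfseqdef]
          rw [Function.iterate_succ_apply']
        calc N a₀ (Imap F x₀ φ t - φ t)
            ≤ N a₀ (Imap F x₀ φ t - Imap F x₀ (fseq n) t)
              + N a₀ (Imap F x₀ (fseq n) t - φ t) := Ntri hadd a₀ ha₀1.le ha₀2.le _ _ _
          _ ≤ ENNReal.ofReal (Eseq q L T (a₀ - a₁) 1) * C₁ n + C₀ (n+1) := by
              refine add_le_add hstep1 ?_
              rw [hrw]
              exact hstep2
      have htends : Tendsto (fun n : ℕ =>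
          ENNReal.ofReal (Eseq q L T (a₀ - a₁) 1) * C₁ n + C₀ (n+1)) atTop (nhds 0) := by
        have t1 : Tendsto (fun n : ℕ => ENNReal.ofReal (Eseq q L T (a₀ - a₁) 1) * C₁ n)
            atTop (nhds 0) := by
          have h7 : Tendsto (fun n : ℕ => ENNReal.ofReal (Eseq q L T (a₀ - a₁) 1) * C₁ n)
              atTop (nhds (ENNReal.ofReal (Eseq q L T (a₀ - a₁) 1) * 0)) :=
            ENNReal.Tendsto.const_mul hC₁tend (Or.inr ENNReal.ofReal_ne_top)
          rwa [mul_zero] at h7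
        have t2 : Tendsto (fun n : ℕ => C₀ (n+1)) atTop (nhds 0) :=
          hC₀tend.comp (tendsto_add_atTop_nat 1)
        have := t1.add t2
        rwa [add_zero] at this
      exact le_antisymm (ge_of_tendsto htends (eventually_atTop.2 ⟨1, hb⟩)) (zero_le)
    have := Ndef htop hmono a₀ ha₀1.le ha₀2.le hz
    exact sub_eq_zero.1 this
  -- uniqueness
  have huniq : ∀ ψ : ℝ → E, (∀ a : ℝ, amin < a → a < amax → ScaleContOn N a T ψ) →
      (∀ t ∈ Icc (0:ℝ) T, Imap F x₀ ψ t = ψ t) →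
      ∀ t ∈ Icc (0:ℝ) T, ψ t = φ t := by
    intro ψ hψc hψfix
    have hiterfix : ∀ (g : ℝ → E), (∀ t ∈ Icc (0:ℝ) T, Imap F x₀ g t = g t) →
        ∀ n : ℕ, ∀ t ∈ Icc (0:ℝ) T, (Imap F x₀)^[n] g t = g t := by
      intro g hg n
      induction n with
      | zero => intro t ht; rfl
      | succ n ih =>
          intro t ht
          rw [Function.iterate_succ_apply]
          rw [iter_congr hT n hg t ht]
          exact ih t ht
    intro t ht
    obtain ⟨D, hDfin, hD⟩ := BDD hadd hsmul ha₁1.le ha₁2.le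
      (hψc a₁ ha₁1 ha₁2) (hφcont a₁ ha₁1 ha₁2)
    have hsumm : Summable (Eseq q L T (a₀ - a₁)) :=
      Eseq_summable hq hL hT hq1 (by dsimp only [a₀, a₁]; linarith)
    have hest : ∀ n : ℕ, 1 ≤ n →
        N a₀ (ψ t - φ t) ≤ ENNReal.ofReal (Eseq q L T (a₀ - a₁) n) * D := by
      intro n hn
      have h5 := iter_est' htop hmono hzero hadd hsmul hcomplete hq hL hFmap hFlip hT
        ha₁1.le ha₁₀ ha₀2.le n hn (hψc a₁ ha₁1 ha₁2) (hφcont a₁ ha₁1 ha₁2)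
        hx₀₁ D hD t ht
      rwa [hiterfix ψ hψfix n t ht, hiterfix φ hfix n t ht] at h5
    have htends : Tendsto (fun n : ℕ => ENNReal.ofReal (Eseq q L T (a₀ - a₁) n) * D)
        atTop (nhds 0) := by
      have t1 : Tendsto (fun n => ENNReal.ofReal (Eseq q L T (a₀ - a₁) n)) atTop (nhds 0) := by
        have := (ENNReal.continuous_ofReal.tendsto 0).comp hsumm.tendsto_atTop_zero
        simpa [Function.comp_def] using this
      have := ENNReal.Tendsto.mul_const t1 (Or.inr hDfin)
      rwa [zero_mul] at this
    have hz : N a₀ (ψ t - φ t) = 0 :=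
      le_antisymm (ge_of_tendsto htends (eventually_atTop.2 ⟨1, hest⟩)) (zero_le)
    exact sub_eq_zero.1 (Ndef htop hmono a₀ ha₀1.le ha₀2.le hz)
  -- convergence of the iterates
  refine ⟨φ, hφcont, hfix, huniq, ?_⟩
  intro a h1 h2 f hf
  obtain ⟨C, hCfin, hCtend, hC⟩ := hunif a h1 h2
  obtain ⟨D, hDfin, hD⟩ := BDD hadd hsmul le_rfl hminmax.le hf hf₀
  have hsumm : Summable (Eseq q L T (a - amin)) :=
    Eseq_summable hq hL hT hq1 (by linarith)
  have hbnd : ∀ n : ℕ, 1 ≤ n → (⨆ t ∈ Icc (0:ℝ) T, N a ((Imap F x₀)^[n] f t - φ t))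
      ≤ ENNReal.ofReal (Eseq q L T (a - amin) n) * D + C n := by
    intro n hn
    refine iSup₂_le (fun t ht => ?_)
    calc N a ((Imap F x₀)^[n] f t - φ t)
        ≤ N a ((Imap F x₀)^[n] f t - fseq n t) + N a (fseq n t - φ t) :=
          Ntri hadd a h1.le h2.le _ _ _
      _ ≤ ENNReal.ofReal (Eseq q L T (a - amin) n) * D + C n :=
          add_le_add
            (iter_est' htop hmono hzero hadd hsmul hcomplete hq hL hFmap hFlip hT
              le_rfl h1 h2.le n hn hf hf₀ hx₀ D hD t ht)
            (hC n hn t ht)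
  have h0 : Tendsto (fun n : ℕ => ENNReal.ofReal (Eseq q L T (a - amin) n) * D + C n)
      atTop (nhds 0) := by
    have t1 : Tendsto (fun n => ENNReal.ofReal (Eseq q L T (a - amin) n)) atTop (nhds 0) := by
      have := (ENNReal.continuous_ofReal.tendsto 0).comp hsumm.tendsto_atTop_zero
      simpa [Function.comp_def] using this
    have t2 := ENNReal.Tendsto.mul_const t1 (Or.inr hDfin)
    rw [zero_mul] at t2
    have := t2.add hCtend
    rwa [add_zero] at this
  refine tendsto_of_tendsto_of_tendsto_of_le_of_le' tendsto_const_nhds h0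
    (Eventually.of_forall (fun n => zero_le)) ?_
  exact eventually_atTop.2 ⟨1, hbnd⟩
end
end

section
/- Let {X_𝔞}_{𝔞∈[𝔞₋,𝔞₊]} be a scale of Banach spaces, let F be an Ovsjannikov map of order q with 0 ≤ q < 1 and constant L > 0, and fix T > 0 and x₀ ∈ X_{𝔞₋}. Then there exists a unique map f : [0,T] → ⋂_{𝔞∈(𝔞₋,𝔞₊)} X_𝔞 such that for every 𝔞 ∈ (𝔞₋, 𝔞₊) the map f : [0,T] → X_𝔞 is continuous and f(t) = x₀ + ∫₀ᵗ F(f(s)) ds for all t ∈ [0,T], the integral being a Bochner integral in X_𝔞. -/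
open MeasureTheory Set Filter ENNReal

noncomputable section

namespace Statement14Aux

variable {E : Type*} [NormedAddCommGroup E] [NormedSpace ℝ E] [CompleteSpace E]

structure Setup (E : Type*) [NormedAddCommGroup E] [NormedSpace ℝ E] [CompleteSpace E] where
  amin : ℝ
  amax : ℝ
  hamin : 0 < amin
  hminmax : amin < amax
  N : ℝ → E → ℝ≥0∞
  htop : ∀ x : E, N amax x = (‖x‖₊ : ℝ≥0∞)
  hmono : ∀ a b : ℝ, amin ≤ a → a ≤ b → b ≤ amax → ∀ x : E, N b x ≤ N a x
  hzero : ∀ a : ℝ, amin ≤ a → a ≤ amax → N a 0 = 0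
  hadd : ∀ a : ℝ, amin ≤ a → a ≤ amax → ∀ x y : E, N a (x + y) ≤ N a x + N a y
  hsmul : ∀ a : ℝ, amin ≤ a → a ≤ amax → ∀ (c : ℝ) (x : E),
      N a (c • x) = (‖c‖₊ : ℝ≥0∞) * N a x
  hcomplete : ∀ a : ℝ, amin ≤ a → a ≤ amax → ∀ u : ℕ → E,
      (∀ n, N a (u n) ≠ ⊤) →
      (∀ ε : ℝ≥0∞, 0 < ε → ∃ K : ℕ, ∀ m ≥ K, ∀ n ≥ K, N a (u m - u n) < ε) →
      ∃ x : E, N a x ≠ ⊤ ∧ Tendsto (fun n => N a (u n - x)) atTop (nhds 0)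
  q : ℝ
  L : ℝ
  hq : 0 ≤ q
  hq1 : q < 1
  hL : 0 < L
  F : E → E
  hFmap : ∀ a b : ℝ, amin ≤ a → a < b → b ≤ amax → ∀ x : E,
      N a x ≠ ⊤ → N b (F x) ≠ ⊤
  hFlip : ∀ a b : ℝ, amin ≤ a → a < b → b ≤ amax → ∀ x y : E,
      N a x ≠ ⊤ → N a y ≠ ⊤ →
      N b (F x - F y) ≤ ENNReal.ofReal (L / (b - a) ^ q) * N a (x - y)
  T : ℝ
  hT : 0 < T
  x₀ : E
  hx₀ : N amin x₀ ≠ ⊤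


private lemma sum_range_mul' {M : Type*} [AddCommMonoid M] (f : ℕ → M) (n m : ℕ) :
    ∑ i ∈ Finset.range (n*m), f i
      = ∑ k ∈ Finset.range n, ∑ j ∈ Finset.range m, f (k*m + j) := by
  induction n with
  | zero => simp
  | succ n ih =>
      have e : (n+1) * m = n*m + m := by ring
      rw [e, Finset.sum_range_add, ih, Finset.sum_range_succ]

namespace Setup

variable (S : Setup E)

lemma N_neg {a : ℝ} (ha : S.amin ≤ a) (ha' : a ≤ S.amax) (x : E) : S.N a (-x) = S.N a x := by
  have h := S.hsmul a ha ha' (-1) x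
  simpa using h

lemma N_sub_comm {a : ℝ} (ha : S.amin ≤ a) (ha' : a ≤ S.amax) (x y : E) :
    S.N a (x - y) = S.N a (y - x) := by
  rw [← neg_sub, S.N_neg ha ha']

lemma N_tri {a : ℝ} (ha : S.amin ≤ a) (ha' : a ≤ S.amax) (x y z : E) :
    S.N a (x - z) ≤ S.N a (x - y) + S.N a (y - z) := by
  have h := S.hadd a ha ha' (x - y) (y - z)
  simpa using h

lemma N_sub_le {a : ℝ} (ha : S.amin ≤ a) (ha' : a ≤ S.amax) (x y : E) :
    S.N a (x - y) ≤ S.N a x + S.N a y := by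
  have h := S.hadd a ha ha' x (-y)
  rw [S.N_neg ha ha'] at h
  simpa [sub_eq_add_neg] using h

lemma norm_le_N {a : ℝ} (ha : S.amin ≤ a) (ha' : a ≤ S.amax) (x : E) :
    (‖x‖₊ : ℝ≥0∞) ≤ S.N a x := by
  rw [← S.htop x]
  exact S.hmono a S.amax ha ha' le_rfl x

lemma N_sum_le {a : ℝ} (ha : S.amin ≤ a) (ha' : a ≤ S.amax) {ι : Type*} (s : Finset ι)
    (f : ι → E) : S.N a (∑ i ∈ s, f i) ≤ ∑ i ∈ s, S.N a (f i) := by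
  classical
  induction s using Finset.induction with
  | empty => simp [S.hzero a ha ha']
  | insert c s' hx ih =>
      rw [Finset.sum_insert hx, Finset.sum_insert hx]
      exact le_trans (S.hadd a ha ha' _ _) (add_le_add_right ih _)

/-- Uniform continuity in norm `N a` on `[0,T]`, in `ofReal` form. -/
def UC (a : ℝ) (g : ℝ → E) : Prop :=
  ∀ r : ℝ, 0 < r → ∃ δ > (0:ℝ), ∀ s ∈ Icc (0:ℝ) S.T, ∀ t ∈ Icc (0:ℝ) S.T,
    |s - t| < δ → S.N a (g s - g t) ≤ ENNReal.ofReal r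

def Good (a : ℝ) (g : ℝ → E) : Prop :=
  (∀ t ∈ Icc (0:ℝ) S.T, S.N a (g t) ≠ ⊤) ∧ S.UC a g

lemma UC.ennreal {a : ℝ} {g : ℝ → E} (h : S.UC a g) :
    ∀ ε : ℝ≥0∞, 0 < ε → ∃ δ > (0:ℝ), ∀ s ∈ Icc (0:ℝ) S.T, ∀ t ∈ Icc (0:ℝ) S.T,
      |s - t| < δ → S.N a (g s - g t) < ε := by
  intro ε hε
  rcases eq_or_ne ε ⊤ with rfl | hne
  · obtain ⟨δ, hδ, H⟩ := h 1 one_pos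
    exact ⟨δ, hδ, fun s hs t ht hst =>
      lt_of_le_of_lt (H s hs t ht hst) (by simp [ENNReal.ofReal_lt_top])⟩
  · have hpos : 0 < ε.toReal := ENNReal.toReal_pos hε.ne' hne
    obtain ⟨δ, hδ, H⟩ := h (ε.toReal / 2) (by positivity)
    refine ⟨δ, hδ, fun s hs t ht hst => lt_of_le_of_lt (H s hs t ht hst) ?_⟩
    calc ENNReal.ofReal (ε.toReal / 2) < ENNReal.ofReal ε.toReal := by
          rw [ENNReal.ofReal_lt_ofReal_iff hpos]; linarith
      _ = ε := ENNReal.ofReal_toReal hne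

lemma Good.contOn {a : ℝ} {g : ℝ → E} (ha : S.amin ≤ a) (ha' : a ≤ S.amax)
    (h : S.Good a g) : ContinuousOn g (Icc (0:ℝ) S.T) := by
  intro t ht
  rw [ContinuousWithinAt, Metric.tendsto_nhdsWithin_nhds]
  intro ε hε
  obtain ⟨δ, hδ, H⟩ := h.2 (ε / 2) (by positivity)
  refine ⟨δ, hδ, fun x hx hxt => ?_⟩
  have h1 : (‖g x - g t‖₊ : ℝ≥0∞) ≤ ENNReal.ofReal (ε/2) := by
    refine le_trans (S.norm_le_N ha ha' _) (H x hx t ht ?_)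
    rwa [Real.dist_eq] at hxt
  rw [← enorm_eq_nnnorm, ← ofReal_norm, ENNReal.ofReal_le_ofReal_iff (by positivity)] at h1
  rw [dist_eq_norm]
  linarith

lemma Good.mono {a b : ℝ} {g : ℝ → E} (h : S.Good a g) (ha : S.amin ≤ a) (hab : a ≤ b)
    (hb : b ≤ S.amax) : S.Good b g := by
  refine ⟨fun t ht => ?_, fun r hr => ?_⟩
  · exact fun htop => h.1 t ht (top_le_iff.mp (htop ▸ S.hmono a b ha hab hb _))
  · obtain ⟨δ, hδ, H⟩ := h.2 r hr
    exact ⟨δ, hδ, fun s hs t ht hst =>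
      le_trans (S.hmono a b ha hab hb _) (H s hs t ht hst)⟩

lemma good_const {a : ℝ} (ha : S.amin ≤ a) (ha' : a ≤ S.amax) {x : E} (hx : S.N a x ≠ ⊤) :
    S.Good a (fun _ => x) := by
  refine ⟨fun t _ => hx, fun r hr => ⟨1, one_pos, fun s _ t _ _ => ?_⟩⟩
  simp [S.hzero a ha ha']

lemma Good.sub {a : ℝ} {g h : ℝ → E} (hg : S.Good a g) (hh : S.Good a h)
    (ha : S.amin ≤ a) (ha' : a ≤ S.amax) : S.Good a (fun t => g t - h t) := by
  constructor
  · intro t ht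
    exact fun htop => (ENNReal.add_ne_top.2 ⟨hg.1 t ht, hh.1 t ht⟩)
      (top_le_iff.mp (htop ▸ S.N_sub_le ha ha' _ _))
  · intro r hr
    obtain ⟨δ1, hδ1, H1⟩ := hg.2 (r/2) (by positivity)
    obtain ⟨δ2, hδ2, H2⟩ := hh.2 (r/2) (by positivity)
    refine ⟨min δ1 δ2, lt_min hδ1 hδ2, fun s hs t ht hst => ?_⟩
    have key : g s - h s - (g t - h t) = (g s - g t) - (h s - h t) := by abel
    rw [key]
    calc S.N a ((g s - g t) - (h s - h t))
        ≤ S.N a (g s - g t) + S.N a (h s - h t) := S.N_sub_le ha ha' _ _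
      _ ≤ ENNReal.ofReal (r/2) + ENNReal.ofReal (r/2) := by
          exact add_le_add (H1 s hs t ht (lt_of_lt_of_le hst (min_le_left _ _)))
            (H2 s hs t ht (lt_of_lt_of_le hst (min_le_right _ _)))
      _ = ENNReal.ofReal r := by
          rw [← ENNReal.ofReal_add (by positivity) (by positivity)]; ring_nf

lemma Good.compF {a b : ℝ} {g : ℝ → E} (ha : S.amin ≤ a) (hab : a < b) (hb : b ≤ S.amax)
    (h : S.Good a g) : S.Good b (fun t => S.F (g t)) := by
  have hc : 0 < S.L / (b - a) ^ S.q := by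
    apply div_pos S.hL (Real.rpow_pos_of_pos (by linarith) _)
  constructor
  · exact fun t ht => S.hFmap a b ha hab hb _ (h.1 t ht)
  · intro r hr
    obtain ⟨δ, hδ, H⟩ := h.2 (r / (S.L / (b - a) ^ S.q)) (by positivity)
    refine ⟨δ, hδ, fun s hs t ht hst => ?_⟩
    calc S.N b (S.F (g s) - S.F (g t))
        ≤ ENNReal.ofReal (S.L / (b - a) ^ S.q) * S.N a (g s - g t) :=
          S.hFlip a b ha hab hb _ _ (h.1 s hs) (h.1 t ht)
      _ ≤ ENNReal.ofReal (S.L / (b - a) ^ S.q) *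
            ENNReal.ofReal (r / (S.L / (b - a) ^ S.q)) :=
          mul_le_mul_right (H s hs t ht hst) _
      _ = ENNReal.ofReal r := by
          rw [← ENNReal.ofReal_mul hc.le]
          congr 1
          rw [mul_comm]
          exact div_mul_cancel₀ r hc.ne'

lemma Good.bound {a : ℝ} {g : ℝ → E} (ha : S.amin ≤ a) (ha' : a ≤ S.amax)
    (h : S.Good a g) :
    ∃ M : ℝ, 0 ≤ M ∧ ∀ t ∈ Icc (0:ℝ) S.T, S.N a (g t) ≤ ENNReal.ofReal M := by
  obtain ⟨δ, hδ, H⟩ := h.2 1 one_pos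
  have h0 : (0:ℝ) ∈ Icc (0:ℝ) S.T := ⟨le_rfl, S.hT.le⟩
  have key : ∀ j : ℕ, ∀ t ∈ Icc (0:ℝ) S.T, t ≤ j * (δ/2) →
      S.N a (g t) ≤ S.N a (g 0) + j := by
    intro j
    induction j with
    | zero =>
        intro t ht hle
        have : t = 0 := le_antisymm (by simpa using hle) ht.1
        simp [this]
    | succ j ih =>
        intro t ht hle
        rcases le_or_gt t (j * (δ/2)) with hc | hc
        · refine le_trans (ih t ht hc) ?_
          gcongr
          exact_mod_cast Nat.le_succ j
        · set t' := max 0 (t - δ/2) with ht'def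
          have ht'mem : t' ∈ Icc (0:ℝ) S.T :=
            ⟨le_max_left _ _, max_le (S.hT.le) (by linarith [ht.2])⟩
          have ht'le : t' ≤ j * (δ/2) := by
            apply max_le
            · positivity
            · push_cast at hle ⊢; linarith
          have hdist : |t - t'| < δ := by
            rw [abs_lt]
            constructor
            · have : t' ≤ t := max_le ht.1 (by linarith)
              linarith
            · have : t - δ/2 ≤ t' := le_max_right _ _
              linarith
          calc S.N a (g t) ≤ S.N a (g t - g t') + S.N a (g t') := by
                have := S.hadd a ha ha' (g t - g t') (g t')
                simpa using this
            _ ≤ ENNReal.ofReal 1 + (S.N a (g 0) + j) :=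
                add_le_add (H t ht t' ht'mem hdist) (ih t' ht'mem ht'le)
            _ = S.N a (g 0) + (j+1 : ℕ) := by
                rw [ENNReal.ofReal_one]
                push_cast
                ring
  set j := Nat.ceil (S.T / (δ/2)) with hj
  have hTj : S.T ≤ j * (δ/2) := by
    rw [hj]
    rw [← div_le_iff₀ (by positivity)]
    exact Nat.le_ceil _
  have hfin : S.N a (g 0) ≠ ⊤ := h.1 0 h0
  refine ⟨(S.N a (g 0)).toReal + j, by positivity, fun t ht => ?_⟩
  calc S.N a (g t) ≤ S.N a (g 0) + j := key j t ht (le_trans ht.2 hTj)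
    _ = ENNReal.ofReal ((S.N a (g 0)).toReal + j) := by
        rw [ENNReal.ofReal_add ENNReal.toReal_nonneg (by positivity),
          ENNReal.ofReal_toReal hfin, ENNReal.ofReal_natCast]



lemma uc_of_cont {a : ℝ} {g : ℝ → E} (ha : S.amin ≤ a) (ha' : a ≤ S.amax)
    (h : ∀ t₀ ∈ Icc (0:ℝ) S.T, Tendsto (fun t => S.N a (g t - g t₀))
      (nhdsWithin t₀ (Icc (0:ℝ) S.T)) (nhds 0)) : S.UC a g := by
  intro r hr
  have H : ∀ t₀ : ℝ, ∃ δ > (0:ℝ), t₀ ∈ Icc (0:ℝ) S.T → ∀ t ∈ Icc (0:ℝ) S.T,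
      |t - t₀| < δ → S.N a (g t - g t₀) ≤ ENNReal.ofReal (r/2) := by
    intro t₀
    by_cases ht₀ : t₀ ∈ Icc (0:ℝ) S.T
    · have h2 := (ENNReal.tendsto_nhds_zero.mp (h t₀ ht₀)) (ENNReal.ofReal (r/2))
        (ENNReal.ofReal_pos.mpr (by positivity))
      rw [eventually_iff, Metric.mem_nhdsWithin_iff] at h2
      obtain ⟨ε, hε, hsub⟩ := h2
      exact ⟨ε, hε, fun _ t ht hdist =>
        hsub ⟨by rwa [Metric.mem_ball, Real.dist_eq], ht⟩⟩
    · exact ⟨1, one_pos, fun h' => absurd h' ht₀⟩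
  choose δf hδf Hf using H
  obtain ⟨s, hs_mem, hs_cov⟩ := (isCompact_Icc (a := (0:ℝ)) (b := S.T)).elim_nhds_subcover
    (fun t₀ => Metric.ball t₀ (δf t₀ / 2))
    (fun t₀ _ => Metric.ball_mem_nhds t₀ (by linarith [hδf t₀]))
  have h0T : (0:ℝ) ∈ Icc (0:ℝ) S.T := ⟨le_rfl, S.hT.le⟩
  have hs_ne : s.Nonempty := by
    rcases mem_iUnion₂.mp (hs_cov h0T) with ⟨x, hx, _⟩
    exact ⟨x, hx⟩
  set δ := s.inf' hs_ne (fun x => δf x / 2) with hδdef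
  have hδpos : 0 < δ := by
    rw [hδdef, Finset.lt_inf'_iff]
    intro i _
    linarith [hδf i]
  refine ⟨δ, hδpos, fun u hu t ht hst => ?_⟩
  rcases mem_iUnion₂.mp (hs_cov hu) with ⟨t₀, ht₀s, hball⟩
  have ht₀ : t₀ ∈ Icc (0:ℝ) S.T := hs_mem t₀ ht₀s
  have h1 : |u - t₀| < δf t₀ / 2 := by
    rw [Metric.mem_ball, Real.dist_eq] at hball
    exact hball
  have hδle : δ ≤ δf t₀ / 2 := Finset.inf'_le _ ht₀s
  have h2 : |t - t₀| < δf t₀ := by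
    calc |t - t₀| ≤ |t - u| + |u - t₀| := abs_sub_le _ _ _
      _ < δ + δf t₀ / 2 := by
          rw [abs_sub_comm]
          exact add_lt_add_of_lt_of_le hst h1.le
      _ ≤ δf t₀ := by linarith
  calc S.N a (g u - g t)
      ≤ S.N a (g u - g t₀) + S.N a (g t₀ - g t) := S.N_tri ha ha' _ _ _
    _ ≤ ENNReal.ofReal (r/2) + ENNReal.ofReal (r/2) := by
        refine add_le_add (Hf t₀ ht₀ u hu (lt_of_lt_of_le h1 (by linarith))) ?_
        rw [S.N_sub_comm ha ha']
        exact Hf t₀ ht₀ t ht h2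
    _ = ENNReal.ofReal r := by
        rw [← ENNReal.ofReal_add (by positivity) (by positivity)]
        ring_nf



lemma integral_bound {a : ℝ} (ha : S.amin ≤ a) (ha' : a ≤ S.amax)
    {g : ℝ → E} (hg : S.Good a g) {s t : ℝ} (hs : 0 ≤ s) (hst : s ≤ t) (htT : t ≤ S.T)
    {φ : ℝ → ℝ} (hφ0 : ∀ u ∈ Icc s t, 0 ≤ φ u)
    (hφ : ∀ u ∈ Icc s t, S.N a (g u) ≤ ENNReal.ofReal (φ u))
    {J : ℝ}
    (hJ : ∀ n : ℕ, 0 < n →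
      ∑ k ∈ Finset.range n, ((t - s)/n) * φ (s + k * ((t-s)/n)) ≤ J) :
    S.N a (∫ u in s..t, g u) ≤ ENNReal.ofReal J := by
  rcases eq_or_lt_of_le hst with rfl | hlt
  · rw [intervalIntegral.integral_same, S.hzero a ha ha']
    exact zero_le
  have hh : (0:ℝ) < t - s := by linarith
  set h : ℝ := t - s with hhdef
  have hJ0 : 0 ≤ J := by
    have h1 := hJ 1 one_pos
    have h2 : s + (0:ℕ) * (h/(1:ℕ)) ∈ Icc s t := by
      simp only [Nat.cast_zero, zero_mul, add_zero]
      exact ⟨le_rfl, hst⟩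
    have h3 := hφ0 _ h2
    simp only [Finset.range_one, Finset.sum_singleton, Nat.cast_zero, Nat.cast_one] at h1
    rw [hhdef] at *
    nlinarith
  have hIccsub : Icc s t ⊆ Icc (0:ℝ) S.T :=
    fun u hu => ⟨le_trans hs hu.1, le_trans hu.2 htT⟩
  -- sample points
  have hpt_mem : ∀ n : ℕ, 0 < n → ∀ k : ℕ, k ≤ n → s + k * (h/n) ∈ Icc s t := by
    intro n hn k hk
    have hn' : (0:ℝ) < n := by exact_mod_cast hn
    constructor
    · have : (0:ℝ) ≤ k * (h/n) := by positivity
      linarith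
    · have h1 : (k:ℝ) * (h/n) ≤ n * (h/n) := by
        apply mul_le_mul_of_nonneg_right _ (by positivity)
        exact_mod_cast hk
      have h2 : (n:ℝ) * (h/n) = h := by field_simp
      rw [hhdef] at h1 h2 ⊢
      nlinarith
  set Sm : ℕ → E := fun n => ∑ k ∈ Finset.range n, (h/(n:ℝ)) • g (s + k * (h/n)) with hSmdef
  -- (i) uniform bound
  have hSm_le : ∀ n : ℕ, 0 < n → S.N a (Sm n) ≤ ENNReal.ofReal J := by
    intro n hn
    have hn' : (0:ℝ) < n := by exact_mod_cast hn
    calc S.N a (Sm n) ≤ ∑ k ∈ Finset.range n, S.N a ((h/(n:ℝ)) • g (s + k * (h/n))) :=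
          S.N_sum_le ha ha' _ _
      _ ≤ ∑ k ∈ Finset.range n, ENNReal.ofReal ((h/n) * φ (s + k * (h/n))) := by
          apply Finset.sum_le_sum
          intro k hk
          have hkm : s + k * (h/n) ∈ Icc s t :=
            hpt_mem n hn k (Finset.mem_range.mp hk).le
          rw [S.hsmul a ha ha', ← enorm_eq_nnnorm, Real.enorm_eq_ofReal (by positivity),
            ENNReal.ofReal_mul (by positivity)]
          exact mul_le_mul_right (hφ _ hkm) _
      _ = ENNReal.ofReal (∑ k ∈ Finset.range n, (h/n) * φ (s + k * (h/n))) := by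
          rw [ENNReal.ofReal_sum_of_nonneg]
          intro k hk
          have hkm := hpt_mem n hn k (Finset.mem_range.mp hk).le
          have := hφ0 _ hkm
          positivity
      _ ≤ ENNReal.ofReal J := ENNReal.ofReal_le_ofReal (hJ n hn)
  have hSm_fin : ∀ n : ℕ, S.N a (Sm n) ≠ ⊤ := by
    intro n
    rcases Nat.eq_zero_or_pos n with rfl | hn
    · simp only [hSmdef, Finset.range_zero, Finset.sum_empty]
      rw [S.hzero a ha ha']
      exact ENNReal.zero_ne_top
    · exact (lt_of_le_of_lt (hSm_le n hn) ENNReal.ofReal_lt_top).ne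
  -- (ii) refinement estimate
  have hRef : ∀ r : ℝ, 0 < r → ∃ δ > (0:ℝ), ∀ n m : ℕ, 0 < n → 0 < m → h / n < δ →
      S.N a (Sm n - Sm (n*m)) ≤ ENNReal.ofReal (h * r) := by
    intro r hr
    obtain ⟨δ, hδ, H⟩ := hg.2 r hr
    refine ⟨δ, hδ, fun n m hn hm hlt' => ?_⟩
    have hn' : (0:ℝ) < n := by exact_mod_cast hn
    have hm' : (0:ℝ) < m := by exact_mod_cast hm
    have hnm : 0 < n * m := Nat.mul_pos hn hm
    have hnm' : (0:ℝ) < ((n*m : ℕ) : ℝ) := by exact_mod_cast hnm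
    have hcast : ((n*m : ℕ) : ℝ) = (n:ℝ) * m := by push_cast; ring
    have e1 : Sm n = ∑ k ∈ Finset.range n, ∑ j ∈ Finset.range m,
        (h/((n*m : ℕ):ℝ)) • g (s + k * (h/n)) := by
      simp only [hSmdef]
      apply Finset.sum_congr rfl
      intro k _
      rw [Finset.sum_const, Finset.card_range, ← Nat.cast_smul_eq_nsmul ℝ, smul_smul]
      congr 1
      rw [hcast]
      field_simp
    have e2 : Sm (n*m) = ∑ k ∈ Finset.range n, ∑ j ∈ Finset.range m,
        (h/((n*m : ℕ):ℝ)) • g (s + ((k*m+j : ℕ):ℝ) * (h/((n*m : ℕ):ℝ))) := by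
      simp only [hSmdef]
      exact sum_range_mul' (fun i => (h/((n*m : ℕ):ℝ)) • g (s + (i:ℝ) * (h/((n*m : ℕ):ℝ)))) n m
    have key : ∀ k ∈ Finset.range n, ∀ j ∈ Finset.range m,
        S.N a (g (s + k * (h/n)) - g (s + ((k*m+j : ℕ):ℝ) * (h/((n*m : ℕ):ℝ))))
          ≤ ENNReal.ofReal r := by
      intro k hk j hj
      have hkn := (Finset.mem_range.mp hk)
      have hjm := (Finset.mem_range.mp hj)
      have hmem1 : s + k * (h/n) ∈ Icc (0:ℝ) S.T :=
        hIccsub (hpt_mem n hn k hkn.le)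
      have hmem2 : s + ((k*m+j : ℕ):ℝ) * (h/((n*m : ℕ):ℝ)) ∈ Icc (0:ℝ) S.T := by
        apply hIccsub
        apply hpt_mem (n*m) hnm (k*m+j)
        calc k*m+j ≤ k*m + m := by omega
          _ ≤ n*m := by
              have : k+1 ≤ n := hkn
              calc k*m+m = (k+1)*m := by ring
                _ ≤ n*m := Nat.mul_le_mul_right m hkn
      apply H _ hmem1 _ hmem2
      have expand : (k:ℝ) * (h/n) = ((k*m : ℕ):ℝ) * (h/((n*m : ℕ):ℝ)) := by
        rw [hcast]
        push_cast
        field_simp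
      have ediff : s + (k:ℝ) * (h/n) - (s + ((k*m+j : ℕ):ℝ) * (h/((n*m : ℕ):ℝ)))
          = -((j:ℝ) * (h/((n*m : ℕ):ℝ))) := by
        rw [expand]
        push_cast
        ring
      rw [ediff, abs_neg, abs_of_nonneg (by positivity)]
      calc (j:ℝ) * (h/((n*m : ℕ):ℝ)) < m * (h/((n*m : ℕ):ℝ)) := by
            apply mul_lt_mul_of_pos_right _ (by positivity)
            exact_mod_cast hjm
        _ = h / n := by rw [hcast]; field_simp
        _ < δ := hlt'
    calc S.N a (Sm n - Sm (n*m))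
        = S.N a (∑ k ∈ Finset.range n, ∑ j ∈ Finset.range m,
            (h/((n*m : ℕ):ℝ)) • (g (s + k * (h/n))
              - g (s + ((k*m+j : ℕ):ℝ) * (h/((n*m : ℕ):ℝ))))) := by
          rw [e1, e2, ← Finset.sum_sub_distrib]
          congr 1
          apply Finset.sum_congr rfl
          intro k _
          rw [← Finset.sum_sub_distrib]
          apply Finset.sum_congr rfl
          intro j _
          rw [smul_sub]
      _ ≤ ∑ k ∈ Finset.range n, ∑ j ∈ Finset.range m,
            ENNReal.ofReal (h/((n*m : ℕ):ℝ)) * ENNReal.ofReal r := by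
          refine le_trans (S.N_sum_le ha ha' _ _) (Finset.sum_le_sum fun k hk => ?_)
          refine le_trans (S.N_sum_le ha ha' _ _) (Finset.sum_le_sum fun j hj => ?_)
          rw [S.hsmul a ha ha', ← enorm_eq_nnnorm, Real.enorm_eq_ofReal (by positivity)]
          exact mul_le_mul_right (key k hk j hj) _
      _ = ENNReal.ofReal (h * r) := by
          rw [Finset.sum_const, Finset.sum_const, Finset.card_range, Finset.card_range,
            ← ENNReal.ofReal_mul (by positivity), smul_smul, nsmul_eq_mul,
            ← ENNReal.ofReal_natCast (n*m), ← ENNReal.ofReal_mul (by positivity)]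
          congr 1
          rw [hcast]
          field_simp
  -- (iii) N-Cauchy
  have hCau : ∀ ε : ℝ≥0∞, 0 < ε → ∃ K : ℕ, ∀ m ≥ K, ∀ n ≥ K,
      S.N a (Sm m - Sm n) < ε := by
    have hCau' : ∀ r : ℝ, 0 < r → ∃ K : ℕ, 0 < K ∧ ∀ m n : ℕ, K ≤ m → K ≤ n →
        S.N a (Sm m - Sm n) ≤ ENNReal.ofReal (2*(h*r)) := by
      intro r hr
      obtain ⟨δ, hδ, Href⟩ := hRef r hr
      refine ⟨Nat.ceil (h/δ) + 1, Nat.succ_pos _, fun m n hm hn => ?_⟩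
      have hm0 : 0 < m := lt_of_lt_of_le (Nat.succ_pos _) hm
      have hn0 : 0 < n := lt_of_lt_of_le (Nat.succ_pos _) hn
      have hstep : ∀ j : ℕ, Nat.ceil (h/δ) + 1 ≤ j → h / j < δ := by
        intro j hj
        have hj' : (0:ℝ) < j := by
          have : 0 < j := lt_of_lt_of_le (Nat.succ_pos _) hj
          exact_mod_cast this
        rw [div_lt_iff₀ hj']
        have h1 : h/δ < j := by
          calc h/δ ≤ (Nat.ceil (h/δ) : ℝ) := Nat.le_ceil _
            _ < j := by exact_mod_cast Nat.lt_of_lt_of_le (Nat.lt_succ_self _) hj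
        calc h = (h/δ) * δ := by field_simp
          _ < j * δ := by apply mul_lt_mul_of_pos_right h1 hδ
          _ = δ * j := by ring
      calc S.N a (Sm m - Sm n)
          ≤ S.N a (Sm m - Sm (m*n)) + S.N a (Sm (m*n) - Sm n) :=
            S.N_tri ha ha' _ _ _
        _ ≤ ENNReal.ofReal (h*r) + ENNReal.ofReal (h*r) := by
            refine add_le_add (Href m n hm0 hn0 (hstep m hm)) ?_
            rw [S.N_sub_comm ha ha', show m*n = n*m from Nat.mul_comm m n]
            exact Href n m hn0 hm0 (hstep n hn)
        _ = ENNReal.ofReal (2*(h*r)) := by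
            rw [← ENNReal.ofReal_add (by positivity) (by positivity)]
            ring_nf
    intro ε hε
    rcases eq_or_ne ε ⊤ with rfl | hne
    · obtain ⟨K, _, HK⟩ := hCau' 1 one_pos
      exact ⟨K, fun m hm n hn =>
        lt_of_le_of_lt (HK m n hm hn) ENNReal.ofReal_lt_top⟩
    · have hpos : 0 < ε.toReal := ENNReal.toReal_pos hε.ne' hne
      obtain ⟨K, _, HK⟩ := hCau' (ε.toReal / (4*h)) (by positivity)
      refine ⟨K, fun m hm n hn => lt_of_le_of_lt (HK m n hm hn) ?_⟩
      have : 2*(h*(ε.toReal / (4*h))) = ε.toReal/2 := by field_simp; ring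
      rw [this]
      calc ENNReal.ofReal (ε.toReal/2) < ENNReal.ofReal ε.toReal := by
            rw [ENNReal.ofReal_lt_ofReal_iff hpos]; linarith
        _ = ε := ENNReal.ofReal_toReal hne
  obtain ⟨x, hxfin, hxconv⟩ := S.hcomplete a ha ha' Sm hSm_fin hCau
  -- (iv) E-convergence to x
  have hxE : Tendsto Sm atTop (nhds x) := by
    rw [Metric.tendsto_atTop]
    intro ε hε
    have := (ENNReal.tendsto_nhds_zero.mp hxconv) (ENNReal.ofReal (ε/2))
      (ENNReal.ofReal_pos.mpr (by positivity))
    obtain ⟨K, HK⟩ := eventually_atTop.mp this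
    refine ⟨K, fun n hn => ?_⟩
    have h1 : (‖Sm n - x‖₊ : ℝ≥0∞) ≤ ENNReal.ofReal (ε/2) :=
      le_trans (S.norm_le_N ha ha' _) (HK n hn)
    rw [← enorm_eq_nnnorm, ← ofReal_norm, ENNReal.ofReal_le_ofReal_iff (by positivity)] at h1
    rw [dist_eq_norm]
    linarith
  -- (v) E-convergence to the integral
  have hgc : ContinuousOn g (Icc s t) := (Good.contOn S ha ha' hg).mono hIccsub
  have hint : ∀ p q : ℝ, p ∈ Icc s t → q ∈ Icc s t → IntervalIntegrable g volume p q :=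
    fun p q hp hq => (hgc.mono (uIcc_subset_Icc hp hq)).intervalIntegrable
  have hIE : Tendsto Sm atTop (nhds (∫ u in s..t, g u)) := by
    rw [Metric.tendsto_atTop]
    intro ε hε
    set ε' : ℝ := ε / (2*(h+1)) with hε'def
    have hε'pos : 0 < ε' := by positivity
    obtain ⟨δ, hδ, H⟩ := hg.2 ε' hε'pos
    refine ⟨Nat.ceil (h/δ) + 1, fun n hn => ?_⟩
    have hn0 : 0 < n := lt_of_lt_of_le (Nat.succ_pos _) hn
    have hn' : (0:ℝ) < n := by exact_mod_cast hn0
    have hδn : h / n < δ := by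
      rw [div_lt_iff₀ hn']
      have h1 : h/δ < n := by
        calc h/δ ≤ (Nat.ceil (h/δ) : ℝ) := Nat.le_ceil _
          _ < n := by exact_mod_cast Nat.lt_of_lt_of_le (Nat.lt_succ_self _) hn
      calc h = (h/δ) * δ := by field_simp
        _ < n * δ := mul_lt_mul_of_pos_right h1 hδ
        _ = δ * n := by ring
    set p : ℕ → ℝ := fun k => s + k * (h/n) with hpdef
    have hp_mem : ∀ k : ℕ, k ≤ n → p k ∈ Icc s t := fun k hk => hpt_mem n hn0 k hk
    have hsplit : ∑ k ∈ Finset.range n, ∫ u in p k..p (k+1), g u = ∫ u in (p 0)..(p n), g u := by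
      apply intervalIntegral.sum_integral_adjacent_intervals
      intro k hk
      exact hint _ _ (hp_mem k (Nat.le_of_lt hk)) (hp_mem (k+1) hk)
    have hp0 : p 0 = s := by simp [hpdef]
    have hpn : p n = t := by
      simp only [hpdef]
      rw [hhdef]
      field_simp
      ring
    have hterm : ∀ k ∈ Finset.range n,
        ‖(h/(n:ℝ)) • g (p k) - ∫ u in p k..p (k+1), g u‖ ≤ ε' * (h/n) := by
      intro k hk
      have hkn := Finset.mem_range.mp hk
      have hpk : p (k+1) - p k = h/n := by simp only [hpdef]; push_cast; ring
      have e3 : (h/(n:ℝ)) • g (p k) = ∫ u in p k..p (k+1), g (p k) := by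
        rw [intervalIntegral.integral_const, hpk]
      rw [e3, ← intervalIntegral.integral_sub
        (intervalIntegrable_const) (hint _ _ (hp_mem k hkn.le) (hp_mem (k+1) hkn))]
      have hb : ∀ u ∈ Set.uIoc (p k) (p (k+1)), ‖g (p k) - g u‖ ≤ ε' := by
        intro u hu
        have hppk : p k ≤ p (k+1) := by
          rw [← sub_nonneg, hpk]; positivity
        rw [uIoc_of_le hppk] at hu
        have humem : u ∈ Icc s t := ⟨le_trans (hp_mem k hkn.le).1 hu.1.le,
          le_trans hu.2 (hp_mem (k+1) hkn).2⟩
        have hdist : |p k - u| < δ := by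
          rw [abs_sub_comm, abs_of_nonneg (by linarith [hu.1.le])]
          have h5 : u - p k ≤ h/(n:ℝ) := by
            have h6 := hu.2
            rw [← hpk]
            linarith
          exact lt_of_le_of_lt h5 hδn
        have h1 : (‖g (p k) - g u‖₊ : ℝ≥0∞) ≤ ENNReal.ofReal ε' :=
          le_trans (S.norm_le_N ha ha' _)
            (H _ (hIccsub (hp_mem k hkn.le)) _ (hIccsub humem) hdist)
        rwa [← enorm_eq_nnnorm, ← ofReal_norm,
          ENNReal.ofReal_le_ofReal_iff hε'pos.le] at h1
      calc ‖∫ u in p k..p (k+1), (g (p k) - g u)‖ ≤ ε' * |p (k+1) - p k| :=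
            intervalIntegral.norm_integral_le_of_norm_le_const hb
        _ = ε' * (h/n) := by rw [hpk, abs_of_nonneg (by positivity)]
    have hnorm : ‖Sm n - ∫ u in s..t, g u‖ ≤ ε' * h := by
      rw [← hp0, ← hpn, ← hsplit]
      have e4 : Sm n - ∑ k ∈ Finset.range n, ∫ u in p k..p (k+1), g u
          = ∑ k ∈ Finset.range n, ((h/(n:ℝ)) • g (p k) - ∫ u in p k..p (k+1), g u) := by
        rw [Finset.sum_sub_distrib]
      rw [e4]
      calc ‖∑ k ∈ Finset.range n, ((h/(n:ℝ)) • g (p k) - ∫ u in p k..p (k+1), g u)‖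
          ≤ ∑ k ∈ Finset.range n, ε' * (h/n) := norm_sum_le_of_le _ hterm
        _ = ε' * h := by
            rw [Finset.sum_const, Finset.card_range, nsmul_eq_mul]
            field_simp
    rw [dist_eq_norm]
    calc ‖Sm n - ∫ u in s..t, g u‖ ≤ ε' * h := hnorm
      _ < ε := by
          rw [hε'def]
          rw [div_mul_eq_mul_div, div_lt_iff₀ (by positivity)]
          nlinarith
  have hxI : x = ∫ u in s..t, g u := tendsto_nhds_unique hxE hIE
  -- conclusion
  rw [← hxI]
  have hev : ∀ᶠ n in atTop, S.N a x ≤ S.N a (x - Sm n) + ENNReal.ofReal J := by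
    filter_upwards [eventually_ge_atTop 1] with n hn
    calc S.N a x = S.N a (x - 0) := by rw [sub_zero]
      _ ≤ S.N a (x - Sm n) + S.N a (Sm n - 0) := S.N_tri ha ha' _ _ _
      _ ≤ S.N a (x - Sm n) + ENNReal.ofReal J := by
          rw [sub_zero]
          exact add_le_add_right (hSm_le n hn) _
  have htend : Tendsto (fun n => S.N a (x - Sm n) + ENNReal.ofReal J) atTop
      (nhds (ENNReal.ofReal J)) := by
    have h1 : Tendsto (fun n => S.N a (x - Sm n)) atTop (nhds 0) := by
      apply hxconv.congr
      intro n
      rw [S.N_sub_comm ha ha']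
    have := h1.add (tendsto_const_nhds (x := ENNReal.ofReal J) (f := atTop))
    simpa using this
  exact ge_of_tendsto htend hev

lemma integral_bound_const {a : ℝ} (ha : S.amin ≤ a) (ha' : a ≤ S.amax)
    {g : ℝ → E} (hg : S.Good a g) {s t : ℝ} (hs : 0 ≤ s) (hst : s ≤ t) (htT : t ≤ S.T)
    {M : ℝ} (hM0 : 0 ≤ M)
    (hM : ∀ u ∈ Icc s t, S.N a (g u) ≤ ENNReal.ofReal M) :
    S.N a (∫ u in s..t, g u) ≤ ENNReal.ofReal ((t - s) * M) := by
  apply S.integral_bound ha ha' hg hs hst htT (fun u _ => hM0) hM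
  intro n hn
  have hn' : (0:ℝ) < n := by exact_mod_cast hn
  rw [Finset.sum_const, Finset.card_range, nsmul_eq_mul]
  rw [← mul_assoc]
  have : (n:ℝ) * ((t-s)/n) = t - s := by field_simp
  rw [this]

private lemma nat_sum_pow_le (m : ℕ) : ∀ n : ℕ,
    (m+1) * ∑ k ∈ Finset.range n, k^m ≤ n^(m+1) := by
  intro n
  induction n with
  | zero => simp
  | succ n ih =>
      rw [Finset.sum_range_succ, Nat.mul_add]
      have hbin : n^(m+1) + (m+1) * n^m ≤ (n+1)^(m+1) := by
        have hsub : ({m, m+1} : Finset ℕ) ⊆ Finset.range (m+2) := by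
          intro i hi
          simp only [Finset.mem_insert, Finset.mem_singleton] at hi
          rcases hi with rfl | rfl <;> simp [Finset.mem_range] <;> omega
        have hpair : ∑ i ∈ ({m, m+1} : Finset ℕ), n^i * 1^(m+1-i) * (m+1).choose i
            ≤ ∑ i ∈ Finset.range (m+2), n^i * 1^(m+1-i) * (m+1).choose i :=
          Finset.sum_le_sum_of_subset hsub
        rw [Finset.sum_pair (by omega)] at hpair
        have hexp : (n+1)^(m+1) = ∑ i ∈ Finset.range (m+2), n^i * 1^(m+1-i) * (m+1).choose i := by
          rw [add_pow n 1 (m+1)]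
          norm_num
        rw [hexp]
        calc n^(m+1) + (m+1) * n^m
            = n^m * 1^(m+1-m) * (m+1).choose m + n^(m+1) * 1^(m+1-(m+1)) * (m+1).choose (m+1) := by
              rw [Nat.choose_succ_self_right, Nat.choose_self]
              simp [Nat.add_comm, Nat.mul_comm]
          _ ≤ _ := hpair
      calc (m+1) * ∑ k ∈ Finset.range n, k^m + (m+1) * n^m
          ≤ n^(m+1) + (m+1) * n^m := by omega
        _ ≤ (n+1)^(m+1) := hbin

private lemma real_sum_pow_le (m : ℕ) (n : ℕ) :
    (∑ k ∈ Finset.range n, ((k:ℝ))^m) ≤ (n:ℝ)^(m+1) / (m+1) := by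
  rw [le_div_iff₀ (by positivity)]
  have := nat_sum_pow_le m n
  have hcast : ((m+1) * ∑ k ∈ Finset.range n, k^m : ℕ) ≤ ((n^(m+1) : ℕ) : ℕ) := this
  calc (∑ k ∈ Finset.range n, ((k:ℝ))^m) * ((m:ℝ)+1)
      = (((m+1) * ∑ k ∈ Finset.range n, k^m : ℕ) : ℝ) := by
        push_cast
        ring
    _ ≤ ((n^(m+1) : ℕ) : ℝ) := by exact_mod_cast hcast
    _ = (n:ℝ)^(m+1) := by push_cast; ring

lemma integral_bound_pow {a : ℝ} (ha : S.amin ≤ a) (ha' : a ≤ S.amax)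
    {g : ℝ → E} (hg : S.Good a g) {t : ℝ} (ht : 0 ≤ t) (htT : t ≤ S.T)
    {m : ℕ} {c : ℝ} (hc : 0 ≤ c)
    (hb : ∀ u ∈ Icc (0:ℝ) t, S.N a (g u) ≤ ENNReal.ofReal (c * u^m)) :
    S.N a (∫ u in (0:ℝ)..t, g u) ≤ ENNReal.ofReal (c * t^(m+1) / (m+1)) := by
  apply S.integral_bound ha ha' hg le_rfl ht htT
    (fun u hu => by have := hu.1; positivity) hb
  intro n hn
  have hn' : (0:ℝ) < n := by exact_mod_cast hn
  have heq : ∀ k : ℕ, ((t - 0)/n) * (c * ((0:ℝ) + k * ((t-0)/n))^m)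
      = c * (t/n)^(m+1) * (k:ℝ)^m := by
    intro k
    rw [sub_zero, zero_add, mul_pow, pow_succ]
    ring
  calc ∑ k ∈ Finset.range n, ((t - 0)/n) * (c * ((0:ℝ) + k * ((t-0)/n))^m)
      = c * (t/n)^(m+1) * ∑ k ∈ Finset.range n, (k:ℝ)^m := by
        rw [Finset.mul_sum]
        exact Finset.sum_congr rfl fun k _ => heq k
    _ ≤ c * (t/n)^(m+1) * ((n:ℝ)^(m+1) / (m+1)) := by
        apply mul_le_mul_of_nonneg_left (real_sum_pow_le m n) (by positivity)
    _ = c * t^(m+1) / (m+1) := by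
        rw [div_pow]
        field_simp

lemma good_integral {a : ℝ} (ha : S.amin ≤ a) (ha' : a ≤ S.amax)
    {g : ℝ → E} (hg : S.Good a g) {y : E} (hy : S.N a y ≠ ⊤) :
    S.Good a (fun t => y + ∫ u in (0:ℝ)..t, g u) := by
  obtain ⟨M, hM0, hM⟩ := Good.bound S ha ha' hg
  have hgc : ContinuousOn g (Icc (0:ℝ) S.T) := Good.contOn S ha ha' hg
  have hIbnd : ∀ s' t' : ℝ, 0 ≤ s' → s' ≤ t' → t' ≤ S.T →
      S.N a (∫ u in s'..t', g u) ≤ ENNReal.ofReal ((t' - s') * M) := by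
    intro s' t' h1 h2 h3
    exact S.integral_bound_const ha ha' hg h1 h2 h3 hM0
      (fun u hu => hM u ⟨le_trans h1 hu.1, le_trans hu.2 h3⟩)
  have hint : ∀ p q : ℝ, p ∈ Icc (0:ℝ) S.T → q ∈ Icc (0:ℝ) S.T →
      IntervalIntegrable g volume p q :=
    fun p q hp hq => (hgc.mono (uIcc_subset_Icc hp hq)).intervalIntegrable
  have h0T : (0:ℝ) ∈ Icc (0:ℝ) S.T := ⟨le_rfl, S.hT.le⟩
  have hdiff : ∀ s' ∈ Icc (0:ℝ) S.T, ∀ t' ∈ Icc (0:ℝ) S.T,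
      (y + ∫ u in (0:ℝ)..t', g u) - (y + ∫ u in (0:ℝ)..s', g u) = ∫ u in s'..t', g u := by
    intro s' hs' t' ht'
    rw [add_sub_add_left_eq_sub]
    rw [intervalIntegral.integral_interval_sub_left (hint 0 t' h0T ht') (hint 0 s' h0T hs')]
  constructor
  · intro t ht
    have hb : S.N a (y + ∫ u in (0:ℝ)..t, g u) ≤ S.N a y + ENNReal.ofReal ((t-0)*M) :=
      le_trans (S.hadd a ha ha' _ _) (add_le_add_right (hIbnd 0 t le_rfl ht.1 ht.2) _)
    exact (lt_of_le_of_lt hb (ENNReal.add_lt_top.2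
      ⟨lt_top_iff_ne_top.mpr hy, ENNReal.ofReal_lt_top⟩)).ne
  · intro r hr
    refine ⟨r / (M+1), by positivity, fun u hu t ht hut => ?_⟩
    have hkey : ∀ s' ∈ Icc (0:ℝ) S.T, ∀ t' ∈ Icc (0:ℝ) S.T, s' ≤ t' → t' - s' < r/(M+1) →
        S.N a ((y + ∫ u in (0:ℝ)..t', g u) - (y + ∫ u in (0:ℝ)..s', g u))
          ≤ ENNReal.ofReal r := by
      intro s' hs' t' ht' hle hclose
      rw [hdiff s' hs' t' ht']
      refine le_trans (hIbnd s' t' hs'.1 hle ht'.2) (ENNReal.ofReal_le_ofReal ?_)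
      calc (t' - s') * M ≤ (r/(M+1)) * M := by
            apply mul_le_mul_of_nonneg_right hclose.le hM0
        _ ≤ r := by
            rw [div_mul_eq_mul_div, div_le_iff₀ (by positivity)]
            nlinarith
    rcases le_total u t with hle | hle
    · rw [S.N_sub_comm ha ha']
      apply hkey u hu t ht hle
      rw [abs_sub_comm, abs_of_nonneg (by linarith)] at hut
      linarith
    · apply hkey t ht u hu hle
      rw [abs_of_nonneg (by linarith)] at hut
      linarith

/-- Picard iterates. -/
def iter (S : Setup E) : ℕ → ℝ → E
  | 0 => fun _ => S.x₀
  | (n+1) => fun t => S.x₀ + ∫ u in (0:ℝ)..t, S.F (S.iter n u)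

@[simp] lemma iter_zero : S.iter 0 = fun _ => S.x₀ := rfl

lemma iter_succ (n : ℕ) (t : ℝ) :
    S.iter (n+1) t = S.x₀ + ∫ u in (0:ℝ)..t, S.F (S.iter n u) := rfl

lemma N_x₀_ne_top {a : ℝ} (ha : S.amin ≤ a) (ha' : a ≤ S.amax) : S.N a S.x₀ ≠ ⊤ :=
  fun htop => S.hx₀ (top_le_iff.mp (htop ▸ S.hmono S.amin a le_rfl ha ha' S.x₀))

lemma good_iter : ∀ n : ℕ, ∀ a : ℝ, S.amin < a → a ≤ S.amax → S.Good a (S.iter n) := by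
  intro n
  induction n with
  | zero =>
      intro a ha ha'
      exact S.good_const ha.le ha' (S.N_x₀_ne_top ha.le ha')
  | succ n ih =>
      intro a ha ha'
      set a' := (S.amin + a)/2 with ha'def
      have h1 : S.amin < a' := by rw [ha'def]; linarith
      have h2 : a' < a := by rw [ha'def]; linarith
      have hgF : S.Good a (fun t => S.F (S.iter n t)) :=
        Good.compF S h1.le h2 ha' (ih a' h1 (by linarith))
      have := S.good_integral ha.le ha' hgF (S.N_x₀_ne_top ha.le ha')
      exact this

/-- The chained difference estimates for the Picard iterates. -/
lemma diff_bound (a1 δ c0 : ℝ) (ha1 : S.amin < a1) (hδ : 0 < δ) (hle : a1 + δ ≤ S.amax)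
    (hc0 : S.N a1 (S.F S.x₀) ≤ ENNReal.ofReal c0) (hc0' : 0 ≤ c0)
    (n : ℕ) (hn : 1 ≤ n) :
    ∀ k : ℕ, k ≤ n → ∀ t ∈ Icc (0:ℝ) S.T,
      S.N (a1 + k * (δ / n)) (S.iter (k+1) t - S.iter k t)
        ≤ ENNReal.ofReal (c0 * (S.L * ((n:ℝ)/δ) ^ S.q)^k * t^(k+1) / Nat.factorial (k+1)) := by
  have hn' : (0:ℝ) < n := by exact_mod_cast hn
  have ha1' : a1 ≤ S.amax := by linarith
  have hδn : (0:ℝ) < δ/n := by positivity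
  have hX0 : 0 ≤ S.L * ((n:ℝ)/δ) ^ S.q := by
    have := Real.rpow_nonneg (by positivity : (0:ℝ) ≤ (n:ℝ)/δ) S.q
    nlinarith [S.hL]
  intro k
  induction k with
  | zero =>
      intro _ t ht
      have hfin : S.N a1 (S.F S.x₀) ≠ ⊤ := (lt_of_le_of_lt hc0 ENNReal.ofReal_lt_top).ne
      have hgc : S.Good a1 (fun _ => S.F S.x₀) := S.good_const ha1.le ha1' hfin
      have hi : S.iter 1 t - S.iter 0 t = ∫ u in (0:ℝ)..t, S.F S.x₀ := by
        rw [iter_succ]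
        simp [iter]
      have hb := S.integral_bound_const ha1.le ha1' hgc le_rfl ht.1 ht.2 hc0'
        (fun u _ => hc0)
      simp only [Nat.cast_zero, zero_mul, add_zero, pow_zero, mul_one, pow_one,
        Nat.factorial_one, Nat.cast_one, div_one]
      rw [hi]
      calc S.N a1 (∫ u in (0:ℝ)..t, S.F S.x₀) ≤ ENNReal.ofReal ((t - 0) * c0) := hb
        _ = ENNReal.ofReal (c0 * t) := by rw [sub_zero, mul_comm]
        _ = ENNReal.ofReal (c0 * t ^ (0+1) / ((Nat.factorial (0+1) : ℕ) : ℝ)) := by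
            norm_num
  | succ k ih =>
      intro hk1 t ht
      have hk : k ≤ n := le_trans (Nat.le_succ k) hk1
      set X : ℝ := S.L * ((n:ℝ)/δ) ^ S.q with hXdef
      set b : ℝ := a1 + k * (δ/n) with hbdef
      set b' : ℝ := a1 + (k+1 : ℕ) * (δ/n) with hb'def
      have hb_gt : S.amin < b := by
        rw [hbdef]
        have : (0:ℝ) ≤ k * (δ/n) := by positivity
        linarith
      have hbb' : b < b' := by
        rw [hbdef, hb'def]
        push_cast
        nlinarith
      have hb'b : b' - b = δ/n := by
        rw [hbdef, hb'def]
        push_cast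
        ring
      have hb'le : b' ≤ S.amax := by
        rw [hb'def]
        have h1 : ((k+1 : ℕ):ℝ) * (δ/n) ≤ n * (δ/n) := by
          apply mul_le_mul_of_nonneg_right _ hδn.le
          exact_mod_cast hk1
        have h2 : (n:ℝ) * (δ/n) = δ := by field_simp
        linarith
      have hble : b ≤ S.amax := by linarith
      have hgood_k : S.Good b (S.iter k) := S.good_iter k b hb_gt hble
      have hgood_k1 : S.Good b (S.iter (k+1)) := S.good_iter (k+1) b hb_gt hble
      set g : ℝ → E := fun u => S.F (S.iter (k+1) u) - S.F (S.iter k u) with hgdef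
      have hgood_g : S.Good b' g :=
        Good.sub S (Good.compF S hb_gt.le hbb' hb'le hgood_k1)
          (Good.compF S hb_gt.le hbb' hb'le hgood_k) (by linarith) hb'le
      have hdiffeq : S.iter (k+2) t - S.iter (k+1) t = ∫ u in (0:ℝ)..t, g u := by
        rw [iter_succ, iter_succ, add_sub_add_left_eq_sub]
        have hIcc : uIcc (0:ℝ) t ⊆ Icc (0:ℝ) S.T := by
          rw [uIcc_of_le ht.1]
          exact fun u hu => ⟨hu.1, le_trans hu.2 ht.2⟩
        rw [← intervalIntegral.integral_sub
          (((Good.contOn S (by linarith : S.amin ≤ b') hb'le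
            (Good.compF S hb_gt.le hbb' hb'le hgood_k1)).mono hIcc).intervalIntegrable)
          (((Good.contOn S (by linarith : S.amin ≤ b') hb'le
            (Good.compF S hb_gt.le hbb' hb'le hgood_k)).mono hIcc).intervalIntegrable)]
      have hLq : S.L / (b' - b) ^ S.q = X := by
        rw [hb'b, hXdef]
        rw [Real.div_rpow hδ.le hn'.le, Real.div_rpow hn'.le hδ.le,
          div_div_eq_mul_div, mul_div_assoc]
      set c' : ℝ := c0 * X^(k+1) / Nat.factorial (k+1) with hc'def
      have hc'0 : 0 ≤ c' := by positivity
      have hpoint : ∀ u ∈ Icc (0:ℝ) t, S.N b' (g u) ≤ ENNReal.ofReal (c' * u^(k+1)) := by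
        intro u hu
        have huT : u ∈ Icc (0:ℝ) S.T := ⟨hu.1, le_trans hu.2 ht.2⟩
        have hflip := S.hFlip b b' hb_gt.le hbb' hb'le (S.iter (k+1) u) (S.iter k u)
          (hgood_k1.1 u huT) (hgood_k.1 u huT)
        rw [hLq] at hflip
        calc S.N b' (g u) ≤ ENNReal.ofReal X * S.N b (S.iter (k+1) u - S.iter k u) := hflip
          _ ≤ ENNReal.ofReal X * ENNReal.ofReal (c0 * X^k * u^(k+1) / Nat.factorial (k+1)) :=
              mul_le_mul_right (ih hk u huT) _
          _ = ENNReal.ofReal (c' * u^(k+1)) := by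
              rw [← ENNReal.ofReal_mul hX0]
              congr 1
              rw [hc'def]
              field_simp
              ring
      have hintb := S.integral_bound_pow (a := b') (by linarith : S.amin ≤ b') hb'le
        hgood_g ht.1 ht.2 hc'0 hpoint
      push_cast at hintb
      rw [show (k+1+1) = k+2 from rfl] at *
      have hfact : ((Nat.factorial (k+2) : ℕ) : ℝ) = ((k:ℝ)+2) * ((Nat.factorial (k+1) : ℕ) : ℝ) := by
        rw [show (k+2) = (k+1)+1 from rfl, Nat.factorial_succ]
        push_cast
        ring
      calc S.N b' (S.iter (k+2) t - S.iter (k+1) t)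
          = S.N b' (∫ u in (0:ℝ)..t, g u) := by rw [hdiffeq]
        _ ≤ ENNReal.ofReal (c' * t^(k+2) / ((k:ℝ)+1+1)) := hintb
        _ = ENNReal.ofReal (c0 * X^(k+1) * t^(k+2) / Nat.factorial (k+2)) := by
            congr 1
            rw [hc'def, hfact]
            have hf1 : ((Nat.factorial (k+1) : ℕ) : ℝ) ≠ 0 := by positivity
            have hf2 : ((k:ℝ) + 1 + 1) ≠ 0 := by positivity
            rw [div_mul_eq_mul_div, div_div, div_eq_div_iff (by positivity) (by positivity)]
            ring

end Setup

/-- Key summability: for `0 ≤ q < 1`, `∑ A (B n^q)^n / n!` converges. -/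
private lemma aux_summable {q : ℝ} (hq : 0 ≤ q) (hq1 : q < 1) (A B : ℝ)
    (hA : 0 ≤ A) (hB : 0 ≤ B) :
    Summable (fun n : ℕ => A * (B * (n:ℝ) ^ q) ^ n / Nat.factorial n) := by
  set f : ℕ → ℝ := fun n => A * (B * (n:ℝ) ^ q) ^ n / Nat.factorial n with hfdef
  have hf0 : ∀ n, 0 ≤ f n := by
    intro n
    have h1 : (0:ℝ) ≤ (n:ℝ) ^ q := Real.rpow_nonneg (Nat.cast_nonneg n) q
    have h2 : (0:ℝ) ≤ B * (n:ℝ) ^ q := by positivity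
    have h3 : (0:ℝ) ≤ (B * (n:ℝ) ^ q) ^ n := pow_nonneg h2 n
    have h4 : (0:ℝ) < (Nat.factorial n : ℝ) := by positivity
    rw [hfdef]
    positivity
  apply summable_of_ratio_norm_eventually_le (r := 1/2) (by norm_num)
  have hv : Tendsto (fun n : ℕ => B * Real.exp q * ((n:ℝ)+1) ^ (q - 1)) atTop (nhds 0) := by
    have h1 : Tendsto (fun x : ℝ => x ^ (-(1-q))) atTop (nhds 0) :=
      tendsto_rpow_neg_atTop (by linarith)
    have h2 : Tendsto (fun n : ℕ => (n:ℝ)+1) atTop atTop :=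
      tendsto_atTop_add_const_right atTop 1 tendsto_natCast_atTop_atTop
    have h3 : Tendsto (fun n : ℕ => ((n:ℝ)+1) ^ (q-1)) atTop (nhds 0) := by
      have := h1.comp h2
      simpa [Function.comp_def, show -(1-q) = q-1 by ring] using this
    have h4 := h3.const_mul (B * Real.exp q)
    simpa using h4
  have hev : ∀ᶠ n : ℕ in atTop, B * Real.exp q * ((n:ℝ)+1) ^ (q - 1) < 1/2 :=
    hv.eventually_lt_const (by norm_num)
  have hkey : ∀ n : ℕ, 1 ≤ n →
      f (n+1) ≤ (B * Real.exp q * ((n:ℝ)+1) ^ (q - 1)) * f n := by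
    intro n hn
    have hn' : (0:ℝ) < n := by exact_mod_cast hn
    have hnp : (0:ℝ) < (n:ℝ)+1 := by linarith
    set Y : ℝ := ((n:ℝ)+1) ^ q with hYdef
    set Z : ℝ := (n:ℝ) ^ q with hZdef
    have hY0 : 0 ≤ Y := Real.rpow_nonneg hnp.le q
    have hZ0 : 0 ≤ Z := Real.rpow_nonneg hn'.le q
    -- Step A : (n+1)^n ≤ e * n^n
    have stepA : ((n:ℝ)+1) ^ (n:ℕ) ≤ Real.exp 1 * (n:ℝ) ^ (n:ℕ) := by
      have e : (n:ℝ)+1 = (n:ℝ) * (1 + 1/(n:ℝ)) := by field_simp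
      have hb1 : (1 + 1/(n:ℝ)) ≤ Real.exp (1/(n:ℝ)) := by
        have := Real.add_one_le_exp (1/(n:ℝ))
        linarith
      calc ((n:ℝ)+1) ^ (n:ℕ) = (n:ℝ) ^ (n:ℕ) * (1 + 1/(n:ℝ)) ^ (n:ℕ) := by
            rw [e, mul_pow]
        _ ≤ (n:ℝ) ^ (n:ℕ) * Real.exp (1/(n:ℝ)) ^ (n:ℕ) := by
            apply mul_le_mul_of_nonneg_left _ (by positivity)
            exact pow_le_pow_left₀ (by positivity) hb1 n
        _ = (n:ℝ) ^ (n:ℕ) * Real.exp 1 := by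
            rw [← Real.exp_nat_mul]
            congr 1
            field_simp
        _ = Real.exp 1 * (n:ℝ) ^ (n:ℕ) := mul_comm _ _
    -- Step B : Y^n ≤ e^q * Z^n
    have swap : ∀ x : ℝ, 0 ≤ x → ((x ^ (n:ℕ)) : ℝ) ^ q = (x ^ q) ^ (n:ℕ) := by
      intro x hx
      rw [← Real.rpow_natCast x n, ← Real.rpow_natCast (x ^ q) n,
        ← Real.rpow_mul hx, ← Real.rpow_mul hx, mul_comm]
    have stepB : Y ^ (n:ℕ) ≤ Real.exp q * Z ^ (n:ℕ) := by
      have h1 : (((n:ℝ)+1) ^ (n:ℕ)) ^ q ≤ (Real.exp 1 * (n:ℝ) ^ (n:ℕ)) ^ q :=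
        Real.rpow_le_rpow (by positivity) stepA hq
      rw [swap _ hnp.le, Real.mul_rpow (Real.exp_pos 1).le (by positivity),
        Real.exp_one_rpow, swap _ hn'.le] at h1
      exact h1
    -- assemble
    have hcast : ((n+1 : ℕ) : ℝ) = (n:ℝ) + 1 := by push_cast; ring
    have hfact1 : ((Nat.factorial (n+1) : ℕ) : ℝ) = ((n:ℝ)+1) * (Nat.factorial n : ℝ) := by
      rw [Nat.factorial_succ]
      push_cast
      ring
    have hYq : ((n:ℝ)+1) ^ (q-1) = Y / ((n:ℝ)+1) := by
      rw [hYdef, ← Real.rpow_sub_one hnp.ne' q]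
    have hf1 : f (n+1) = A * (B ^ (n+1) * (Y ^ (n:ℕ) * Y)) / (((n:ℝ)+1) * (Nat.factorial n : ℝ)) := by
      rw [hfdef]
      simp only [hcast, hfact1, mul_pow, pow_succ]
      ring
    have hf2 : (B * Real.exp q * ((n:ℝ)+1) ^ (q-1)) * f n
        = B * Real.exp q * (Y / ((n:ℝ)+1)) * (A * (B ^ n * Z ^ (n:ℕ)) / (Nat.factorial n : ℝ)) := by
      have hfn_eq : f n = A * (B ^ n * Z ^ (n:ℕ)) / (Nat.factorial n : ℝ) := by
        rw [hfdef]
        simp only [mul_pow]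
        rfl
      rw [hYq, hfn_eq]
    rw [hf1, hf2]
    have hF : (0:ℝ) < (Nat.factorial n : ℝ) := by positivity
    have hre : B * Real.exp q * (Y / ((n:ℝ)+1)) * (A * (B ^ n * Z ^ (n:ℕ)) / (Nat.factorial n : ℝ))
        = A * (B ^ (n+1) * ((Real.exp q * Z ^ (n:ℕ)) * Y)) / (((n:ℝ)+1) * (Nat.factorial n : ℝ)) := by
      field_simp
      ring
    rw [hre]
    have hnum : A * (B ^ (n+1) * (Y ^ (n:ℕ) * Y)) ≤
        A * (B ^ (n+1) * ((Real.exp q * Z ^ (n:ℕ)) * Y)) := by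
      apply mul_le_mul_of_nonneg_left _ hA
      apply mul_le_mul_of_nonneg_left _ (pow_nonneg hB (n+1))
      exact mul_le_mul_of_nonneg_right stepB hY0
    have hD : (0:ℝ) < ((n:ℝ)+1) * (Nat.factorial n : ℝ) := by positivity
    gcongr
  filter_upwards [hev, eventually_ge_atTop 1] with n hlt hn1
  rw [Real.norm_of_nonneg (hf0 (n+1)), Real.norm_of_nonneg (hf0 n)]
  calc f (n+1) ≤ (B * Real.exp q * ((n:ℝ)+1) ^ (q - 1)) * f n := hkey n hn1
    _ ≤ (1/2) * f n := mul_le_mul_of_nonneg_right hlt.le (hf0 n)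

namespace Setup

variable (S : Setup E)

lemma cauchy_unif {a : ℝ} (ha : S.amin < a) (ha' : a ≤ S.amax) :
    ∀ r : ℝ, 0 < r → ∃ K : ℕ, ∀ m n : ℕ, K ≤ m → K ≤ n → ∀ t ∈ Icc (0:ℝ) S.T,
      S.N a (S.iter m t - S.iter n t) ≤ ENNReal.ofReal r := by
  set δ : ℝ := (a - S.amin)/2 with hδdef
  have hδ : 0 < δ := by rw [hδdef]; linarith
  set a1 : ℝ := S.amin + δ with ha1def
  have ha1 : S.amin < a1 := by rw [ha1def]; linarith
  have ha1δ : a1 + δ = a := by rw [ha1def, hδdef]; ring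
  have hle : a1 + δ ≤ S.amax := by rw [ha1δ]; exact ha'
  have ha1max : a1 ≤ S.amax := by linarith
  have ha1a : a1 ≤ a := by rw [← ha1δ]; linarith
  have hfinF : S.N a1 (S.F S.x₀) ≠ ⊤ :=
    S.hFmap S.amin a1 le_rfl ha1 ha1max S.x₀ S.hx₀
  set c0 : ℝ := (S.N a1 (S.F S.x₀)).toReal with hc0def
  have hc0' : 0 ≤ c0 := ENNReal.toReal_nonneg
  have hc0 : S.N a1 (S.F S.x₀) ≤ ENNReal.ofReal c0 :=
    le_of_eq (ENNReal.ofReal_toReal hfinF).symm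
  set u : ℕ → ℝ := fun k =>
    c0 * (S.L * ((k:ℝ)/δ) ^ S.q)^k * S.T^(k+1) / Nat.factorial (k+1) with hudef
  have hu0 : ∀ k, 0 ≤ u k := by
    intro k
    have h1 : (0:ℝ) ≤ ((k:ℝ)/δ) ^ S.q := Real.rpow_nonneg (by positivity) _
    have h2 : (0:ℝ) ≤ S.L * ((k:ℝ)/δ) ^ S.q := by nlinarith [S.hL]
    have h3 : (0:ℝ) ≤ (S.L * ((k:ℝ)/δ) ^ S.q)^k := pow_nonneg h2 k
    have h4 : (0:ℝ) < (Nat.factorial (k+1) : ℝ) := by positivity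
    have h5 : (0:ℝ) ≤ S.T^(k+1) := pow_nonneg S.hT.le (k+1)
    rw [hudef]
    show (0:ℝ) ≤ c0 * (S.L * ((k:ℝ)/δ) ^ S.q)^k * S.T^(k+1) / Nat.factorial (k+1)
    exact div_nonneg (mul_nonneg (mul_nonneg hc0' h3) h5) h4.le
  -- difference bound
  have hdk : ∀ k : ℕ, ∀ t ∈ Icc (0:ℝ) S.T,
      S.N a (S.iter (k+1) t - S.iter k t) ≤ ENNReal.ofReal (u k) := by
    intro k t ht
    rcases Nat.eq_zero_or_pos k with rfl | hk
    · have h := S.diff_bound a1 δ c0 ha1 hδ hle hc0 hc0' 1 le_rfl 0 (Nat.zero_le 1) t ht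
      simp only [Nat.cast_zero, zero_mul, add_zero, pow_zero, mul_one, pow_one,
        Nat.zero_add, Nat.factorial_one, Nat.cast_one, div_one] at h
      have h2 : S.N a (S.iter 1 t - S.iter 0 t) ≤ S.N a1 (S.iter 1 t - S.iter 0 t) :=
        S.hmono a1 a ha1.le ha1a ha' _
      refine le_trans (le_trans h2 h) (ENNReal.ofReal_le_ofReal ?_)
      rw [hudef]
      simp only [Nat.cast_zero, pow_zero, mul_one, pow_one, Nat.zero_add,
        Nat.factorial_one, Nat.cast_one, div_one]
      nlinarith [ht.1, ht.2, hc0']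
    · have hk1 : 1 ≤ k := hk
      have h := S.diff_bound a1 δ c0 ha1 hδ hle hc0 hc0' k hk1 k le_rfl t ht
      have hkR : (0:ℝ) < (k:ℝ) := by exact_mod_cast hk
      have hidx : a1 + (k:ℝ) * (δ/(k:ℝ)) = a := by
        rw [← ha1δ]
        congr 1
        field_simp
      rw [hidx] at h
      refine le_trans h (ENNReal.ofReal_le_ofReal ?_)
      rw [hudef]
      have hX : (0:ℝ) ≤ (S.L * ((k:ℝ)/δ) ^ S.q)^k :=
        pow_nonneg (by nlinarith [S.hL, Real.rpow_nonneg (show (0:ℝ) ≤ (k:ℝ)/δ by positivity) S.q]) k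
      show c0 * (S.L * ((k:ℝ)/δ) ^ S.q)^k * t^(k+1) / Nat.factorial (k+1)
          ≤ c0 * (S.L * ((k:ℝ)/δ) ^ S.q)^k * S.T^(k+1) / Nat.factorial (k+1)
      rw [div_eq_mul_inv, div_eq_mul_inv]
      apply mul_le_mul_of_nonneg_right _ (by positivity : (0:ℝ) ≤ ((Nat.factorial (k+1):ℕ):ℝ)⁻¹)
      exact mul_le_mul_of_nonneg_left (pow_le_pow_left₀ ht.1 ht.2 (k+1)) (mul_nonneg hc0' hX)
  -- comparison with the summable majorant
  set A : ℝ := c0 * S.T with hAdef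
  set B : ℝ := S.L * S.T / δ ^ S.q with hBdef
  have hA : 0 ≤ A := by rw [hAdef]; exact mul_nonneg hc0' S.hT.le
  have hB : 0 ≤ B := by
    rw [hBdef]
    exact div_nonneg (mul_nonneg S.hL.le S.hT.le) (Real.rpow_pos_of_pos hδ _).le
  have hcomp : ∀ k : ℕ, u k ≤ A * (B * (k:ℝ) ^ S.q) ^ k / Nat.factorial k := by
    intro k
    have hsplitk : ((k:ℝ)/δ) ^ S.q = (k:ℝ) ^ S.q / δ ^ S.q :=
      Real.div_rpow (Nat.cast_nonneg k) hδ.le S.q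
    have he : u k = A * (B * (k:ℝ) ^ S.q) ^ k / Nat.factorial (k+1) := by
      rw [hudef, hAdef, hBdef]
      simp only [hsplitk]
      rw [pow_succ]
      show c0 * (S.L * ((k:ℝ) ^ S.q / δ ^ S.q))^k * (S.T^k * S.T) / ((Nat.factorial (k+1) : ℕ):ℝ)
          = c0 * S.T * (S.L * S.T / δ ^ S.q * (k:ℝ) ^ S.q) ^ k / ((Nat.factorial (k+1) : ℕ):ℝ)
      congr 1
      have hδq : δ ^ S.q ≠ 0 := (Real.rpow_pos_of_pos hδ _).ne'
      field_simp
      ring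
    rw [he]
    have hnum : (0:ℝ) ≤ A * (B * (k:ℝ) ^ S.q) ^ k := by
      have h1 : (0:ℝ) ≤ B * (k:ℝ) ^ S.q :=
        mul_nonneg hB (Real.rpow_nonneg (Nat.cast_nonneg k) _)
      exact mul_nonneg hA (pow_nonneg h1 k)
    apply div_le_div_of_nonneg_left hnum
    · positivity
    · exact_mod_cast Nat.factorial_le (Nat.le_succ k)
  have hsum : Summable u :=
    Summable.of_nonneg_of_le hu0 hcomp (aux_summable S.hq S.hq1 A B hA hB)
  -- Cauchy partial sums
  have hcs : CauchySeq (fun l => ∑ j ∈ Finset.range l, u j) :=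
    hsum.hasSum.tendsto_sum_nat.cauchySeq
  intro r hr
  obtain ⟨K, HK⟩ := Metric.cauchySeq_iff.mp hcs r hr
  refine ⟨K, fun m n hm hn t ht => ?_⟩
  -- reduce to the case n ≤ m
  have key : ∀ m' n' : ℕ, K ≤ m' → K ≤ n' → n' ≤ m' →
      S.N a (S.iter m' t - S.iter n' t) ≤ ENNReal.ofReal r := by
    intro m' n' hm' hn' hnm
    have htel : S.iter m' t - S.iter n' t
        = ∑ j ∈ Finset.Ico n' m', (S.iter (j+1) t - S.iter j t) := by
      rw [Finset.sum_Ico_eq_sub _ hnm,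
        Finset.sum_range_sub (fun j => S.iter j t),
        Finset.sum_range_sub (fun j => S.iter j t)]
      abel
    rw [htel]
    calc S.N a (∑ j ∈ Finset.Ico n' m', (S.iter (j+1) t - S.iter j t))
        ≤ ∑ j ∈ Finset.Ico n' m', S.N a (S.iter (j+1) t - S.iter j t) :=
          S.N_sum_le ha.le ha' _ _
      _ ≤ ∑ j ∈ Finset.Ico n' m', ENNReal.ofReal (u j) :=
          Finset.sum_le_sum fun j _ => hdk j t ht
      _ = ENNReal.ofReal (∑ j ∈ Finset.Ico n' m', u j) :=
          (ENNReal.ofReal_sum_of_nonneg fun j _ => hu0 j).symm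
      _ ≤ ENNReal.ofReal r := by
          apply ENNReal.ofReal_le_ofReal
          have hd := HK m' hm' n' hn'
          rw [Real.dist_eq] at hd
          have he : ∑ j ∈ Finset.Ico n' m', u j
              = ∑ j ∈ Finset.range m', u j - ∑ j ∈ Finset.range n', u j :=
            Finset.sum_Ico_eq_sub _ hnm
          rw [he]
          calc ∑ j ∈ Finset.range m', u j - ∑ j ∈ Finset.range n', u j
              ≤ |∑ j ∈ Finset.range m', u j - ∑ j ∈ Finset.range n', u j| := le_abs_self _
            _ ≤ r := hd.le
  rcases le_total n m with hnm | hmn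
  · exact key m n hm hn hnm
  · rw [S.N_sub_comm ha.le ha']
    exact key n m hn hm hmn

/-- Uniqueness: two solutions of the integral equation agree on `[0,T]`. -/
lemma uniq {f g : ℝ → E}
    (hGf : ∀ a : ℝ, S.amin < a → a ≤ S.amax → S.Good a f)
    (hGg : ∀ a : ℝ, S.amin < a → a ≤ S.amax → S.Good a g)
    (hfeq : ∀ t ∈ Icc (0:ℝ) S.T, f t = S.x₀ + ∫ u in (0:ℝ)..t, S.F (f u))
    (hgeq : ∀ t ∈ Icc (0:ℝ) S.T, g t = S.x₀ + ∫ u in (0:ℝ)..t, S.F (g u)) :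
    ∀ t ∈ Icc (0:ℝ) S.T, g t = f t := by
  set am : ℝ := (S.amin + S.amax)/2 with hamdef
  have ham1 : S.amin < am := by rw [hamdef]; linarith [S.hminmax]
  have ham2 : am ≤ S.amax := by rw [hamdef]; linarith [S.hminmax]
  set δu : ℝ := (am - S.amin)/2 with hδudef
  have hδu : 0 < δu := by rw [hδudef]; linarith
  set a1 : ℝ := S.amin + δu with ha1def
  have ha1 : S.amin < a1 := by rw [ha1def]; linarith
  have ha1δ : a1 + δu = am := by rw [ha1def, hδudef]; ring
  have ha1max : a1 ≤ S.amax := by linarith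
  set w : ℝ → E := fun t => g t - f t with hwdef
  have hGw : ∀ a : ℝ, S.amin < a → a ≤ S.amax → S.Good a w := fun a h1 h2 =>
    Good.sub S (hGg a h1 h2) (hGf a h1 h2) h1.le h2
  obtain ⟨M, hM0, hM⟩ := Good.bound S ha1.le ha1max (hGw a1 ha1 ha1max)
  -- the chained estimate
  have claim : ∀ n : ℕ, 1 ≤ n → ∀ k : ℕ, k ≤ n → ∀ t ∈ Icc (0:ℝ) S.T,
      S.N (a1 + k * (δu / n)) (w t)
        ≤ ENNReal.ofReal (M * (S.L * ((n:ℝ)/δu) ^ S.q)^k * t^k / Nat.factorial k) := by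
    intro n hn
    have hn' : (0:ℝ) < n := by exact_mod_cast hn
    have hδun : (0:ℝ) < δu/n := by positivity
    have hX0 : (0:ℝ) ≤ S.L * ((n:ℝ)/δu) ^ S.q :=
      mul_nonneg S.hL.le (Real.rpow_nonneg (by positivity) _)
    intro k
    induction k with
    | zero =>
        intro _ t ht
        simp only [Nat.cast_zero, zero_mul, add_zero, pow_zero, mul_one,
          Nat.factorial_zero, Nat.cast_one, div_one]
        exact hM t ht
    | succ k ih =>
        intro hk1 t ht
        have hk : k ≤ n := le_trans (Nat.le_succ k) hk1
        set X : ℝ := S.L * ((n:ℝ)/δu) ^ S.q with hXdef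
        set b : ℝ := a1 + k * (δu/n) with hbdef
        set b' : ℝ := a1 + (k+1 : ℕ) * (δu/n) with hb'def
        have hb_gt : S.amin < b := by
          rw [hbdef]
          have : (0:ℝ) ≤ k * (δu/n) := by positivity
          linarith
        have hbb' : b < b' := by
          rw [hbdef, hb'def]
          push_cast
          nlinarith
        have hb'b : b' - b = δu/n := by
          rw [hbdef, hb'def]
          push_cast
          ring
        have hb'le : b' ≤ S.amax := by
          rw [hb'def]
          have h1 : ((k+1 : ℕ):ℝ) * (δu/n) ≤ n * (δu/n) := by
            apply mul_le_mul_of_nonneg_right _ hδun.le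
            exact_mod_cast hk1
          have h2 : (n:ℝ) * (δu/n) = δu := by field_simp
          have h3 : a1 + δu ≤ S.amax := by rw [ha1δ]; exact ham2
          linarith
        have hble : b ≤ S.amax := by linarith
        have hgood_Fg : S.Good b' (fun u => S.F (g u)) :=
          Good.compF S hb_gt.le hbb' hb'le (hGg b hb_gt hble)
        have hgood_Ff : S.Good b' (fun u => S.F (f u)) :=
          Good.compF S hb_gt.le hbb' hb'le (hGf b hb_gt hble)
        set gg : ℝ → E := fun u => S.F (g u) - S.F (f u) with hggdef
        have hgood_gg : S.Good b' gg :=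
          Good.sub S hgood_Fg hgood_Ff (by linarith) hb'le
        have hIcc : uIcc (0:ℝ) t ⊆ Icc (0:ℝ) S.T := by
          rw [uIcc_of_le ht.1]
          exact fun u hu => ⟨hu.1, le_trans hu.2 ht.2⟩
        have hweq : w t = ∫ u in (0:ℝ)..t, gg u := by
          rw [hwdef]
          simp only
          rw [hgeq t ht, hfeq t ht, add_sub_add_left_eq_sub]
          rw [← intervalIntegral.integral_sub
            (((Good.contOn S (by linarith : S.amin ≤ b') hb'le hgood_Fg).mono
              hIcc).intervalIntegrable)
            (((Good.contOn S (by linarith : S.amin ≤ b') hb'le hgood_Ff).mono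
              hIcc).intervalIntegrable)]
        have hLq : S.L / (b' - b) ^ S.q = X := by
          rw [hb'b, hXdef]
          rw [Real.div_rpow hδu.le hn'.le, Real.div_rpow hn'.le hδu.le,
            div_div_eq_mul_div, mul_div_assoc]
        set c' : ℝ := M * X^(k+1) / Nat.factorial k with hc'def
        have hc'0 : 0 ≤ c' := by
          rw [hc'def]
          have := pow_nonneg hX0 (k+1)
          positivity
        have hpoint : ∀ u ∈ Icc (0:ℝ) t, S.N b' (gg u) ≤ ENNReal.ofReal (c' * u^k) := by
          intro u hu
          have huT : u ∈ Icc (0:ℝ) S.T := ⟨hu.1, le_trans hu.2 ht.2⟩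
          have hflip := S.hFlip b b' hb_gt.le hbb' hb'le (g u) (f u)
            ((hGg b hb_gt hble).1 u huT) ((hGf b hb_gt hble).1 u huT)
          rw [hLq] at hflip
          calc S.N b' (gg u) ≤ ENNReal.ofReal X * S.N b (w u) := hflip
            _ ≤ ENNReal.ofReal X * ENNReal.ofReal (M * X^k * u^k / Nat.factorial k) :=
                mul_le_mul_right (ih hk u huT) _
            _ = ENNReal.ofReal (c' * u^k) := by
                rw [← ENNReal.ofReal_mul (by rw [hXdef] at hX0 ⊢; exact hX0)]
                congr 1
                rw [hc'def]
                field_simp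
                ring
        have hintb := S.integral_bound_pow (a := b') (by linarith : S.amin ≤ b') hb'le
          hgood_gg ht.1 ht.2 hc'0 hpoint
        push_cast at hintb
        have hfact : ((Nat.factorial (k+1) : ℕ) : ℝ) = ((k:ℝ)+1) * ((Nat.factorial k : ℕ) : ℝ) := by
          rw [Nat.factorial_succ]
          push_cast
          ring
        calc S.N b' (w t) = S.N b' (∫ u in (0:ℝ)..t, gg u) := by rw [hweq]
          _ ≤ ENNReal.ofReal (c' * t^(k+1) / ((k:ℝ)+1)) := hintb
          _ = ENNReal.ofReal (M * X^(k+1) * t^(k+1) / Nat.factorial (k+1)) := by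
              congr 1
              rw [hc'def, hfact]
              have hf1 : ((Nat.factorial k : ℕ) : ℝ) ≠ 0 := by positivity
              have hf2 : ((k:ℝ) + 1) ≠ 0 := by positivity
              rw [div_mul_eq_mul_div, div_div, div_eq_div_iff (by positivity) (by positivity)]
              ring
  -- conclude
  intro t ht
  set B : ℝ := S.L * S.T / δu ^ S.q with hBdef
  have hB : 0 ≤ B := by
    rw [hBdef]
    exact div_nonneg (mul_nonneg S.hL.le S.hT.le) (Real.rpow_pos_of_pos hδu _).le
  set v : ℕ → ℝ := fun n => M * (B * (n:ℝ) ^ S.q) ^ n / Nat.factorial n with hvdef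
  have hNle : ∀ n : ℕ, 1 ≤ n → S.N am (w t) ≤ ENNReal.ofReal (v n) := by
    intro n hn
    have hn' : (0:ℝ) < n := by exact_mod_cast hn
    have h := claim n hn n le_rfl t ht
    have hidx : a1 + (n:ℝ) * (δu/(n:ℝ)) = am := by
      rw [← ha1δ]
      congr 1
      field_simp
    rw [hidx] at h
    refine le_trans h (ENNReal.ofReal_le_ofReal ?_)
    rw [hvdef]
    have hsplitn : ((n:ℝ)/δu) ^ S.q = (n:ℝ) ^ S.q / δu ^ S.q :=
      Real.div_rpow (Nat.cast_nonneg n) hδu.le S.q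
    have hXn : (0:ℝ) ≤ (S.L * ((n:ℝ)/δu) ^ S.q)^n :=
      pow_nonneg (mul_nonneg S.hL.le (Real.rpow_nonneg (by positivity) _)) n
    have hδq : δu ^ S.q ≠ 0 := (Real.rpow_pos_of_pos hδu _).ne'
    have he : M * (S.L * ((n:ℝ)/δu) ^ S.q)^n * S.T^n = M * (B * (n:ℝ) ^ S.q) ^ n := by
      rw [hBdef, hsplitn, mul_assoc, ← mul_pow]
      congr 2
      field_simp
    show M * (S.L * ((n:ℝ)/δu) ^ S.q)^n * t^n / Nat.factorial n
        ≤ M * (B * (n:ℝ) ^ S.q) ^ n / Nat.factorial n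
    rw [← he]
    rw [div_eq_mul_inv, div_eq_mul_inv]
    apply mul_le_mul_of_nonneg_right _ (by positivity : (0:ℝ) ≤ ((Nat.factorial n:ℕ):ℝ)⁻¹)
    exact mul_le_mul_of_nonneg_left (pow_le_pow_left₀ ht.1 ht.2 n) (mul_nonneg hM0 hXn)
  have hv0 : Tendsto (fun n => ENNReal.ofReal (v n)) atTop (nhds 0) := by
    have hsum : Summable v := aux_summable S.hq S.hq1 M B hM0 hB
    have h1 := ENNReal.tendsto_ofReal hsum.tendsto_atTop_zero
    simpa using h1
  have hN0 : S.N am (w t) = 0 := by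
    apply le_antisymm _ (zero_le)
    apply ge_of_tendsto hv0
    filter_upwards [eventually_ge_atTop 1] with n hn
    exact hNle n hn
  have hw0 : w t = 0 := by
    have h1 : (‖w t‖₊ : ℝ≥0∞) ≤ 0 := hN0 ▸ S.norm_le_N ham1.le ham2 (w t)
    have h2 : ‖w t‖₊ = 0 := by
      have := le_antisymm h1 (zero_le)
      exact_mod_cast this
    exact nnnorm_eq_zero.mp h2
  have h3 : g t - f t = 0 := by
    have := hw0
    rw [hwdef] at this
    simpa using this
  exact sub_eq_zero.mp h3

lemma norm_le_of_N {a r : ℝ} (ha : S.amin ≤ a) (ha' : a ≤ S.amax) {z : E} (hr : 0 ≤ r)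
    (h : S.N a z ≤ ENNReal.ofReal r) : ‖z‖ ≤ r := by
  have h1 : ENNReal.ofReal ‖z‖ ≤ ENNReal.ofReal r := by
    rw [ofReal_norm, enorm_eq_nnnorm]
    exact le_trans (S.norm_le_N ha ha' z) h
  rwa [ENNReal.ofReal_le_ofReal_iff hr] at h1

lemma tendsto_E_of_tendsto_N {a : ℝ} (ha : S.amin ≤ a) (ha' : a ≤ S.amax)
    {u : ℕ → E} {x : E} (h : Tendsto (fun n => S.N a (u n - x)) atTop (nhds 0)) :
    Tendsto u atTop (nhds x) := by
  rw [Metric.tendsto_atTop]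
  intro ε hε
  obtain ⟨K, HK⟩ := eventually_atTop.mp ((ENNReal.tendsto_nhds_zero.mp h)
    (ENNReal.ofReal (ε/2)) (ENNReal.ofReal_pos.mpr (by positivity)))
  refine ⟨K, fun n hn => ?_⟩
  have h1 : ‖u n - x‖ ≤ ε/2 := S.norm_le_of_N ha ha' (by positivity) (HK n hn)
  rw [dist_eq_norm]
  linarith

lemma exists_sol : ∃ f : ℝ → E,
    (∀ a : ℝ, S.amin < a → a ≤ S.amax → S.Good a f) ∧
    (∀ t ∈ Icc (0:ℝ) S.T, f t = S.x₀ + ∫ u in (0:ℝ)..t, S.F (f u)) := by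
  set amid : ℝ := (S.amin + S.amax)/2 with hamiddef
  have hmid1 : S.amin < amid := by rw [hamiddef]; linarith [S.hminmax]
  have hmid2 : amid ≤ S.amax := by rw [hamiddef]; linarith [S.hminmax]
  have hmid3 : amid < S.amax := by rw [hamiddef]; linarith [S.hminmax]
  -- ENNReal-valued Cauchy property
  have hCauE : ∀ a : ℝ, S.amin < a → a ≤ S.amax → ∀ t ∈ Icc (0:ℝ) S.T,
      ∀ ε : ℝ≥0∞, 0 < ε → ∃ K : ℕ, ∀ m ≥ K, ∀ n ≥ K,
        S.N a (S.iter m t - S.iter n t) < ε := by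
    intro a h1 h2 t ht ε hε
    rcases eq_or_ne ε ⊤ with rfl | hne
    · obtain ⟨K, HK⟩ := S.cauchy_unif h1 h2 1 one_pos
      exact ⟨K, fun m hm n hn =>
        lt_of_le_of_lt (HK m n hm hn t ht) ENNReal.ofReal_lt_top⟩
    · have hpos : 0 < ε.toReal := ENNReal.toReal_pos hε.ne' hne
      obtain ⟨K, HK⟩ := S.cauchy_unif h1 h2 (ε.toReal/2) (by positivity)
      refine ⟨K, fun m hm n hn => lt_of_le_of_lt (HK m n hm hn t ht) ?_⟩
      calc ENNReal.ofReal (ε.toReal/2) < ENNReal.ofReal ε.toReal := by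
            rw [ENNReal.ofReal_lt_ofReal_iff hpos]; linarith
        _ = ε := ENNReal.ofReal_toReal hne
  -- the limit function
  have hex : ∀ t : ℝ, ∃ x : E, t ∈ Icc (0:ℝ) S.T →
      Tendsto (fun n => S.N amid (S.iter n t - x)) atTop (nhds 0) := by
    intro t
    by_cases ht : t ∈ Icc (0:ℝ) S.T
    · obtain ⟨x, _, hconv⟩ := S.hcomplete amid hmid1.le hmid2 (fun n => S.iter n t)
        (fun n => (S.good_iter n amid hmid1 hmid2).1 t ht)
        (hCauE amid hmid1 hmid2 t ht)
      exact ⟨x, fun _ => hconv⟩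
    · exact ⟨0, fun h => absurd h ht⟩
  choose f hf using hex
  -- convergence in every norm of the scale
  have hconvA : ∀ a : ℝ, S.amin < a → a ≤ S.amax → ∀ t ∈ Icc (0:ℝ) S.T,
      Tendsto (fun n => S.N a (S.iter n t - f t)) atTop (nhds 0) := by
    intro a h1 h2 t ht
    obtain ⟨y, _, hyconv⟩ := S.hcomplete a h1.le h2 (fun n => S.iter n t)
      (fun n => (S.good_iter n a h1 h2).1 t ht) (hCauE a h1 h2 t ht)
    have hyE : Tendsto (fun n => S.iter n t) atTop (nhds y) :=
      S.tendsto_E_of_tendsto_N h1.le h2 hyconv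
    have hfE : Tendsto (fun n => S.iter n t) atTop (nhds (f t)) :=
      S.tendsto_E_of_tendsto_N hmid1.le hmid2 (hf t ht)
    rw [tendsto_nhds_unique hfE hyE]
    exact hyconv
  -- uniform approximation
  have happrox : ∀ a : ℝ, S.amin < a → a ≤ S.amax → ∀ r : ℝ, 0 < r →
      ∃ K : ℕ, ∀ n ≥ K, ∀ t ∈ Icc (0:ℝ) S.T,
        S.N a (f t - S.iter n t) ≤ ENNReal.ofReal r := by
    intro a h1 h2 r hr
    obtain ⟨K, HK⟩ := S.cauchy_unif h1 h2 (r/2) (by positivity)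
    refine ⟨K, fun n hn t ht => ?_⟩
    have hev : ∀ᶠ m in atTop,
        S.N a (f t - S.iter n t) ≤ S.N a (f t - S.iter m t) + ENNReal.ofReal (r/2) := by
      filter_upwards [eventually_ge_atTop K] with m hm
      exact le_trans (S.N_tri h1.le h2 _ (S.iter m t) _)
        (add_le_add_right (HK m n hm hn t ht) _)
    have hlim : Tendsto (fun m => S.N a (f t - S.iter m t) + ENNReal.ofReal (r/2)) atTop
        (nhds (ENNReal.ofReal (r/2))) := by
      have h3 : Tendsto (fun m => S.N a (f t - S.iter m t)) atTop (nhds 0) := by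
        apply (hconvA a h1 h2 t ht).congr
        intro m
        rw [S.N_sub_comm h1.le h2]
      have h4 := h3.add (tendsto_const_nhds (x := ENNReal.ofReal (r/2)) (f := atTop))
      simpa using h4
    refine le_trans (ge_of_tendsto hlim hev) (ENNReal.ofReal_le_ofReal (by linarith))
  -- the limit is Good for every a
  have hGoodf : ∀ a : ℝ, S.amin < a → a ≤ S.amax → S.Good a f := by
    intro a h1 h2
    constructor
    · intro t ht
      obtain ⟨K, HK⟩ := happrox a h1 h2 1 one_pos
      have h4 : S.N a (f t) ≤ S.N a (f t - S.iter K t) + S.N a (S.iter K t) := by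
        have := S.N_tri h1.le h2 (f t) (S.iter K t) 0
        simpa using this
      have h5 : S.N a (f t - S.iter K t) + S.N a (S.iter K t) < ⊤ :=
        ENNReal.add_lt_top.2 ⟨lt_of_le_of_lt (HK K le_rfl t ht) ENNReal.ofReal_lt_top,
          lt_top_iff_ne_top.2 ((S.good_iter K a h1 h2).1 t ht)⟩
      exact (lt_of_le_of_lt h4 h5).ne
    · intro r hr
      obtain ⟨K, HK⟩ := happrox a h1 h2 (r/3) (by positivity)
      obtain ⟨δ, hδ, H⟩ := (S.good_iter K a h1 h2).2 (r/3) (by positivity)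
      refine ⟨δ, hδ, fun u hu t ht hut => ?_⟩
      calc S.N a (f u - f t)
          ≤ S.N a (f u - S.iter K u) + S.N a (S.iter K u - f t) :=
            S.N_tri h1.le h2 _ _ _
        _ ≤ S.N a (f u - S.iter K u) +
              (S.N a (S.iter K u - S.iter K t) + S.N a (S.iter K t - f t)) :=
            add_le_add_right (S.N_tri h1.le h2 _ _ _) _
        _ ≤ ENNReal.ofReal (r/3) + (ENNReal.ofReal (r/3) + ENNReal.ofReal (r/3)) := by
            refine add_le_add (HK K le_rfl u hu) (add_le_add (H u hu t ht hut) ?_)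
            rw [S.N_sub_comm h1.le h2]
            exact HK K le_rfl t ht
        _ = ENNReal.ofReal r := by
            rw [← ENNReal.ofReal_add (by positivity) (by positivity),
              ← ENNReal.ofReal_add (by positivity) (by positivity)]
            congr 1
            ring
  refine ⟨f, hGoodf, fun t ht => ?_⟩
  -- the fixed point property
  set a3 : ℝ := (amid + S.amax)/2 with ha3def
  have ha31 : amid < a3 := by rw [ha3def]; linarith
  have ha32 : a3 ≤ S.amax := by rw [ha3def]; linarith
  have hc : 0 < S.L / (a3 - amid) ^ S.q :=
    div_pos S.hL (Real.rpow_pos_of_pos (by linarith) _)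
  set c : ℝ := S.L / (a3 - amid) ^ S.q with hcdef
  have hGFf : S.Good a3 (fun u => S.F (f u)) :=
    Good.compF S hmid1.le ha31 ha32 (hGoodf amid hmid1 hmid2)
  have hIcc : uIcc (0:ℝ) t ⊆ Icc (0:ℝ) S.T := by
    rw [uIcc_of_le ht.1]
    exact fun u hu => ⟨hu.1, le_trans hu.2 ht.2⟩
  have hintf : IntervalIntegrable (fun u => S.F (f u)) volume 0 t :=
    ((Good.contOn S (by linarith : S.amin ≤ a3) ha32 hGFf).mono hIcc).intervalIntegrable
  have h5 : Tendsto (fun n => S.iter (n+1) t) atTop (nhds (f t)) :=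
    (S.tendsto_E_of_tendsto_N hmid1.le hmid2 (hf t ht)).comp (tendsto_add_atTop_nat 1)
  have h6 : Tendsto (fun n => S.iter (n+1) t) atTop
      (nhds (S.x₀ + ∫ u in (0:ℝ)..t, S.F (f u))) := by
    rw [Metric.tendsto_atTop]
    intro ε hε
    set r : ℝ := ε / ((c+1) * (S.T+1) * 2) with hrdef
    have hrpos : 0 < r := by
      rw [hrdef]
      have : (0:ℝ) < (c+1) * (S.T+1) * 2 := by nlinarith [S.hT]
      positivity
    obtain ⟨K, HK⟩ := happrox amid hmid1 hmid2 r hrpos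
    refine ⟨K, fun n hn => ?_⟩
    have hGFi : S.Good a3 (fun u => S.F (S.iter n u)) :=
      Good.compF S hmid1.le ha31 ha32 (S.good_iter n amid hmid1 hmid2)
    have hinti : IntervalIntegrable (fun u => S.F (S.iter n u)) volume 0 t :=
      ((Good.contOn S (by linarith : S.amin ≤ a3) ha32 hGFi).mono hIcc).intervalIntegrable
    have hpt : ∀ u ∈ Set.uIoc (0:ℝ) t, ‖S.F (S.iter n u) - S.F (f u)‖ ≤ c * r := by
      intro u hu
      rw [uIoc_of_le ht.1] at hu
      have huT : u ∈ Icc (0:ℝ) S.T := ⟨hu.1.le, le_trans hu.2 ht.2⟩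
      have hflip := S.hFlip amid a3 hmid1.le ha31 ha32 (S.iter n u) (f u)
        ((S.good_iter n amid hmid1 hmid2).1 u huT) ((hGoodf amid hmid1 hmid2).1 u huT)
      have h7 : S.N amid (S.iter n u - f u) ≤ ENNReal.ofReal r := by
        rw [S.N_sub_comm hmid1.le hmid2]
        exact HK n hn u huT
      have h8 : S.N a3 (S.F (S.iter n u) - S.F (f u)) ≤ ENNReal.ofReal (c * r) := by
        rw [ENNReal.ofReal_mul hc.le]
        exact le_trans hflip (mul_le_mul_right h7 _)
      exact S.norm_le_of_N (by linarith : S.amin ≤ a3) ha32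
        (mul_nonneg hc.le hrpos.le) h8
    have hdiffI : S.iter (n+1) t - (S.x₀ + ∫ u in (0:ℝ)..t, S.F (f u))
        = ∫ u in (0:ℝ)..t, (S.F (S.iter n u) - S.F (f u)) := by
      rw [iter_succ, add_sub_add_left_eq_sub, ← intervalIntegral.integral_sub hinti hintf]
    rw [dist_eq_norm, hdiffI]
    calc ‖∫ u in (0:ℝ)..t, (S.F (S.iter n u) - S.F (f u))‖ ≤ (c*r) * |t - 0| :=
          intervalIntegral.norm_integral_le_of_norm_le_const hpt
      _ ≤ (c*r) * S.T := by
          rw [sub_zero, abs_of_nonneg ht.1]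
          exact mul_le_mul_of_nonneg_left ht.2 (mul_nonneg hc.le hrpos.le)
      _ < ε := by
          rw [hrdef]
          have h9 : c * (ε / ((c+1)*(S.T+1)*2)) * S.T
              = ε * ((c*S.T) / ((c+1)*(S.T+1)*2)) := by ring
          rw [h9]
          have hden : (0:ℝ) < (c+1)*(S.T+1)*2 := by nlinarith [S.hT]
          have h10 : (c*S.T)/((c+1)*(S.T+1)*2) < 1 := by
            rw [div_lt_one hden]
            nlinarith [S.hT]
          exact mul_lt_of_lt_one_right hε h10
  exact tendsto_nhds_unique h5 h6

/-- From the `ofReal`-uniform continuity to the `ScaleContOn`-style continuity. -/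
lemma tendsto_of_UC {a : ℝ} {g : ℝ → E} (h : S.UC a g) :
    ∀ t₀ ∈ Icc (0:ℝ) S.T, Tendsto (fun t => S.N a (g t - g t₀))
      (nhdsWithin t₀ (Icc (0:ℝ) S.T)) (nhds 0) := by
  intro t₀ ht₀
  rw [ENNReal.tendsto_nhds_zero]
  intro ε hε
  rcases eq_or_ne ε ⊤ with rfl | hne
  · filter_upwards with t
    exact le_top
  · have hpos : 0 < ε.toReal := ENNReal.toReal_pos hε.ne' hne
    obtain ⟨δ, hδ, H⟩ := h ε.toReal hpos
    have h1 : ∀ᶠ t in nhdsWithin t₀ (Icc (0:ℝ) S.T), t ∈ Metric.ball t₀ δ :=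
      mem_nhdsWithin_of_mem_nhds (Metric.ball_mem_nhds t₀ hδ)
    filter_upwards [h1, eventually_mem_nhdsWithin] with t htb htI
    have h2 : |t - t₀| < δ := by rwa [Metric.mem_ball, Real.dist_eq] at htb
    exact le_trans (H t htI t₀ ht₀ h2) (le_of_eq (ENNReal.ofReal_toReal hne))

end Setup
end Statement14Aux

theorem statement14
    -- the scale of Banach spaces, realised inside the ambient space `E = X_{amax}`
    (E : Type*) [NormedAddCommGroup E] [NormedSpace ℝ E] [CompleteSpace E]
    (amin amax : ℝ) (hamin : 0 < amin) (hminmax : amin < amax)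
    (N : ℝ → E → ℝ≥0∞)
    (htop : ∀ x : E, N amax x = (‖x‖₊ : ℝ≥0∞))
    (hmono : ∀ a b : ℝ, amin ≤ a → a ≤ b → b ≤ amax → ∀ x : E, N b x ≤ N a x)
    (hzero : ∀ a : ℝ, amin ≤ a → a ≤ amax → N a 0 = 0)
    (hadd : ∀ a : ℝ, amin ≤ a → a ≤ amax → ∀ x y : E, N a (x + y) ≤ N a x + N a y)
    (hsmul : ∀ a : ℝ, amin ≤ a → a ≤ amax → ∀ (c : ℝ) (x : E),
      N a (c • x) = (‖c‖₊ : ℝ≥0∞) * N a x)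
    (hcomplete : ∀ a : ℝ, amin ≤ a → a ≤ amax → ∀ u : ℕ → E,
      (∀ n, N a (u n) ≠ ⊤) →
      (∀ ε : ℝ≥0∞, 0 < ε → ∃ K : ℕ, ∀ m ≥ K, ∀ n ≥ K, N a (u m - u n) < ε) →
      ∃ x : E, N a x ≠ ⊤ ∧ Tendsto (fun n => N a (u n - x)) atTop (nhds 0))
    -- the Ovsjannikov map `F` of order `q` and constant `L`
    (q L : ℝ) (hq : 0 ≤ q) (hL : 0 < L) (F : E → E)
    (hFmap : ∀ a b : ℝ, amin ≤ a → a < b → b ≤ amax → ∀ x : E,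
      N a x ≠ ⊤ → N b (F x) ≠ ⊤)
    (hFlip : ∀ a b : ℝ, amin ≤ a → a < b → b ≤ amax → ∀ x y : E,
      N a x ≠ ⊤ → N a y ≠ ⊤ →
      N b (F x - F y) ≤ ENNReal.ofReal (L / (b - a) ^ q) * N a (x - y))
    (T : ℝ) (hT : 0 < T) (x₀ : E) (hx₀ : N amin x₀ ≠ ⊤)
    (hq1 : q < 1) :
    ∃ f : ℝ → E,
      (∀ a : ℝ, amin < a → a < amax → ScaleContOn N a T f) ∧
      (∀ t ∈ Icc (0 : ℝ) T, f t = x₀ + ∫ s in (0 : ℝ)..t, F (f s)) ∧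
      (∀ g : ℝ → E, (∀ a : ℝ, amin < a → a < amax → ScaleContOn N a T g) →
        (∀ t ∈ Icc (0 : ℝ) T, g t = x₀ + ∫ s in (0 : ℝ)..t, F (g s)) →
        ∀ t ∈ Icc (0 : ℝ) T, g t = f t) := by
  let S : Statement14Aux.Setup E := ⟨amin, amax, hamin, hminmax, N, htop, hmono, hzero, hadd, hsmul,
    hcomplete, q, L, hq, hq1, hL, F, hFmap, hFlip, T, hT, x₀, hx₀⟩
  obtain ⟨f, hGood, hfeq⟩ := S.exists_sol
  have hGoodOf : ∀ g : ℝ → E, (∀ a : ℝ, amin < a → a < amax → ScaleContOn N a T g) →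
      ∀ a : ℝ, amin < a → a ≤ amax → S.Good a g := by
    intro g hgs a h1 h2
    set a' : ℝ := (amin + a)/2 with ha'def
    have h1' : amin < a' := by rw [ha'def]; linarith
    have h2' : a' < a := by rw [ha'def]; linarith
    have h3' : a' < amax := by linarith
    have hsc := hgs a' h1' h3'
    have hGa' : S.Good a' g :=
      ⟨hsc.1, S.uc_of_cont h1'.le (le_of_lt h3') hsc.2⟩
    exact Statement14Aux.Setup.Good.mono S hGa' h1'.le h2'.le h2
  refine ⟨f, ?_, hfeq, ?_⟩
  · intro a h1 h2
    have hg := hGood a h1 h2.le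
    exact ⟨hg.1, S.tendsto_of_UC hg.2⟩
  · intro g hgs hgeq t ht
    exact S.uniq hGood (hGoodOf g hgs) hfeq hgeq t ht

end
end
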